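/- arXiv:2307.13420 — 12 statements merged into one kernel-verified Lean document; each statement's English description precedes it below -/
import Mathlib

section
/- Let A = (a_1, …, a_k) and B = (b_1, …, b_l) be finite nondecreasing tuples of positive integers (equivalently, finite multisets of positive integers). If ∑_{i=1}^{k} gcd(a_i, n) = ∑_{j=1}^{l} gcd(b_j, n) for every positive integer n, then k = l and A = B as multisets. -/
private lemma gcdsum_swap (A : Multiset ℕ) (s : Finset ℕ) (g : ℕ → ℕ → ℕ) :
    (A.map fun a => ∑ d ∈ s, g d a).sum = ∑ d ∈ s, (A.map (g d)).sum := by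
  induction A using Multiset.induction with
  | empty => simp
  | cons a A ih => simp [ih, Finset.sum_add_distrib]

private lemma gcdsum_ite (A : Multiset ℕ) (d k : ℕ) :
    (A.map fun a => if d ∣ a then k else 0).sum
      = k * Multiset.card (A.filter (d ∣ ·)) := by
  induction A using Multiset.induction with
  | empty => simp
  | cons a A ih =>
    by_cases hd : d ∣ a <;>
      simp [hd, ih, Multiset.filter_cons, Nat.mul_add, Nat.mul_one] <;> ring

private lemma gcd_eq_sum (a n : ℕ) (ha : 0 < a) (hn : 0 < n) :
    Nat.gcd a n = ∑ d ∈ n.divisors, if d ∣ a then d.totient else 0 := by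
  rw [Finset.sum_ite, Finset.sum_const_zero, add_zero]
  have hset : n.divisors.filter (fun d => d ∣ a) = (Nat.gcd a n).divisors := by
    ext d
    simp only [Finset.mem_filter, Nat.mem_divisors, Nat.dvd_gcd_iff]
    constructor
    · rintro ⟨⟨hdn, hn0⟩, hda⟩
      exact ⟨⟨hda, hdn⟩, Nat.gcd_ne_zero_right hn0⟩
    · rintro ⟨⟨hda, hdn⟩, _⟩
      exact ⟨⟨hdn, hn.ne'⟩, hda⟩
  rw [hset, Nat.sum_totient]

private lemma gcdsum_key (A : Multiset ℕ) (hA : ∀ a ∈ A, 0 < a) (n : ℕ) (hn : 0 < n) :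
    (A.map fun a => Nat.gcd a n).sum
      = ∑ d ∈ n.divisors, d.totient * Multiset.card (A.filter (d ∣ ·)) := by
  rw [Multiset.map_congr rfl (fun a ha => gcd_eq_sum a n (hA a ha) hn),
    gcdsum_swap]
  exact Finset.sum_congr rfl fun d _ => gcdsum_ite A d d.totient

private lemma counts_eq (A B : Multiset ℕ)
    (hA : ∀ a ∈ A, 0 < a) (hB : ∀ b ∈ B, 0 < b)
    (h : ∀ n : ℕ, 0 < n →
      (A.map fun a => Nat.gcd a n).sum = (B.map fun b => Nat.gcd b n).sum) :
    ∀ d, 0 < d → Multiset.card (A.filter (d ∣ ·)) = Multiset.card (B.filter (d ∣ ·)) := by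
  intro d
  induction d using Nat.strong_induction_on with
  | _ d ih =>
    intro hd
    have hkey := h d hd
    rw [gcdsum_key A hA d hd, gcdsum_key B hB d hd] at hkey
    have hmem : d ∈ d.divisors := Nat.mem_divisors_self d hd.ne'
    rw [← Finset.add_sum_erase _ _ hmem, ← Finset.add_sum_erase _ _ hmem] at hkey
    have heq : ∑ e ∈ d.divisors.erase d,
        e.totient * Multiset.card (A.filter (e ∣ ·))
        = ∑ e ∈ d.divisors.erase d, e.totient * Multiset.card (B.filter (e ∣ ·)) := by
      refine Finset.sum_congr rfl fun e he => ?_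
      have he' := Finset.mem_erase.mp he
      have hed : e ∣ d := (Nat.mem_divisors.mp he'.2).1
      have hpos : 0 < e := Nat.pos_of_mem_divisors he'.2
      have hlt : e < d := lt_of_le_of_ne (Nat.le_of_dvd hd hed) he'.1
      rw [ih e hlt hpos]
    rw [heq] at hkey
    have := Nat.add_right_cancel hkey
    exact Nat.eq_of_mul_eq_mul_left (Nat.totient_pos.mpr hd) this

private lemma multiset_eq_of_counts : ∀ (k : ℕ) (A B : Multiset ℕ),
    Multiset.card A = k → (∀ a ∈ A, 0 < a) → (∀ b ∈ B, 0 < b) →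
    (∀ d, 0 < d →
      Multiset.card (A.filter (d ∣ ·)) = Multiset.card (B.filter (d ∣ ·))) →
    A = B := by
  intro k
  induction k using Nat.strong_induction_on with
  | _ k ih =>
    intro A B hcard hA hB hc
    rcases Multiset.empty_or_exists_mem A with hAe | ⟨a0, ha0⟩
    · subst hAe
      have h1 := hc 1 one_pos
      simp only [Multiset.filter_eq_self.mpr (fun x _ => one_dvd x)] at h1
      simp at h1
      exact (Multiset.card_eq_zero.mp h1.symm).symm
    · -- A nonempty
      set s : Finset ℕ := A.toFinset ∪ B.toFinset with hs
      have hsne : s.Nonempty := ⟨a0, by simp [hs, Multiset.mem_toFinset.mpr ha0]⟩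
      set M : ℕ := s.max' hsne with hM
      have hMmem : M ∈ s := s.max'_mem hsne
      have hMpos : 0 < M := by
        rcases Finset.mem_union.mp hMmem with hm | hm
        · exact hA M (Multiset.mem_toFinset.mp hm)
        · exact hB M (Multiset.mem_toFinset.mp hm)
      have hmaxA : ∀ x ∈ A, x ≤ M := fun x hx =>
        s.le_max' x (Finset.mem_union_left _ (Multiset.mem_toFinset.mpr hx))
      have hmaxB : ∀ x ∈ B, x ≤ M := fun x hx =>
        s.le_max' x (Finset.mem_union_right _ (Multiset.mem_toFinset.mpr hx))
      have hfA : A.filter (M ∣ ·) = A.filter (· = M) := by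
        refine Multiset.filter_congr fun x hx => ?_
        constructor
        · intro hdvd
          exact le_antisymm (hmaxA x hx) (Nat.le_of_dvd (hA x hx) hdvd)
        · intro hxe; rw [hxe]
      have hfB : B.filter (M ∣ ·) = B.filter (· = M) := by
        refine Multiset.filter_congr fun x hx => ?_
        constructor
        · intro hdvd
          exact le_antisymm (hmaxB x hx) (Nat.le_of_dvd (hB x hx) hdvd)
        · intro hxe; rw [hxe]
      have hcount : A.count M = B.count M := by
        have := hc M hMpos
        rw [hfA, hfB] at this
        simpa [Multiset.count_filter, Multiset.count_eq_card_filter_eq, eq_comm] using this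
      have hcountpos : 0 < A.count M := by
        rcases Finset.mem_union.mp hMmem with hm | hm
        · exact Multiset.count_pos.mpr (Multiset.mem_toFinset.mp hm)
        · rw [hcount]; exact Multiset.count_pos.mpr (Multiset.mem_toFinset.mp hm)
      have hMA : M ∈ A := Multiset.count_pos.mp hcountpos
      have hMB : M ∈ B := Multiset.count_pos.mp (hcount ▸ hcountpos)
      set A' := A.erase M with hA'
      set B' := B.erase M with hB'
      have hAcons : A = M ::ₘ A' := (Multiset.cons_erase hMA).symm
      have hBcons : B = M ::ₘ B' := (Multiset.cons_erase hMB).symm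
      have hc' : ∀ d, 0 < d →
          Multiset.card (A'.filter (d ∣ ·)) = Multiset.card (B'.filter (d ∣ ·)) := by
        intro d hd
        have := hc d hd
        rw [hAcons, hBcons] at this
        by_cases hdM : d ∣ M <;> simp [Multiset.filter_cons, hdM] at this <;> omega
      have hk : k ≠ 0 := by
        rw [hAcons] at hcard; simp at hcard; omega
      have hcard' : Multiset.card A' = k - 1 := by
        rw [hAcons] at hcard; simp at hcard; omega
      have hA'pos : ∀ a ∈ A', 0 < a := fun a ha => hA a (Multiset.mem_of_mem_erase ha)
      have hB'pos : ∀ b ∈ B', 0 < b := fun b hb => hB b (Multiset.mem_of_mem_erase hb)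
      have : A' = B' := ih (k - 1) (by omega) A' B' hcard' hA'pos hB'pos hc'
      rw [hAcons, hBcons, this]

/-- **Gcd-sum rigidity for multisets of positive integers.**
If two finite multisets `A`, `B` of positive integers satisfy
`∑_{a ∈ A} gcd(a, n) = ∑_{b ∈ B} gcd(b, n)` for every positive integer `n`,
then `A = B` (in particular they have the same cardinality). -/
theorem gcd_sum_multiset_eq (A B : Multiset ℕ)
    (hA : ∀ a ∈ A, 0 < a) (hB : ∀ b ∈ B, 0 < b)
    (h : ∀ n : ℕ, 0 < n →
      (A.map fun a => Nat.gcd a n).sum = (B.map fun b => Nat.gcd b n).sum) :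
    Multiset.card A = Multiset.card B ∧ A = B := by
  have hc := counts_eq A B hA hB h
  have hAB : A = B := multiset_eq_of_counts (Multiset.card A) A B rfl hA hB hc
  exact ⟨by rw [hAB], hAB⟩
end

section
/- Let F : X → Y be a branched function with index function ind_F. Then for every f ∈ C_c(X): for each y ∈ Y the set F⁻¹(y) ∩ supp(f) is finite, so Φ(f)(y) = ∑_{x ∈ F⁻¹(y)} ind_F(x)·f(x) is a finite sum; the resulting function Φ(f) : Y → ℂ is continuous; and its support is contained in the compact set F(supp(f)). In particular Φ(f) ∈ C_c(Y). -/
open Filter Topology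

/-- `F` admits a system of inverse branches centered at `x`, relative to the index
function `ind`. -/
def BranchedAt {X Y : Type*} [TopologicalSpace X] [TopologicalSpace Y]
    (F : X → Y) (ind : X → ℕ) (x : X) : Prop :=
  ∃ (U : Set X) (V : Set Y) (g : Fin (ind x) → Y → X),
    IsOpen U ∧ x ∈ U ∧ IsOpen V ∧ F x ∈ V ∧
    (∀ i, ∀ v ∈ V, g i v ∈ U) ∧
    (∀ i, ∀ v ∈ V, F (g i v) = v) ∧
    (∀ i, g i (F x) = x) ∧
    (∀ i, ContinuousWithinAt (g i) V (F x)) ∧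
    (U = ⋃ i, g i '' V) ∧
    (∀ u ∈ U, ind u = Nat.card {i : Fin (ind x) // u ∈ g i '' V})

/-- `F` is a branched function with index function `ind`. -/
def IsBranched {X Y : Type*} [TopologicalSpace X] [TopologicalSpace Y]
    (F : X → Y) (ind : X → ℕ) : Prop :=
  Continuous F ∧ (∀ x, 0 < ind x) ∧ ∀ x, BranchedAt F ind x

/-- The transfer operator of a branched function: `Φ(f)(y) = ∑_{x ∈ F⁻¹(y)} ind_F(x)·f(x)`. -/
noncomputable def transfer {X Y : Type*} (F : X → Y) (ind : X → ℕ) (f : X → ℂ) (y : Y) : ℂ :=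
  ∑' x : F ⁻¹' {y}, (ind x.1 : ℂ) * f x.1

/-- **Proposition 5.3 of the paper.** If `F : X → Y` is a branched function and
`f ∈ C_c(X)`, then each fiber meets the support of `f` in a finite set (so `Φ(f)(y)` is a
finite sum), `Φ(f)` is continuous, its support is contained in the compact set
`F(supp f)`, and hence `Φ(f) ∈ C_c(Y)`. -/
theorem transfer_of_compactSupport {X Y : Type*}
    [TopologicalSpace X] [T2Space X] [LocallyCompactSpace X]
    [TopologicalSpace Y] [T2Space Y] [LocallyCompactSpace Y]
    (F : X → Y) (ind : X → ℕ) (hF : IsBranched F ind)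
    (f : X → ℂ) (hf : Continuous f) (hsupp : HasCompactSupport f) :
    (∀ y : Y, (F ⁻¹' {y} ∩ tsupport f).Finite) ∧
    Continuous (transfer F ind f) ∧
    tsupport (transfer F ind f) ⊆ F '' tsupport f ∧
    HasCompactSupport (transfer F ind f) := by
  classical
  obtain ⟨hFc, hind0, hbr⟩ := hF
  choose U V g hUo hxU hVo hFxV hgU hFg hgFx hgc hUeq hind using hbr
  set K := tsupport f with hK
  have hKc : IsCompact K := hsupp
  -- fibers are discrete within the charts
  have hdisc : ∀ x : X, ∀ u ∈ U x, F u = F x → u = x := by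
    intro x u hu hFu
    rw [hUeq x] at hu
    simp only [Set.mem_iUnion, Set.mem_image] at hu
    obtain ⟨i, v, hv, rfl⟩ := hu
    rw [hFg x i v hv] at hFu
    rw [hFu, hgFx]
  -- Part 1: finiteness of fibers intersected with the support
  have hfin : ∀ y : Y, (F ⁻¹' {y} ∩ K).Finite := by
    intro y
    have hScpt : IsCompact (F ⁻¹' {y} ∩ K) :=
      hKc.inter_left (isClosed_singleton.preimage hFc)
    obtain ⟨b, hbsub, hbfin, hcov⟩ := hScpt.elim_finite_subcover_image
      (fun u _ => hUo u) (fun u hu => Set.mem_biUnion hu (hxU u))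
    refine Set.Finite.subset hbfin ?_
    intro v hv
    obtain ⟨u, hu, hvU⟩ := Set.mem_iUnion₂.1 (hcov hv)
    have h1 : F v = y := hv.1
    have h2 : F u = y := (hbsub hu).1
    have : v = u := hdisc u v hvU (h1.trans h2.symm)
    rwa [this]
  have hzero : ∀ y, y ∉ F '' K → transfer F ind f y = 0 := by
    intro y hy
    have hz : ∀ x : F ⁻¹' {y}, (ind x.1 : ℂ) * f x.1 = 0 := by
      rintro ⟨x, hx⟩
      have hfx : f x = 0 := by
        by_contra h'
        exact hy ⟨x, subset_tsupport f h', hx⟩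
      simp [hfx]
    rw [transfer, tsum_congr hz, tsum_zero]
  have hsub : tsupport (transfer F ind f) ⊆ F '' K := by
    refine closure_minimal ?_ (hKc.image hFc).isClosed
    intro y hy
    by_contra h'
    exact hy (hzero y h')
  refine ⟨hfin, ?_,  hsub,
    (hKc.image hFc).of_isClosed_subset (isClosed_tsupport _) hsub⟩
  -- transfer vanishes outside F '' K
  · -- Continuity
    rw [continuous_iff_continuousAt]
    intro y₀
    set s : Finset X := (hfin y₀).toFinset with hs
    have hs_mem : ∀ x, x ∈ s ↔ (F x = y₀ ∧ x ∈ K) := by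
      intro x
      simp [hs, Set.Finite.mem_toFinset]
    obtain ⟨O, hOmem, hOdisj⟩ := Set.Finite.t2_separation (s := (↑s : Set X)) (s.finite_toSet)
    set U' : X → Set X := fun x => U x ∩ O x with hU'
    have hU'o : ∀ x, IsOpen (U' x) := fun x => (hUo x).inter (hOmem x).2
    have hxU' : ∀ x, x ∈ U' x := fun x => ⟨hxU x, (hOmem x).1⟩
    set C : Set X := K \ ⋃ x ∈ s, U' x with hC
    have hCc : IsCompact C := hKc.diff (isOpen_biUnion fun x _ => hU'o x)
    have hW₀o : IsOpen (F '' C)ᶜ := (hCc.image hFc).isClosed.isOpen_compl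
    have hy₀W₀ : y₀ ∈ (F '' C)ᶜ := by
      rintro ⟨u, ⟨huK, huU⟩, hFu⟩
      have hus : u ∈ s := (hs_mem u).2 ⟨hFu, huK⟩
      exact huU (Set.mem_biUnion hus (hxU' u))
    have hVy₀ : ∀ x ∈ s, y₀ ∈ V x := by
      intro x hx
      have := hFxV x
      rwa [((hs_mem x).1 hx).1] at this
    -- eventual conditions
    have hev₀ : ∀ᶠ y in 𝓝 y₀, y ∉ F '' C := hW₀o.mem_nhds hy₀W₀
    have hev₁ : ∀ᶠ y in 𝓝 y₀, ∀ x ∈ s, y ∈ V x :=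
      (eventually_all_finset s).2 fun x hx => (hVo x).mem_nhds (hVy₀ x hx)
    have hev₂ : ∀ᶠ y in 𝓝 y₀, ∀ x ∈ s, ∀ i : Fin (ind x), g x i y ∈ O x := by
      refine (eventually_all_finset s).2 fun x hx => eventually_all.2 fun i => ?_
      have hgi : Tendsto (g x i) (𝓝[V x] y₀) (𝓝 x) := by
        have := hgc x i
        rw [ContinuousWithinAt, hgFx x i] at this
        rwa [((hs_mem x).1 hx).1] at this
      have : ∀ᶠ y in 𝓝[V x] y₀, g x i y ∈ O x :=
        hgi ((hOmem x).2.mem_nhds (hOmem x).1)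
      rwa [(hVo x).nhdsWithin_eq (hVy₀ x hx)] at this
    set h : Y → ℂ := fun y => ∑ x ∈ s, ∑ i : Fin (ind x), f (g x i y) with hh
    have hkey : ∀ y, y ∉ F '' C → (∀ x ∈ s, y ∈ V x) →
        (∀ x ∈ s, ∀ i : Fin (ind x), g x i y ∈ O x) → transfer F ind f y = h y := by
      intro y hyC hyV hyO
      set t : X → Finset X := fun x => Finset.univ.image (fun i : Fin (ind x) => g x i y) with ht
      set T : Finset X := s.biUnion t with hT
      have hTmem : ∀ u, u ∈ T ↔ ∃ x ∈ s, ∃ i : Fin (ind x), g x i y = u := by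
        intro u
        simp [hT, ht, Finset.mem_biUnion]
      have hTfib : ∀ u ∈ T, F u = y := by
        intro u hu
        obtain ⟨x, hx, i, rfl⟩ := (hTmem u).1 hu
        exact hFg x i y (hyV x hx)
      have hbranch : ∀ x ∈ s, ∀ u, F u = y → u ∈ U x → ∃ i : Fin (ind x), g x i y = u := by
        intro x hx u hFu hu
        rw [hUeq x] at hu
        simp only [Set.mem_iUnion, Set.mem_image] at hu
        obtain ⟨i, v, hv, rfl⟩ := hu
        rw [hFg x i v hv] at hFu
        exact ⟨i, by rw [hFu]⟩
      have hsupp_T : ∀ u, F u = y → f u ≠ 0 → u ∈ T := by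
        intro u hFu hfu
        have huK : u ∈ K := subset_tsupport f hfu
        have huU : u ∈ ⋃ x ∈ s, U' x := by
          by_contra h'
          exact hyC ⟨u, ⟨huK, h'⟩, hFu⟩
        obtain ⟨x, hx, huU'⟩ := Set.mem_iUnion₂.1 huU
        obtain ⟨i, hi⟩ := hbranch x hx u hFu huU'.1
        exact (hTmem u).2 ⟨x, hx, i, hi⟩
      -- reduce the tsum to a finite sum over T
      have hfinsum : transfer F ind f y = ∑ u ∈ T, (ind u : ℂ) * f u := by
        have h1 : transfer F ind f y
            = ∑' u, (F ⁻¹' {y}).indicator (fun u => (ind u : ℂ) * f u) u :=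
          tsum_subtype (F ⁻¹' {y}) (fun u => (ind u : ℂ) * f u)
        rw [h1, tsum_eq_sum (s := T)]
        · refine Finset.sum_congr rfl fun u hu => ?_
          exact Set.indicator_of_mem (by simpa using hTfib u hu) _
        · intro u hu
          by_cases hFu : F u = y
          · have hfu : f u = 0 := by
              by_contra h'
              exact hu (hsupp_T u hFu h')
            rw [Set.indicator_of_mem (by simpa using hFu) _, hfu, mul_zero]
          · exact Set.indicator_of_notMem (by simpa using hFu) _
      rw [hfinsum, hT, Finset.sum_biUnion, hh]
      · refine Finset.sum_congr rfl fun x hx => ?_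
        rw [Finset.sum_comp (fun u => f u) (fun i : Fin (ind x) => g x i y)]
        refine Finset.sum_congr rfl fun u hu => ?_
        obtain ⟨i₀, _, rfl⟩ := Finset.mem_image.1 hu
        have hyVx : y ∈ V x := hyV x hx
        have hFu : F (g x i₀ y) = y := hFg x i₀ y hyVx
        have huU : g x i₀ y ∈ U x := hgU x i₀ y hyVx
        have hiff : ∀ i : Fin (ind x), (g x i₀ y ∈ g x i '' V x) ↔ g x i y = g x i₀ y := by
          intro i
          constructor
          · rintro ⟨v, hv, hvi⟩
            have h1 : F (g x i v) = v := hFg x i v hv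
            rw [hvi, hFu] at h1
            rw [← h1] at hvi
            exact hvi
          · intro hgi
            exact ⟨y, hyVx, hgi⟩
        have hcard : ind (g x i₀ y) =
            (Finset.univ.filter fun i : Fin (ind x) => g x i y = g x i₀ y).card := by
          rw [hind x _ huU, Nat.card_congr (Equiv.subtypeEquivRight hiff),
            Nat.card_eq_fintype_card, Fintype.card_subtype]
        rw [hcard, nsmul_eq_mul]
      · -- pairwise disjointness of the t x
        intro x hx x' hx' hne
        simp only [Finset.disjoint_left]
        intro u hu hu'
        have h1 : u ∈ O x := by
          obtain ⟨i, _, rfl⟩ := Finset.mem_image.1 hu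
          exact hyO x hx i
        have h2 : u ∈ O x' := by
          obtain ⟨i, _, rfl⟩ := Finset.mem_image.1 hu'
          exact hyO x' hx' i
        exact Set.disjoint_left.1 (hOdisj hx hx' hne) h1 h2
    have heq : transfer F ind f =ᶠ[𝓝 y₀] h := by
      filter_upwards [hev₀, hev₁, hev₂] with y hy₀ hy₁ hy₂
      exact hkey y hy₀ hy₁ hy₂
    have hW₁mem : (⋂ x ∈ s, V x) ∈ 𝓝 y₀ := by
      refine (isOpen_biInter_finset fun x _ => hVo x).mem_nhds ?_
      exact Set.mem_iInter₂.2 fun x hx => hVy₀ x hx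
    have hhc : ContinuousAt h y₀ := by
      have hcw : Tendsto h (𝓝[⋂ x ∈ s, V x] y₀) (𝓝 (h y₀)) := by
        have hmain : Tendsto (fun y => ∑ x ∈ s, ∑ i : Fin (ind x), f (g x i y))
            (𝓝[⋂ x ∈ s, V x] y₀) (𝓝 (∑ x ∈ s, ∑ i : Fin (ind x), f (g x i y₀))) := by
          refine tendsto_finset_sum _ fun x hx => tendsto_finset_sum _ fun i _ => ?_
          have hFxy₀ : F x = y₀ := ((hs_mem x).1 hx).1
          have hgi : Tendsto (g x i) (𝓝[⋂ x ∈ s, V x] y₀) (𝓝 (g x i y₀)) := by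
            have hgy₀ : g x i y₀ = x := by
              conv_lhs => rw [← hFxy₀]
              exact hgFx x i
            rw [hgy₀]
            have h0 : Tendsto (g x i) (𝓝[V x] (F x)) (𝓝 (g x i (F x))) := hgc x i
            rw [hgFx x i, hFxy₀] at h0
            exact h0.mono_left (nhdsWithin_mono _ (Set.biInter_subset_of_mem hx))
          exact (hf.tendsto _).comp hgi
        exact hmain
      exact ContinuousWithinAt.continuousAt hcw hW₁mem
    exact hhc.congr heq.symm
end

section
/- Let F : X → Y be a branched function with transfer operator Φ. If φ, ψ ∈ C₀(X) are real-valued with 0 ≤ φ ≤ ψ pointwise, and ψ ∈ C₁(X) (i.e. Φ(ψ) is finite everywhere and lies in C₀(Y)), then φ ∈ C₁(X): the function Φ(φ) is finite everywhere, continuous, vanishes at infinity, and satisfies 0 ≤ Φ(φ) ≤ Φ(ψ). -/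
open Filter Topology

/-- The transfer operator of a branched function, for real-valued functions:
`Φ(f)(y) = ∑_{x ∈ F⁻¹(y)} ind_F(x)·f(x)`. -/
noncomputable def transferR {X Y : Type*} (F : X → Y) (ind : X → ℕ) (f : X → ℝ) (y : Y) : ℝ :=
  ∑' x : F ⁻¹' {y}, (ind x.1 : ℝ) * f x.1

/-- Lower semicontinuity of the transfer operator on nonnegative functions. -/
theorem transfer_lsc {X Y : Type*} [TopologicalSpace X] [T2Space X] [TopologicalSpace Y]
    (F : X → Y) (ind : X → ℕ) (hF : IsBranched F ind)
    (f : X → ℝ) (hfc : Continuous f) (hf0 : ∀ x, 0 ≤ f x)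
    (hsum : ∀ y : Y, Summable fun x : F ⁻¹' {y} => (ind x.1 : ℝ) * f x.1) :
    LowerSemicontinuous (transferR F ind f) := by
  classical
  intro y a ha
  -- a finite subsum already exceeds `a`
  obtain ⟨S, hS⟩ : ∃ S : Finset (F ⁻¹' {y}), a < ∑ x ∈ S, (ind x.1 : ℝ) * f x.1 := by
    have h1 : HasSum (fun x : F ⁻¹' {y} => (ind x.1 : ℝ) * f x.1) (transferR F ind f y) :=
      (hsum y).hasSum
    exact (Filter.Tendsto.eventually_const_lt ha h1).exists
  -- disjoint open neighbourhoods of the (finitely many) points of S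
  obtain ⟨W, hW, hWd⟩ := ((S.image Subtype.val).finite_toSet).t2_separation
  -- branch data
  choose U V g hU hxU hV hFV hgU hFg hgx hgc hUeq hind using hF.2.2
  have hFx : ∀ x : (F ⁻¹' {y} : Set X), F x.1 = y := fun x => x.2
  have hyV : ∀ x : (F ⁻¹' {y} : Set X), y ∈ V x.1 := fun x => by
    have h := hFV x.1; rwa [hFx x] at h
  have hgyx : ∀ (x : (F ⁻¹' {y} : Set X)) (i : Fin (ind x.1)), g x.1 i y = x.1 := fun x i => by
    have h := hgx x.1 i; rwa [hFx x] at h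
  have hctsAt : ∀ (x : (F ⁻¹' {y} : Set X)) (i : Fin (ind x.1)), ContinuousAt (g x.1 i) y := by
    intro x i
    have h1 := (hgc x.1 i).continuousAt ((hV x.1).mem_nhds (hFV x.1))
    rwa [hFx x] at h1
  -- the comparison function
  have htend : Tendsto (fun v => ∑ x ∈ S, ∑ i : Fin (ind x.1), f (g x.1 i v)) (𝓝 y)
      (𝓝 (∑ x ∈ S, (ind x.1 : ℝ) * f x.1)) := by
    apply tendsto_finset_sum
    intro x _
    have h2 : Tendsto (fun v => ∑ i : Fin (ind x.1), f (g x.1 i v)) (𝓝 y)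
        (𝓝 (∑ _i : Fin (ind x.1), f x.1)) := by
      apply tendsto_finset_sum
      intro i _
      have h4 : Tendsto (g x.1 i) (𝓝 y) (𝓝 x.1) := by
        have h := hctsAt x i; rw [ContinuousAt, hgyx x i] at h; exact h
      exact Filter.Tendsto.comp hfc.continuousAt h4
    simpa [Finset.sum_const, Finset.card_univ, nsmul_eq_mul] using h2
  have ev3 : ∀ᶠ v in 𝓝 y, a < ∑ x ∈ S, ∑ i : Fin (ind x.1), f (g x.1 i v) :=
    htend.eventually_const_lt hS
  have ev12 : ∀ᶠ v in 𝓝 y, ∀ x ∈ S, v ∈ V x.1 ∧ ∀ i : Fin (ind x.1), g x.1 i v ∈ W x.1 := by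
    rw [Filter.eventually_all_finset]
    intro x hx
    refine ((hV x.1).eventually_mem (hyV x)).and ?_
    rw [Filter.eventually_all]
    intro i
    refine (hctsAt x i).eventually_mem ?_
    rw [hgyx x i]
    exact (hW x.1).2.mem_nhds (hW x.1).1
  filter_upwards [ev12, ev3] with v h12 h3
  refine lt_of_lt_of_le h3 ?_
  -- local images
  set T : (F ⁻¹' {y} : Set X) → Finset X :=
    fun x => Finset.image (fun i : Fin (ind x.1) => g x.1 i v) Finset.univ with hT
  -- step A: each local sum is a weighted sum with correct indices
  have stepA : ∀ x ∈ S, ∑ i : Fin (ind x.1), f (g x.1 i v)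
      = ∑ u ∈ T x, (ind u : ℝ) * f u := by
    intro x hx
    have hvV : v ∈ V x.1 := (h12 x hx).1
    rw [Finset.sum_comp f (fun i : Fin (ind x.1) => g x.1 i v)]
    refine Finset.sum_congr rfl ?_
    intro u hu
    obtain ⟨j, _, hj⟩ := Finset.mem_image.mp hu
    have huU : u ∈ U x.1 := hj ▸ hgU x.1 j v hvV
    have hiff : ∀ i : Fin (ind x.1), u ∈ g x.1 i '' V x.1 ↔ g x.1 i v = u := by
      intro i
      constructor
      · rintro ⟨w, hw, hwe⟩
        have h1 : F u = w := by rw [← hwe]; exact hFg x.1 i w hw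
        have h2 : F u = v := by rw [← hj]; exact hFg x.1 j v hvV
        have hwv : w = v := h1.symm.trans h2
        rw [← hwv]
        exact hwe
      · intro h; exact ⟨v, hvV, h⟩
    have hcard : ind u = (Finset.univ.filter fun i : Fin (ind x.1) => g x.1 i v = u).card := by
      rw [hind x.1 u huU, Nat.card_congr (Equiv.subtypeEquivRight hiff),
        Nat.card_eq_fintype_card, Fintype.card_subtype]
    rw [← hcard, nsmul_eq_mul]
  -- step B: pairwise disjointness of the local images
  have stepB : (↑S : Set (F ⁻¹' {y} : Set X)).PairwiseDisjoint T := by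
    intro x hx x' hx' hne
    have hsub : ∀ z : (F ⁻¹' {y} : Set X), z ∈ S → ∀ u ∈ T z, u ∈ W z.1 := by
      intro z hz u hu
      obtain ⟨i, _, hi⟩ := Finset.mem_image.mp hu
      exact hi ▸ (h12 z (by simpa using hz)).2 i
    have hmem : x.1 ∈ (↑(S.image Subtype.val) : Set X) := by
      simp only [Finset.coe_image, Set.mem_image, Finset.mem_coe]
      exact ⟨x, by simpa using hx, rfl⟩
    have hmem' : x'.1 ∈ (↑(S.image Subtype.val) : Set X) := by
      simp only [Finset.coe_image, Set.mem_image, Finset.mem_coe]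
      exact ⟨x', by simpa using hx', rfl⟩
    have hne' : x.1 ≠ x'.1 := fun h => hne (Subtype.coe_injective h)
    have hdisj := hWd hmem hmem' hne'
    show Disjoint (T x) (T x')
    rw [Finset.disjoint_left]
    intro u hu hu'
    exact (Set.disjoint_left.mp hdisj) (hsub x (by simpa using hx) u hu)
      (hsub x' (by simpa using hx') u hu')
  calc ∑ x ∈ S, ∑ i : Fin (ind x.1), f (g x.1 i v)
      = ∑ x ∈ S, ∑ u ∈ T x, (ind u : ℝ) * f u := Finset.sum_congr rfl stepA
    _ = ∑ u ∈ S.biUnion T, (ind u : ℝ) * f u := (Finset.sum_biUnion stepB).symm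
    _ ≤ transferR F ind f v := by
        have hBfib : ∀ u ∈ S.biUnion T, u ∈ F ⁻¹' {v} := by
          intro u hu
          obtain ⟨x, hx, hxT⟩ := Finset.mem_biUnion.mp hu
          obtain ⟨i, _, hi⟩ := Finset.mem_image.mp hxT
          have : F u = v := by rw [← hi]; exact hFg x.1 i v (h12 x hx).1
          simpa using this
        have hrw : transferR F ind f v
            = ∑' u : X, (F ⁻¹' {v}).indicator (fun u => (ind u : ℝ) * f u) u :=
          tsum_subtype (F ⁻¹' {v}) (fun u => (ind u : ℝ) * f u)
        rw [hrw]
        have hsum' : Summable ((F ⁻¹' {v}).indicator (fun u => (ind u : ℝ) * f u)) :=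
          summable_subtype_iff_indicator.mp (hsum v)
        calc ∑ u ∈ S.biUnion T, (ind u : ℝ) * f u
            = ∑ u ∈ S.biUnion T, (F ⁻¹' {v}).indicator (fun u => (ind u : ℝ) * f u) u :=
              Finset.sum_congr rfl fun u hu => (Set.indicator_of_mem (hBfib u hu) (fun u => (ind u : ℝ) * f u)).symm
          _ ≤ ∑' u : X, (F ⁻¹' {v}).indicator (fun u => (ind u : ℝ) * f u) u :=
              Summable.sum_le_tsum _ (fun u _ => Set.indicator_nonneg
                (fun z _ => mul_nonneg (Nat.cast_nonneg _) (hf0 z)) u) hsum'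


/-- **Hereditary property of `C₁(X)` (Lemma 5.4 of the paper).** If `0 ≤ φ ≤ ψ`
pointwise, `φ, ψ ∈ C₀(X)` and `ψ ∈ C₁(X)` (the fiber sums of `ind·ψ` all converge and
`Φ(ψ)` belongs to `C₀(Y)`), then `φ ∈ C₁(X)`: its fiber sums converge, `Φ(φ)` is
continuous and vanishes at infinity, and `0 ≤ Φ(φ) ≤ Φ(ψ)`. -/
theorem transfer_hereditary {X Y : Type*}
    [TopologicalSpace X] [T2Space X] [LocallyCompactSpace X]
    [TopologicalSpace Y] [T2Space Y] [LocallyCompactSpace Y]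
    (F : X → Y) (ind : X → ℕ) (hF : IsBranched F ind)
    (φ ψ : X → ℝ)
    (hφc : Continuous φ) (hφ0 : Tendsto φ (cocompact X) (nhds 0))
    (hψc : Continuous ψ) (hψ0 : Tendsto ψ (cocompact X) (nhds 0))
    (hle : ∀ x : X, 0 ≤ φ x ∧ φ x ≤ ψ x)
    (hψsum : ∀ y : Y, Summable fun x : F ⁻¹' {y} => (ind x.1 : ℝ) * ψ x.1)
    (hψcont : Continuous (transferR F ind ψ))
    (hψinf : Tendsto (transferR F ind ψ) (cocompact Y) (nhds 0)) :
    (∀ y : Y, Summable fun x : F ⁻¹' {y} => (ind x.1 : ℝ) * φ x.1) ∧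
    Continuous (transferR F ind φ) ∧
    Tendsto (transferR F ind φ) (cocompact Y) (nhds 0) ∧
    ∀ y : Y, 0 ≤ transferR F ind φ y ∧ transferR F ind φ y ≤ transferR F ind ψ y := by
  have hφsum : ∀ y : Y, Summable fun x : F ⁻¹' {y} => (ind x.1 : ℝ) * φ x.1 := fun y =>
    Summable.of_nonneg_of_le
      (fun x => mul_nonneg (Nat.cast_nonneg _) (hle x.1).1)
      (fun x => mul_le_mul_of_nonneg_left (hle x.1).2 (Nat.cast_nonneg _))
      (hψsum y)
  have hθsum : ∀ y : Y, Summable fun x : F ⁻¹' {y} => (ind x.1 : ℝ) * (ψ x.1 - φ x.1) := by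
    intro y
    have h := (hψsum y).sub (hφsum y)
    refine h.congr fun x => ?_
    ring
  have hnonneg : ∀ v : Y, 0 ≤ transferR F ind φ v := fun v =>
    tsum_nonneg fun x => mul_nonneg (Nat.cast_nonneg _) (hle x.1).1
  have hmono : ∀ v : Y, transferR F ind φ v ≤ transferR F ind ψ v := fun v =>
    Summable.tsum_le_tsum (fun x => mul_le_mul_of_nonneg_left (hle x.1).2 (Nat.cast_nonneg _))
      (hφsum v) (hψsum v)
  have L1 : LowerSemicontinuous (transferR F ind φ) :=
    transfer_lsc F ind hF φ hφc (fun x => (hle x).1) hφsum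
  have L2 : LowerSemicontinuous (transferR F ind (fun x => ψ x - φ x)) :=
    transfer_lsc F ind hF (fun x => ψ x - φ x) (hψc.sub hφc)
      (fun x => sub_nonneg.2 (hle x).2) hθsum
  have key : ∀ v : Y, transferR F ind φ v
      = transferR F ind ψ v - transferR F ind (fun x => ψ x - φ x) v := by
    intro v
    unfold transferR
    rw [← Summable.tsum_sub (hψsum v) (hθsum v)]
    refine tsum_congr fun x => ?_
    ring
  have U1 : UpperSemicontinuous (transferR F ind φ) := by
    have hneg : UpperSemicontinuous
        (Neg.neg ∘ (transferR F ind (fun x => ψ x - φ x))) :=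
      Continuous.comp_lowerSemicontinuous_antitone continuous_neg L2
        fun _ _ h => neg_le_neg h
    have hsum2 := (hψcont.upperSemicontinuous).add hneg
    have hfun : transferR F ind φ
        = fun v => transferR F ind ψ v + (Neg.neg ∘ transferR F ind (fun x => ψ x - φ x)) v :=
      funext fun v => by rw [key v]; simp [Function.comp]; ring
    rw [hfun]
    exact hsum2
  refine ⟨hφsum, ?_, ?_, fun y => ⟨hnonneg y, hmono y⟩⟩
  · exact continuous_iff_lower_upperSemicontinuous.mpr ⟨L1, U1⟩
  · exact tendsto_of_tendsto_of_tendsto_of_le_of_le tendsto_const_nhds hψinf hnonneg hmono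
end

section
/- Let F : X → Y be a branched function with transfer operator Φ. If (ψ_m)_{m∈ℕ} is a sequence in C₁(X) with ∑_{m} ‖Φ(|ψ_m|)‖_∞ < ∞, then the series ∑_{m} ψ_m converges uniformly on X to a function ψ ∈ C₀(X), and ψ ∈ C₁(X). (In other words, C₁(X) is complete with respect to the norm ‖ψ‖₁ := ‖Φ(|ψ|)‖_∞.) -/
open Filter Topology

/-- The transfer operator applied to `|f|`:
`Φ(|f|)(y) = ∑_{x ∈ F⁻¹(y)} ind_F(x)·|f(x)|`. -/
noncomputable def transferAbs {X Y : Type*} (F : X → Y) (ind : X → ℕ) (f : X → ℂ) (y : Y) : ℝ :=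
  ∑' x : F ⁻¹' {y}, (ind x.1 : ℝ) * ‖f x.1‖

/-- Membership in `C₁(X)`: `ψ ∈ C₀(X)` and `Φ(|ψ|)` is everywhere finite and lies in
`C₀(Y)`. -/
def MemC1 {X Y : Type*} [TopologicalSpace X] [TopologicalSpace Y]
    (F : X → Y) (ind : X → ℕ) (ψ : X → ℂ) : Prop :=
  Continuous ψ ∧ Tendsto ψ (cocompact X) (nhds 0) ∧
  (∀ y : Y, Summable fun x : F ⁻¹' {y} => (ind x.1 : ℝ) * ‖ψ x.1‖) ∧
  Continuous (transferAbs F ind ψ) ∧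
  Tendsto (transferAbs F ind ψ) (cocompact Y) (nhds 0)

private lemma branched_local {X Y : Type*} [TopologicalSpace X] [TopologicalSpace Y]
    {F : X → Y} {ind : X → ℕ} {x : X} (hB : BranchedAt F ind x)
    (W : Set X) (hW : IsOpen W) (hxW : x ∈ W) :
    ∃ (V : Set Y) (g : Fin (ind x) → Y → X),
      IsOpen V ∧ F x ∈ V ∧
      (∀ i, ContinuousAt (g i) (F x)) ∧
      (∀ i, g i (F x) = x) ∧
      (∀ i, ∀ v ∈ V, g i v ∈ W) ∧
      (∀ i, ∀ v ∈ V, F (g i v) = v) ∧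
      (∀ v ∈ V, ∀ i, ind (g i v) = Nat.card {j : Fin (ind x) // g j v = g i v}) := by
  obtain ⟨U, V, g, hU, hxU, hV, hFxV, hgU, hFg, hgx, hgcont, hUeq, hcnt⟩ := hB
  have hgc : ∀ i, ContinuousAt (g i) (F x) := fun i =>
    (hgcont i).continuousAt (hV.mem_nhds hFxV)
  have hS : (⋂ i, (g i) ⁻¹' W) ∈ 𝓝 (F x) := by
    rw [Filter.iInter_mem]
    intro i
    apply (hgc i).preimage_mem_nhds
    rw [hgx i]
    exact hW.mem_nhds hxW
  obtain ⟨O, hOsub, hOopen, hFxO⟩ := mem_nhds_iff.1 hS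
  refine ⟨V ∩ O, g, hV.inter hOopen, ⟨hFxV, hFxO⟩, hgc, hgx, ?_,
    fun i v hv => hFg i v hv.1, ?_⟩
  · intro i v hv
    exact Set.mem_iInter.1 (hOsub hv.2) i
  · intro v hv i
    have hvV : v ∈ V := hv.1
    have hiff : ∀ j, (g i v ∈ g j '' V) ↔ g j v = g i v := by
      intro j
      constructor
      · rintro ⟨w, hwV, hw⟩
        have hwv : w = v := by rw [← hFg j w hwV, hw, hFg i v hvV]
        subst hwv; exact hw
      · intro hj
        exact ⟨v, hvV, hj⟩
    have hU' : g i v ∈ U := by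
      rw [hUeq]; exact Set.mem_iUnion.2 ⟨i, ⟨v, hvV, rfl⟩⟩
    rw [hcnt _ hU']
    exact Nat.card_congr (Equiv.subtypeEquivRight hiff)

private lemma transfer_cont {X Y : Type*} [TopologicalSpace X] [T2Space X] [TopologicalSpace Y]
    {F : X → Y} {ind : X → ℕ} (hF : IsBranched F ind)
    {φ h : X → ℝ} (hφc : Continuous φ) (hφ0 : ∀ x, 0 ≤ φ x) (hφh : ∀ x, φ x ≤ h x)
    (hhc : Continuous h)
    (hsumφ : ∀ y, Summable fun x : F ⁻¹' {y} => (ind x.1 : ℝ) * φ x.1)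
    (hsum : ∀ y, Summable fun x : F ⁻¹' {y} => (ind x.1 : ℝ) * h x.1)
    (hΦh : Continuous fun y => ∑' x : F ⁻¹' {y}, (ind x.1 : ℝ) * h x.1) :
    Continuous fun y => ∑' x : F ⁻¹' {y}, (ind x.1 : ℝ) * φ x.1 := by
  classical
  rw [continuous_iff_continuousAt]
  intro y₀
  rw [ContinuousAt, Metric.tendsto_nhds]
  intro ε hε
  obtain ⟨s, hs⟩ : ∃ s : Finset (F ⁻¹' {y₀}),
      (∑' x : F ⁻¹' {y₀}, (ind x.1 : ℝ) * h x.1) - ∑ x ∈ s, (ind x.1 : ℝ) * h x.1 < ε/6 := by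
    obtain ⟨s, hs⟩ := (Metric.tendsto_nhds.1 (hsum y₀).hasSum (ε/6) (by positivity)).exists
    rw [Real.dist_eq] at hs
    exact ⟨s, by linarith [(abs_lt.1 hs).1]⟩
  obtain ⟨W, hW, hWdisj⟩ :=
    Set.Finite.t2_separation (Set.Finite.image Subtype.val s.finite_toSet)
  have hbr : ∀ x : F ⁻¹' {y₀}, ∃ (V : Set Y) (g : Fin (ind x.1) → Y → X),
      IsOpen V ∧ y₀ ∈ V ∧ (∀ i, ContinuousAt (g i) y₀) ∧ (∀ i, g i y₀ = x.1) ∧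
      (∀ i, ∀ v ∈ V, g i v ∈ W x.1) ∧ (∀ i, ∀ v ∈ V, F (g i v) = v) ∧
      (∀ v ∈ V, ∀ i, ind (g i v) = Nat.card {j : Fin (ind x.1) // g j v = g i v}) := by
    intro x
    have hx : F x.1 = y₀ := x.2
    obtain ⟨V, g, h1, h2, h3, h4, h5, h6, h7⟩ :=
      branched_local (hF.2.2 x.1) (W x.1) (hW x.1).2 (hW x.1).1
    rw [hx] at h2 h3 h4
    exact ⟨V, g, h1, h2, h3, h4, h5, h6, h7⟩
  choose V g hVopen hy₀V hgcont hgy₀ hgW hFg hcnt using hbr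
  have hV₀open : IsOpen (⋂ x ∈ s, V x) := isOpen_biInter_finset (fun x _ => hVopen x)
  have hy₀V₀ : y₀ ∈ ⋂ x ∈ s, V x := Set.mem_iInter₂.2 fun x _ => hy₀V x
  -- the key combinatorial claim
  have claim : ∀ y ∈ ⋂ x ∈ s, V x, ∃ B : Finset (F ⁻¹' {y}),
      ∀ t : X → ℝ, ∑ z ∈ B, (ind z.1 : ℝ) * t z.1 = ∑ x ∈ s, ∑ i, t (g x i y) := by
    intro y hy
    have hyV : ∀ x ∈ s, y ∈ V x := fun x hx => Set.mem_iInter₂.1 hy x hx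
    have hmem : ∀ (x : F ⁻¹' {y₀}), x ∈ s → ∀ i : Fin (ind x.1), g x i y ∈ F ⁻¹' {y} :=
      fun x hx i => by
        simp only [Set.mem_preimage, Set.mem_singleton_iff]
        exact hFg x i y (hyV x hx)
    refine ⟨s.attach.biUnion (fun x => Finset.univ.image
        (fun i : Fin (ind x.1.1) => (⟨g x.1 i y, hmem x.1 x.2 i⟩ : F ⁻¹' {y}))), ?_⟩
    intro t
    have hdisj : (↑s.attach : Set {x // x ∈ s}).PairwiseDisjoint
        (fun x : {x // x ∈ s} => Finset.univ.image
          (fun i : Fin (ind x.1.1) => (⟨g x.1 i y, hmem x.1 x.2 i⟩ : F ⁻¹' {y}))) := by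
      intro a _ b _ hab
      simp only [Function.onFun]
      rw [Finset.disjoint_left]
      intro z hza hzb
      simp only [Finset.mem_image, Finset.mem_univ, true_and] at hza hzb
      obtain ⟨i, hi⟩ := hza
      obtain ⟨j, hj⟩ := hzb
      have h1 : z.1 ∈ W a.1.1 := by
        rw [← hi]; exact hgW a.1 i y (hyV a.1 a.2)
      have h2 : z.1 ∈ W b.1.1 := by
        rw [← hj]; exact hgW b.1 j y (hyV b.1 b.2)
      have hne : (a.1.1 : X) ≠ b.1.1 := fun hh => hab (Subtype.ext (Subtype.ext hh))
      have hd := hWdisj (Set.mem_image_of_mem _ (by exact_mod_cast a.2 : (a.1 : F ⁻¹' {y₀}) ∈ (s : Set _)))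
        (Set.mem_image_of_mem _ (by exact_mod_cast b.2 : (b.1 : F ⁻¹' {y₀}) ∈ (s : Set _))) hne
      exact Set.disjoint_left.1 hd h1 h2
    rw [Finset.sum_biUnion hdisj]
    rw [← Finset.sum_attach s (fun x => ∑ i, t (g x i y))]
    refine Finset.sum_congr rfl (fun x _ => ?_)
    have hcomp := Finset.sum_comp (s := (Finset.univ : Finset (Fin (ind x.1.1))))
        (fun z : F ⁻¹' {y} => t z.1)
        (fun i => (⟨g x.1 i y, hmem x.1 x.2 i⟩ : F ⁻¹' {y}))
    symm
    rw [show (∑ i, t (g x.1 i y)) = ∑ i : Fin (ind x.1.1),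
        (fun z : F ⁻¹' {y} => t z.1) ((⟨g x.1 i y, hmem x.1 x.2 i⟩ : F ⁻¹' {y})) from rfl,
      hcomp]
    refine Finset.sum_congr rfl (fun z hz => ?_)
    simp only [Finset.mem_image, Finset.mem_univ, true_and] at hz
    obtain ⟨i, hi⟩ := hz
    have hz1 : z.1 = g x.1 i y := by rw [← hi]
    have hcard : (Finset.univ.filter
        (fun a : Fin (ind x.1.1) => (⟨g x.1 a y, hmem x.1 x.2 a⟩ : F ⁻¹' {y}) = z)).card
        = ind z.1 := by
      rw [hz1, hcnt x.1 y (hyV x.1 x.2) i]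
      rw [Nat.card_eq_fintype_card, Fintype.card_subtype]
      congr 1
      apply Finset.filter_congr
      intro j _
      rw [← hi]
      simp [Subtype.ext_iff]
    rw [hcard, nsmul_eq_mul]
  -- claims about sums
  have hclaim2 : ∀ t : X → ℝ, (∀ z, 0 ≤ t z) →
      (∀ y, Summable fun z : F ⁻¹' {y} => (ind z.1 : ℝ) * t z.1) →
      ∀ y ∈ ⋂ x ∈ s, V x,
      (∑ x ∈ s, ∑ i, t (g x i y)) ≤ ∑' z : F ⁻¹' {y}, (ind z.1 : ℝ) * t z.1 := by
    intro t ht0 hts y hy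
    obtain ⟨B, hB⟩ := claim y hy
    rw [← hB t]
    exact Summable.sum_le_tsum B (fun z _ => mul_nonneg (Nat.cast_nonneg _) (ht0 z.1)) (hts y)
  have hclaim3 : ∀ y ∈ ⋂ x ∈ s, V x,
      (∑' z : F ⁻¹' {y}, (ind z.1 : ℝ) * φ z.1) - (∑ x ∈ s, ∑ i, φ (g x i y))
        ≤ (∑' z : F ⁻¹' {y}, (ind z.1 : ℝ) * h z.1) - (∑ x ∈ s, ∑ i, h (g x i y)) := by
    intro y hy
    obtain ⟨B, hB⟩ := claim y hy
    have hφsplit := Summable.sum_add_tsum_subtype_compl (hsumφ y) B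
    have hhsplit := Summable.sum_add_tsum_subtype_compl (hsum y) B
    have hle : (∑' z : {z : F ⁻¹' {y} // z ∉ B}, (ind z.1.1 : ℝ) * φ z.1.1)
        ≤ ∑' z : {z : F ⁻¹' {y} // z ∉ B}, (ind z.1.1 : ℝ) * h z.1.1 := by
      apply Summable.tsum_le_tsum
      · intro z; exact mul_le_mul_of_nonneg_left (hφh z.1.1) (Nat.cast_nonneg _)
      · exact (hsumφ y).subtype _
      · exact (hsum y).subtype _
    rw [← hB φ, ← hB h, ← hφsplit, ← hhsplit]
    simpa using hle
  -- continuity of the local finite sums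
  have hLφt : Tendsto (fun y => ∑ x ∈ s, ∑ i, φ (g x i y)) (𝓝 y₀)
      (𝓝 (∑ x ∈ s, ∑ i, φ (g x i y₀))) := by
    refine tendsto_finset_sum _ fun x _ => tendsto_finset_sum _ fun i _ => ?_
    exact (hφc.continuousAt).comp (hgcont x i)
  have hLht : Tendsto (fun y => ∑ x ∈ s, ∑ i, h (g x i y)) (𝓝 y₀)
      (𝓝 (∑ x ∈ s, ∑ i, h (g x i y₀))) := by
    refine tendsto_finset_sum _ fun x _ => tendsto_finset_sum _ fun i _ => ?_
    exact (hhc.continuousAt).comp (hgcont x i)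
  have hLh0 : (∑ x ∈ s, ∑ i, h (g x i y₀)) = ∑ x ∈ s, (ind x.1 : ℝ) * h x.1 := by
    refine Finset.sum_congr rfl fun x _ => ?_
    rw [Finset.sum_congr rfl (fun i _ => by rw [hgy₀ x i]),
      Finset.sum_const, Finset.card_univ, Fintype.card_fin, nsmul_eq_mul]
  have hΦhsub : Tendsto (fun y => (∑' z : F ⁻¹' {y}, (ind z.1 : ℝ) * h z.1)
      - ∑ x ∈ s, ∑ i, h (g x i y)) (𝓝 y₀)
      (𝓝 ((∑' z : F ⁻¹' {y₀}, (ind z.1 : ℝ) * h z.1) - ∑ x ∈ s, ∑ i, h (g x i y₀))) :=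
    (hΦh.continuousAt).sub hLht
  have hval : (∑' z : F ⁻¹' {y₀}, (ind z.1 : ℝ) * h z.1) - (∑ x ∈ s, ∑ i, h (g x i y₀)) < ε/6 := by
    rw [hLh0]; exact hs
  have ev1 : ∀ᶠ y in 𝓝 y₀, y ∈ ⋂ x ∈ s, V x := hV₀open.mem_nhds hy₀V₀
  have ev2 : ∀ᶠ y in 𝓝 y₀, |(∑ x ∈ s, ∑ i, φ (g x i y)) - ∑ x ∈ s, ∑ i, φ (g x i y₀)| < ε/3 := by
    have := Metric.tendsto_nhds.1 hLφt (ε/3) (by positivity)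
    simpa [Real.dist_eq] using this
  have ev3 : ∀ᶠ y in 𝓝 y₀, (∑' z : F ⁻¹' {y}, (ind z.1 : ℝ) * h z.1)
      - (∑ x ∈ s, ∑ i, h (g x i y)) < ε/3 := by
    exact hΦhsub.eventually_lt_const (by linarith)
  filter_upwards [ev1, ev2, ev3] with y hy1 hy2 hy3
  rw [Real.dist_eq, abs_sub_lt_iff]
  have hA1 := hclaim2 φ hφ0 hsumφ y hy1
  have hA0 := hclaim2 φ hφ0 hsumφ y₀ hy₀V₀
  have hB1 := hclaim3 y hy1
  have hB0 := hclaim3 y₀ hy₀V₀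
  have hy2' := abs_lt.1 hy2
  constructor <;> nlinarith [hy2'.1, hy2'.2, hval, hy3, hA1, hA0, hB1, hB0]

set_option maxHeartbeats 1000000 in
/-- **Completeness of `C₁(X)` (Lemma 5.4 of the paper).** If `(ψ_m)` is a sequence in
`C₁(X)` with `∑_m ‖Φ(|ψ_m|)‖_∞ < ∞` (witnessed by a summable sequence of bounds `c m`),
then `∑_m ψ_m` converges uniformly on `X` to a function `g ∈ C₀(X)`, and `g ∈ C₁(X)`. -/
theorem c1_complete {X Y : Type*}
    [TopologicalSpace X] [T2Space X] [LocallyCompactSpace X]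
    [TopologicalSpace Y] [T2Space Y] [LocallyCompactSpace Y]
    (F : X → Y) (ind : X → ℕ) (hF : IsBranched F ind)
    (ψ : ℕ → X → ℂ) (hψ : ∀ m, MemC1 F ind (ψ m))
    (c : ℕ → ℝ) (hc : Summable c)
    (hbound : ∀ m y, transferAbs F ind (ψ m) y ≤ c m) :
    ∃ g : X → ℂ,
      TendstoUniformly (fun N x => ∑ m ∈ Finset.range N, ψ m x) g atTop ∧
      MemC1 F ind g := by
  classical
  have habs : ∀ m x, ‖ψ m x‖ ≤ c m := by
    intro m x
    have hs := (hψ m).2.2.1 (F x)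
    have h1 : (ind x : ℝ) * ‖ψ m x‖ ≤ transferAbs F ind (ψ m) (F x) :=
      Summable.le_tsum hs ⟨x, rfl⟩ (fun j _ => mul_nonneg (Nat.cast_nonneg _) (norm_nonneg _))
    have h2 : (1 : ℝ) ≤ (ind x : ℝ) := by exact_mod_cast hF.2.1 x
    nlinarith [norm_nonneg (ψ m x), hbound m (F x)]
  have hsummM : ∀ x, Summable fun m => ‖ψ m x‖ := fun x =>
    Summable.of_nonneg_of_le (fun m => norm_nonneg _) (fun m => habs m x) hc
  have hsummψ : ∀ x, Summable fun m => ψ m x := fun x =>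
    Summable.of_norm (by simpa using hsummM x)
  have hkey : ∀ (N : ℕ) (y : Y) (u : Finset (F ⁻¹' {y})),
      ∑ x ∈ u, (ind x.1 : ℝ) * (∑' m, ‖ψ (m + N) x.1‖) ≤ ∑' m, c (m + N) := by
    intro N y u
    have hsm : ∀ x : X, Summable fun m => ‖ψ (m + N) x‖ :=
      fun x => (summable_nat_add_iff N).2 (hsummM x)
    have hterm : ∀ m, ∑ x ∈ u, (ind x.1 : ℝ) * ‖ψ (m + N) x.1‖ ≤ c (m + N) := by
      intro m
      calc ∑ x ∈ u, (ind x.1 : ℝ) * ‖ψ (m + N) x.1‖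
          ≤ ∑' x : F ⁻¹' {y}, (ind x.1 : ℝ) * ‖ψ (m + N) x.1‖ :=
            Summable.sum_le_tsum u (fun x _ => mul_nonneg (Nat.cast_nonneg _) (norm_nonneg _))
              ((hψ (m + N)).2.2.1 y)
        _ ≤ c (m + N) := hbound (m + N) y
    have heq : (∑' m, ∑ x ∈ u, (ind x.1 : ℝ) * ‖ψ (m + N) x.1‖)
        = ∑ x ∈ u, (ind x.1 : ℝ) * (∑' m, ‖ψ (m + N) x.1‖) := by
      rw [Summable.tsum_finsetSum (f := fun (x : F ⁻¹' {y}) (m : ℕ) =>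
        (ind x.1 : ℝ) * ‖ψ (m + N) x.1‖) (s := u)
        (fun x _ => ((hsm x.1).mul_left _))]
      exact Finset.sum_congr rfl fun x _ => tsum_mul_left
    rw [← heq]
    apply Summable.tsum_le_tsum hterm
    · apply Summable.of_nonneg_of_le
        (fun m => Finset.sum_nonneg fun x _ =>
          mul_nonneg (Nat.cast_nonneg _) (norm_nonneg _)) hterm
      exact (summable_nat_add_iff N).2 hc
    · exact (summable_nat_add_iff N).2 hc
  have hfib : ∀ (N : ℕ) (φ : X → ℂ),
      (∀ x, ‖φ x‖ ≤ ∑' m, ‖ψ (m + N) x‖) → ∀ y : Y,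
      (Summable fun x : F ⁻¹' {y} => (ind x.1 : ℝ) * ‖φ x.1‖) ∧
      transferAbs F ind φ y ≤ ∑' m, c (m + N) := by
    intro N φ hφ y
    have hb : ∀ u : Finset (F ⁻¹' {y}),
        ∑ x ∈ u, (ind x.1 : ℝ) * ‖φ x.1‖ ≤ ∑' m, c (m + N) := fun u =>
      le_trans (Finset.sum_le_sum fun x _ =>
        mul_le_mul_of_nonneg_left (hφ x.1) (Nat.cast_nonneg _)) (hkey N y u)
    have hsummable := summable_of_sum_le
      (fun x => mul_nonneg (Nat.cast_nonneg _) (norm_nonneg _)) hb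
    exact ⟨hsummable, Summable.tsum_le_of_sum_le hsummable hb⟩
  have habs_g : ∀ x, ‖∑' m, ψ m x‖ ≤ ∑' m, ‖ψ (m + 0) x‖ := by
    intro x
    simp only [Nat.add_zero]
    simpa using norm_tsum_le_tsum_norm (f := fun m => ψ m x)
      (by simpa using hsummM x)
  have hTx : ∀ (N : ℕ) (x : X), ‖(∑' m, ψ m x) - ∑ m ∈ Finset.range N, ψ m x‖
      ≤ ∑' m, ‖ψ (m + N) x‖ := by
    intro N x
    have hsplit := Summable.sum_add_tsum_nat_add N (hsummψ x)
    have heq : (∑' m, ψ m x) - ∑ m ∈ Finset.range N, ψ m x = ∑' m, ψ (m + N) x := by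
      rw [← hsplit]; ring
    rw [heq]
    simpa using norm_tsum_le_tsum_norm (f := fun m => ψ (m + N) x)
      (by simpa using (summable_nat_add_iff N).2 (hsummM x))
  have habs_S : ∀ (N : ℕ) (x : X), ‖∑ m ∈ Finset.range N, ψ m x‖
      ≤ ∑' m, ‖ψ (m + 0) x‖ := by
    intro N x
    simp only [Nat.add_zero]
    calc ‖∑ m ∈ Finset.range N, ψ m x‖
        ≤ ∑ m ∈ Finset.range N, ‖ψ m x‖ := norm_sum_le _ _
      _ ≤ ∑' m, ‖ψ m x‖ :=
          Summable.sum_le_tsum _ (fun m _ => norm_nonneg _) (hsummM x)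
  have hdiff : ∀ (N : ℕ) (y : Y),
      |transferAbs F ind (fun x => ∑' m, ψ m x) y
        - transferAbs F ind (fun x => ∑ m ∈ Finset.range N, ψ m x) y| ≤ ∑' m, c (m + N) := by
    intro N y
    have ha := (hfib 0 _ habs_g y).1
    have hb := (hfib 0 _ (habs_S N) y).1
    have hd_sum : Summable fun x : F ⁻¹' {y} =>
        (ind x.1 : ℝ) * (∑' m, ‖ψ (m + N) x.1‖) :=
      summable_of_sum_le (fun x => mul_nonneg (Nat.cast_nonneg _)
        (tsum_nonneg fun m => norm_nonneg _)) (hkey N y)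
    have hsub : Summable fun x : F ⁻¹' {y} =>
        (ind x.1 : ℝ) * ‖∑' m, ψ m x.1‖
          - (ind x.1 : ℝ) * ‖∑ m ∈ Finset.range N, ψ m x.1‖ := ha.sub hb
    have habsle : ∀ x : F ⁻¹' {y},
        |(ind x.1 : ℝ) * ‖∑' m, ψ m x.1‖
          - (ind x.1 : ℝ) * ‖∑ m ∈ Finset.range N, ψ m x.1‖|
        ≤ (ind x.1 : ℝ) * (∑' m, ‖ψ (m + N) x.1‖) := by
      intro x
      rw [← mul_sub, abs_mul, abs_of_nonneg (Nat.cast_nonneg (ind x.1) : (0:ℝ) ≤ (ind x.1 : ℝ))]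
      apply mul_le_mul_of_nonneg_left _ (Nat.cast_nonneg _)
      exact le_trans (abs_norm_sub_norm_le _ _) (hTx N x.1)
    have h1 : transferAbs F ind (fun x => ∑' m, ψ m x) y
        - transferAbs F ind (fun x => ∑ m ∈ Finset.range N, ψ m x) y
        = ∑' x : F ⁻¹' {y}, ((ind x.1 : ℝ) * ‖∑' m, ψ m x.1‖
          - (ind x.1 : ℝ) * ‖∑ m ∈ Finset.range N, ψ m x.1‖) := (Summable.tsum_sub ha hb).symm
    rw [h1]
    calc |∑' x : F ⁻¹' {y}, ((ind x.1 : ℝ) * ‖∑' m, ψ m x.1‖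
          - (ind x.1 : ℝ) * ‖∑ m ∈ Finset.range N, ψ m x.1‖)|
        ≤ ∑' x : F ⁻¹' {y}, |(ind x.1 : ℝ) * ‖∑' m, ψ m x.1‖
          - (ind x.1 : ℝ) * ‖∑ m ∈ Finset.range N, ψ m x.1‖| := by
          simpa [Real.norm_eq_abs] using norm_tsum_le_tsum_norm
            (f := fun x : F ⁻¹' {y} => (ind x.1 : ℝ) * ‖∑' m, ψ m x.1‖
              - (ind x.1 : ℝ) * ‖∑ m ∈ Finset.range N, ψ m x.1‖)
            (by simpa [Real.norm_eq_abs] using hsub.abs)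
      _ ≤ ∑' x : F ⁻¹' {y}, (ind x.1 : ℝ) * (∑' m, ‖ψ (m + N) x.1‖) :=
          Summable.tsum_le_tsum habsle hsub.abs hd_sum
      _ ≤ ∑' m, c (m + N) := Summable.tsum_le_of_sum_le hd_sum (hkey N y)
  have hsumh : ∀ (N : ℕ) (y : Y), Summable fun x : F ⁻¹' {y} =>
      (ind x.1 : ℝ) * ∑ m ∈ Finset.range N, ‖ψ m x.1‖ := by
    intro N y
    have heq : (fun x : F ⁻¹' {y} => (ind x.1 : ℝ) * ∑ m ∈ Finset.range N, ‖ψ m x.1‖)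
        = fun x : F ⁻¹' {y} => ∑ m ∈ Finset.range N, (ind x.1 : ℝ) * ‖ψ m x.1‖ :=
      funext fun x => Finset.mul_sum _ _ _
    rw [heq]
    exact summable_sum fun m _ => (hψ m).2.2.1 y
  have hSid : ∀ N : ℕ, (fun y => ∑' x : F ⁻¹' {y},
      (ind x.1 : ℝ) * ∑ m ∈ Finset.range N, ‖ψ m x.1‖)
      = fun y => ∑ m ∈ Finset.range N, transferAbs F ind (ψ m) y := by
    intro N; funext y
    rw [show (fun x : F ⁻¹' {y} => (ind x.1 : ℝ) * ∑ m ∈ Finset.range N, ‖ψ m x.1‖)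
      = fun x : F ⁻¹' {y} => ∑ m ∈ Finset.range N, (ind x.1 : ℝ) * ‖ψ m x.1‖
      from funext fun x => Finset.mul_sum _ _ _]
    exact Summable.tsum_finsetSum (fun m _ => (hψ m).2.2.1 y)
  have hScont : ∀ N : ℕ, Continuous
      (transferAbs F ind (fun x => ∑ m ∈ Finset.range N, ψ m x)) := by
    intro N
    show Continuous fun y => ∑' x : F ⁻¹' {y},
      (ind x.1 : ℝ) * ‖∑ m ∈ Finset.range N, ψ m x.1‖
    apply transfer_cont hF
      (φ := fun x => ‖∑ m ∈ Finset.range N, ψ m x‖)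
      (h := fun x => ∑ m ∈ Finset.range N, ‖ψ m x‖)
    · exact continuous_norm.comp (continuous_finset_sum _ fun m _ => (hψ m).1)
    · exact fun x => norm_nonneg _
    · exact fun x => norm_sum_le _ _
    · exact continuous_finset_sum _ fun m _ => continuous_norm.comp (hψ m).1
    · exact fun y => (hfib 0 _ (habs_S N) y).1
    · exact fun y => hsumh N y
    · rw [hSid N]
      exact continuous_finset_sum _ fun m _ => (hψ m).2.2.2.1
  have htail : Tendsto (fun N => ∑' m, c (m + N)) atTop (𝓝 0) := tendsto_sum_nat_add c
  have hTUΦ : TendstoUniformly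
      (fun N y => transferAbs F ind (fun x => ∑ m ∈ Finset.range N, ψ m x) y)
      (transferAbs F ind (fun x => ∑' m, ψ m x)) atTop := by
    rw [Metric.tendstoUniformly_iff]
    intro ε hε
    filter_upwards [htail.eventually_lt_const hε] with N hN y
    rw [Real.dist_eq]
    exact lt_of_le_of_lt (hdiff N y) hN
  have hgΦc : Continuous (transferAbs F ind (fun x => ∑' m, ψ m x)) :=
    hTUΦ.continuous (Eventually.of_forall hScont).frequently
  have hTU : TendstoUniformly (fun N x => ∑ m ∈ Finset.range N, ψ m x)
      (fun x => ∑' m, ψ m x) atTop :=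
    tendstoUniformly_tsum_nat hc (fun m x => by simpa using habs m x)
  have hgc : Continuous fun x => ∑' m, ψ m x :=
    hTU.continuous (Eventually.of_forall fun N => continuous_finset_sum _ fun m _ => (hψ m).1).frequently
  have hg0 : Tendsto (fun x => ∑' m, ψ m x) (cocompact X) (𝓝 0) := by
    rw [Metric.tendsto_nhds]
    intro ε hε
    obtain ⟨N, hN⟩ := (htail.eventually_lt_const (show (0:ℝ) < ε/2 by positivity)).exists
    have ht : Tendsto (fun x => ∑ m ∈ Finset.range N, ‖ψ m x‖) (cocompact X) (𝓝 0) := by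
      have h0 : ∀ m, Tendsto (fun x => ‖ψ m x‖) (cocompact X) (𝓝 0) := by
        intro m
        have := (continuous_norm.tendsto 0).comp (hψ m).2.1
        simpa [Function.comp_def] using this
      have := tendsto_finset_sum (Finset.range N) (fun m _ => h0 m)
      simpa using this
    filter_upwards [ht.eventually_lt_const (show (0:ℝ) < ε/2 by positivity)] with x hx
    rw [Complex.dist_eq, sub_zero]
    have h1 : (∑' m, ‖ψ (m + N) x‖) ≤ ∑' m, c (m + N) :=
      Summable.tsum_le_tsum (fun m => habs (m + N) x) ((summable_nat_add_iff N).2 (hsummM x))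
        ((summable_nat_add_iff N).2 hc)
    have h2 : ‖∑' m, ψ m x‖
        ≤ ‖(∑' m, ψ m x) - ∑ m ∈ Finset.range N, ψ m x‖
          + ‖∑ m ∈ Finset.range N, ψ m x‖ := by
      have := norm_add_le ((∑' m, ψ m x) - ∑ m ∈ Finset.range N, ψ m x)
        (∑ m ∈ Finset.range N, ψ m x)
      simpa using this
    have h3 := norm_sum_le (Finset.range N) (fun m => ψ m x)
    linarith [hTx N x, hx, hN, h1, h2, h3]
  have hΦg0 : Tendsto (transferAbs F ind (fun x => ∑' m, ψ m x)) (cocompact Y) (𝓝 0) := by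
    rw [Metric.tendsto_nhds]
    intro ε hε
    obtain ⟨N, hN⟩ := (htail.eventually_lt_const (show (0:ℝ) < ε/2 by positivity)).exists
    have ht : Tendsto (fun y => ∑ m ∈ Finset.range N, transferAbs F ind (ψ m) y)
        (cocompact Y) (𝓝 0) := by
      have := tendsto_finset_sum (Finset.range N) (fun m _ => (hψ m).2.2.2.2)
      simpa using this
    filter_upwards [ht.eventually_lt_const (show (0:ℝ) < ε/2 by positivity)] with y hy
    rw [Real.dist_eq, sub_zero]
    have hnn : 0 ≤ transferAbs F ind (fun x => ∑' m, ψ m x) y :=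
      tsum_nonneg fun x => mul_nonneg (Nat.cast_nonneg _) (norm_nonneg _)
    rw [abs_of_nonneg hnn]
    have hSle : transferAbs F ind (fun x => ∑ m ∈ Finset.range N, ψ m x) y
        ≤ ∑ m ∈ Finset.range N, transferAbs F ind (ψ m) y := by
      rw [← congrFun (hSid N) y]
      apply Summable.tsum_le_tsum _ (hfib 0 _ (habs_S N) y).1 (hsumh N y)
      intro x
      exact mul_le_mul_of_nonneg_left (norm_sum_le _ _) (Nat.cast_nonneg _)
    have hd := (abs_le.1 (hdiff N y)).2
    linarith [hy, hN, hd, hSle]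
  exact ⟨fun x => ∑' m, ψ m x, hTU, hgc, hg0, fun y => (hfib 0 _ habs_g y).1, hgΦc, hΦg0⟩
end

section
/- Let F : X → Y be a branched function with transfer operator Φ. If (ψ_m)_{m∈ℕ} is a sequence in C₂(X) with ∑_{m} ‖ψ_m‖₂ < ∞, where ‖ψ‖₂ := ‖Φ(|ψ|²)‖_∞^{1/2}, then the series ∑_{m} ψ_m converges uniformly on X to a function ψ ∈ C₀(X), and ψ ∈ C₂(X). (In other words, C₂(X) is complete with respect to the norm ‖·‖₂.) -/
open Filter Topology
open scoped ENNReal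

/-- The transfer operator applied to `|f|²`:
`Φ(|f|²)(y) = ∑_{x ∈ F⁻¹(y)} ind_F(x)·|f(x)|²`. -/
noncomputable def transferSq {X Y : Type*} (F : X → Y) (ind : X → ℕ) (f : X → ℂ) (y : Y) : ℝ :=
  ∑' x : F ⁻¹' {y}, (ind x.1 : ℝ) * ‖f x.1‖ ^ 2

/-- Membership in `C₂(X)`: `ψ ∈ C₀(X)` and `Φ(|ψ|²)` is everywhere finite and lies in
`C₀(Y)`. -/
def MemC2 {X Y : Type*} [TopologicalSpace X] [TopologicalSpace Y]
    (F : X → Y) (ind : X → ℕ) (ψ : X → ℂ) : Prop :=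
  Continuous ψ ∧ Tendsto ψ (cocompact X) (nhds 0) ∧
  (∀ y : Y, Summable fun x : F ⁻¹' {y} => (ind x.1 : ℝ) * ‖ψ x.1‖ ^ 2) ∧
  Continuous (transferSq F ind ψ) ∧
  Tendsto (transferSq F ind ψ) (cocompact Y) (nhds 0)

lemma branch_sum {X Y : Type*} [TopologicalSpace X] [TopologicalSpace Y] [DecidableEq X]
    {F : X → Y} {ind : X → ℕ} {x₀ : X} {U : Set X} {V : Set Y} {g : Fin (ind x₀) → Y → X}
    (hgU : ∀ i, ∀ v ∈ V, g i v ∈ U)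
    (hgF : ∀ i, ∀ v ∈ V, F (g i v) = v)
    (hind : ∀ u ∈ U, ind u = Nat.card {i : Fin (ind x₀) // u ∈ g i '' V})
    (f : X → ℝ) {v : Y} (hv : v ∈ V) :
    ∑ i : Fin (ind x₀), f (g i v)
      = ∑ u ∈ Finset.image (fun i => g i v) Finset.univ, (ind u : ℝ) * f u := by
  classical
  rw [Finset.sum_comp]
  refine Finset.sum_congr rfl fun u hu => ?_
  rw [Finset.mem_image] at hu
  obtain ⟨j, -, hj⟩ := hu
  have hu_mem : u ∈ U := hj ▸ hgU j v hv
  have hFu : F u = v := hj ▸ hgF j v hv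
  have hsets : ∀ i : Fin (ind x₀), (u ∈ g i '' V) ↔ g i v = u := by
    intro i
    constructor
    · rintro ⟨v', hv', rfl⟩
      have : v' = v := by rw [← hgF i v' hv']; exact hFu
      rw [this]
    · rintro rfl
      exact ⟨v, hv, rfl⟩
  have hcard : ind u = (Finset.univ.filter fun i => g i v = u).card := by
    rw [hind u hu_mem, Nat.card_eq_fintype_card]
    rw [Fintype.card_subtype]
    congr 1
    exact Finset.filter_congr fun i _ => by simp [hsets i]
  rw [nsmul_eq_mul]
  congr 1
  rw [hcard]

lemma transfer_continuousAt {X Y : Type*} [TopologicalSpace X] [T2Space X] [TopologicalSpace Y]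
    {F : X → Y} {ind : X → ℕ} (hF : IsBranched F ind)
    {h k : X → ℝ} (hh : Continuous h) (hk : Continuous k)
    (h0 : ∀ x, 0 ≤ h x) (hhk : ∀ x, h x ≤ k x)
    (hsumh : ∀ y, Summable fun x : F ⁻¹' {y} => (ind x.1 : ℝ) * h x.1)
    (hsumk : ∀ y, Summable fun x : F ⁻¹' {y} => (ind x.1 : ℝ) * k x.1)
    (hkc : Continuous fun y => ∑' x : F ⁻¹' {y}, (ind x.1 : ℝ) * k x.1)
    (y₀ : Y) :
    ContinuousAt (fun y => ∑' x : F ⁻¹' {y}, (ind x.1 : ℝ) * h x.1) y₀ := by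
  classical
  set Φh := fun y => ∑' x : F ⁻¹' {y}, (ind x.1 : ℝ) * h x.1 with hΦh
  set Φk := fun y => ∑' x : F ⁻¹' {y}, (ind x.1 : ℝ) * k x.1 with hΦk
  rw [ContinuousAt, Metric.tendsto_nhds]
  intro ε hε
  obtain ⟨hFc, hind1, hbr⟩ := hF
  choose U V g hUo hxU hVo hFV hgU hgF hgx hgc hUeq hind using hbr
  have hY0 : ∀ x : F ⁻¹' {y₀}, F x.1 = y₀ := fun x => x.2
  -- choose the finite set T of fiber points carrying most of the mass of k
  obtain ⟨T, hTs⟩ : ∃ T : Finset (F ⁻¹' {y₀}),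
      Φk y₀ - ε/4 < ∑ x ∈ T, (ind x.1 : ℝ) * k x.1 :=
    ((hsumk y₀).hasSum.eventually
      (eventually_gt_nhds (by linarith : Φk y₀ - ε/4 < Φk y₀))).exists
  -- pairwise disjoint neighbourhoods of the points of T
  obtain ⟨W, hW, hWd⟩ := (T.finite_toSet.image Subtype.val).t2_separation
  -- the "good" set of points v near y₀
  set good : Y → Prop := fun v => ∀ x ∈ T, v ∈ V x.1 ∧ ∀ i, g x.1 i v ∈ W x.1 with hgood
  have hy₀V : ∀ x : F ⁻¹' {y₀}, y₀ ∈ V x.1 := by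
    intro x; have := hFV x.1; rwa [hY0 x] at this
  have hgy₀ : ∀ (x : F ⁻¹' {y₀}) (i : Fin (ind x.1)), g x.1 i y₀ = x.1 := by
    intro x i; have := hgx x.1 i; rwa [hY0 x] at this
  have hy₀good : good y₀ := by
    intro x hx
    refine ⟨hy₀V x, fun i => ?_⟩
    rw [hgy₀ x i]
    exact (hW x.1).1
  have hNev : ∀ᶠ v in 𝓝 y₀, good v := by
    rw [hgood, Finset.eventually_all]
    intro x hx
    have h1 : ∀ᶠ v in 𝓝 y₀, v ∈ V x.1 := (hVo x.1).mem_nhds (hy₀V x)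
    have h2 : ∀ᶠ v in 𝓝 y₀, ∀ i, g x.1 i v ∈ W x.1 := by
      rw [eventually_all]
      intro i
      have hca : ContinuousAt (g x.1 i) y₀ := by
        have := (hgc x.1 i).continuousAt ((hVo x.1).mem_nhds (hFV x.1))
        rwa [hY0 x] at this
      have hWx : W x.1 ∈ 𝓝 (g x.1 i y₀) := by
        rw [hgy₀ x i]; exact (hW x.1).2.mem_nhds (hW x.1).1
      exact hca hWx
    exact h1.and h2
  -- the approximating finite sums
  set A : (X → ℝ) → Y → ℝ := fun f v => ∑ x ∈ T, ∑ i : Fin (ind x.1), f (g x.1 i v) with hA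
  have hAy₀ : ∀ f : X → ℝ, A f y₀ = ∑ x ∈ T, (ind x.1 : ℝ) * f x.1 := by
    intro f
    refine Finset.sum_congr rfl fun x hx => ?_
    rw [Finset.sum_congr rfl fun (i : Fin (ind x.1)) _ => by rw [hgy₀ x i],
      Finset.sum_const, Finset.card_univ, Fintype.card_fin, nsmul_eq_mul]
  have hAt : ∀ f : X → ℝ, Continuous f → Tendsto (A f) (𝓝 y₀) (𝓝 (A f y₀)) := by
    intro f hf
    refine tendsto_finset_sum _ fun x hx => tendsto_finset_sum _ fun i _ => ?_
    have hca : ContinuousAt (g x.1 i) y₀ := by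
      have := (hgc x.1 i).continuousAt ((hVo x.1).mem_nhds (hFV x.1))
      rwa [hY0 x] at this
    exact hf.continuousAt.comp hca
  -- decomposition of the transfer sums over good points
  have hdec : ∀ v, good v →
      0 ≤ Φh v - A h v ∧ 0 ≤ Φk v - A k v ∧ Φh v - A h v ≤ Φk v - A k v := by
    intro v hv
    set D : Finset X := T.biUnion (fun x => Finset.image (fun i => g x.1 i v) Finset.univ)
      with hD
    have hDv : ∀ u ∈ D, u ∈ F ⁻¹' {v} := by
      intro u hu
      simp only [hD, Finset.mem_biUnion, Finset.mem_image, Finset.mem_univ, true_and] at hu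
      obtain ⟨x, hx, i, rfl⟩ := hu
      simp [hgF x.1 i v (hv x hx).1]
    set s : Finset (F ⁻¹' {v}) := D.subtype _ with hs
    have key : ∀ f : X → ℝ, ∑ u ∈ s, (ind u.1 : ℝ) * f u.1 = A f v := by
      intro f
      refine (Finset.sum_subtype_of_mem (fun u => (ind u : ℝ) * f u) hDv).trans ?_
      rw [hD]
      have hdisj : (↑T : Set (F ⁻¹' {y₀})).PairwiseDisjoint
          (fun x => Finset.image (fun i => g x.1 i v) Finset.univ) := by
        intro x hx x' hx' hne
        simp only [Function.onFun]
        rw [Finset.disjoint_left]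
        intro u hu hu'
        simp only [Finset.mem_image, Finset.mem_univ, true_and] at hu hu'
        obtain ⟨i, rfl⟩ := hu
        have hxW : g x.1 i v ∈ W x.1 := (hv x hx).2 i
        have hx'W : g x.1 i v ∈ W x'.1 := by
          obtain ⟨i', hi'⟩ := hu'
          rw [← hi']; exact (hv x' hx').2 i'
        have hne' : x.1 ≠ x'.1 := fun hh => hne (Subtype.ext hh)
        exact Set.disjoint_left.mp
          (hWd (Set.mem_image_of_mem _ hx) (Set.mem_image_of_mem _ hx') hne') hxW hx'W
      rw [Finset.sum_biUnion hdisj]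
      exact Finset.sum_congr rfl fun x hx =>
        (branch_sum (hgU x.1) (hgF x.1) (hind x.1) f (hv x hx).1).symm
    have hcompl : ∀ f : X → ℝ, (Summable fun x : F ⁻¹' {v} => (ind x.1 : ℝ) * f x.1) →
        (∑' x : F ⁻¹' {v}, (ind x.1 : ℝ) * f x.1) - A f v
          = ∑' u : ↑((↑s : Set (F ⁻¹' {v}))ᶜ), (ind u.1.1 : ℝ) * f u.1.1 := by
      intro f hf
      have h1 := Summable.sum_add_tsum_compl (s := s) hf
      rw [← key f]
      linarith [h1]
    have hsub : ∀ f : X → ℝ, (Summable fun x : F ⁻¹' {v} => (ind x.1 : ℝ) * f x.1) →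
        Summable fun u : ↑((↑s : Set (F ⁻¹' {v}))ᶜ) => (ind u.1.1 : ℝ) * f u.1.1 :=
      fun f hf => hf.subtype _
    have h0' : 0 ≤ Φh v - A h v := by
      rw [hcompl h (hsumh v)]
      exact tsum_nonneg fun u => mul_nonneg (Nat.cast_nonneg _) (h0 _)
    have hk' : Φh v - A h v ≤ Φk v - A k v := by
      rw [hcompl h (hsumh v), hcompl k (hsumk v)]
      exact Summable.tsum_le_tsum (fun u => mul_le_mul_of_nonneg_left (hhk _) (Nat.cast_nonneg _))
        (hsub h (hsumh v)) (hsub k (hsumk v))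
    exact ⟨h0', le_trans h0' hk', hk'⟩
  -- putting everything together
  have hky₀ : Φk y₀ - A k y₀ < ε/4 := by rw [hAy₀ k]; linarith
  have e2 : ∀ᶠ v in 𝓝 y₀, |A h v - A h y₀| < ε/4 := by
    have := Metric.tendsto_nhds.mp (hAt h hh) (ε/4) (by positivity)
    simpa [Real.dist_eq] using this
  have e3 : ∀ᶠ v in 𝓝 y₀, |Φk v - Φk y₀| < ε/8 := by
    have := Metric.tendsto_nhds.mp (hkc.tendsto y₀) (ε/8) (by positivity)
    simpa [Real.dist_eq] using this
  have e4 : ∀ᶠ v in 𝓝 y₀, |A k v - A k y₀| < ε/8 := by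
    have := Metric.tendsto_nhds.mp (hAt k hk) (ε/8) (by positivity)
    simpa [Real.dist_eq] using this
  filter_upwards [hNev, e2, e3, e4] with v hv h2 h3 h4
  rw [Real.dist_eq]
  obtain ⟨p1, p2, p3⟩ := hdec v hv
  obtain ⟨q1, q2, q3⟩ := hdec y₀ hy₀good
  rw [abs_sub_lt_iff] at h2 h3 h4 ⊢
  obtain ⟨h2a, h2b⟩ := h2
  obtain ⟨h3a, h3b⟩ := h3
  obtain ⟨h4a, h4b⟩ := h4
  constructor <;> nlinarith [p3, q3, p1, q1, p2, q2]

lemma memC2_add {X Y : Type*} [TopologicalSpace X] [T2Space X] [TopologicalSpace Y]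
    {F : X → Y} {ind : X → ℕ} (hF : IsBranched F ind) {ψ φ : X → ℂ}
    (hψ : MemC2 F ind ψ) (hφ : MemC2 F ind φ) :
    MemC2 F ind (fun x => ψ x + φ x) := by
  obtain ⟨hψc, hψ0, hψs, hψtc, hψt0⟩ := hψ
  obtain ⟨hφc, hφ0, hφs, hφtc, hφt0⟩ := hφ
  set h : X → ℝ := fun x => ‖ψ x + φ x‖ ^ 2 with hh'
  set k : X → ℝ := fun x => 2 * ‖ψ x‖ ^ 2 + 2 * ‖φ x‖ ^ 2 with hk'
  have hhc : Continuous h := (continuous_norm.comp (hψc.add hφc)).pow 2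
  have hkc : Continuous k :=
    ((continuous_const.mul ((continuous_norm.comp hψc).pow 2)).add
      (continuous_const.mul ((continuous_norm.comp hφc).pow 2)))
  have h0 : ∀ x, 0 ≤ h x := fun x => sq_nonneg _
  have hhk : ∀ x, h x ≤ k x := by
    intro x
    have ht := norm_add_le (ψ x) (φ x)
    have := norm_nonneg (ψ x)
    have := norm_nonneg (φ x)
    have := norm_nonneg (ψ x + φ x)
    simp only [hh', hk']
    nlinarith [sq_nonneg (‖ψ x‖ - ‖φ x‖), mul_self_le_mul_self (norm_nonneg (ψ x + φ x)) ht]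
  have hsumk : ∀ y, Summable fun x : F ⁻¹' {y} => (ind x.1 : ℝ) * k x.1 := by
    intro y
    refine (((hψs y).mul_left 2).add ((hφs y).mul_left 2)).congr fun x => ?_
    simp only [hk']; ring
  have hsumh : ∀ y, Summable fun x : F ⁻¹' {y} => (ind x.1 : ℝ) * h x.1 :=
    fun y => (hsumk y).of_nonneg_of_le (fun x => mul_nonneg (Nat.cast_nonneg _) (h0 _))
      (fun x => mul_le_mul_of_nonneg_left (hhk _) (Nat.cast_nonneg _))
  have hΦk_eq : (fun y => ∑' x : F ⁻¹' {y}, (ind x.1 : ℝ) * k x.1)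
      = fun y => 2 * transferSq F ind ψ y + 2 * transferSq F ind φ y := by
    funext y
    have e1 : (fun x : F ⁻¹' {y} => (ind x.1 : ℝ) * k x.1)
        = fun x => 2 * ((ind x.1 : ℝ) * ‖ψ x.1‖ ^ 2)
            + 2 * ((ind x.1 : ℝ) * ‖φ x.1‖ ^ 2) := by
      funext x; simp only [hk']; ring
    rw [e1, Summable.tsum_add ((hψs y).mul_left 2) ((hφs y).mul_left 2), tsum_mul_left, tsum_mul_left]
    rfl
  have hΦkc : Continuous (fun y => ∑' x : F ⁻¹' {y}, (ind x.1 : ℝ) * k x.1) := by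
    rw [hΦk_eq]
    exact (continuous_const.mul hψtc).add (continuous_const.mul hφtc)
  have hle : ∀ y, transferSq F ind (fun x => ψ x + φ x) y
      ≤ ∑' x : F ⁻¹' {y}, (ind x.1 : ℝ) * k x.1 := by
    intro y
    exact Summable.tsum_le_tsum (fun x => mul_le_mul_of_nonneg_left (hhk _) (Nat.cast_nonneg _))
      (hsumh y) (hsumk y)
  refine ⟨hψc.add hφc, by simpa using hψ0.add hφ0, hsumh, ?_, ?_⟩
  · exact continuous_iff_continuousAt.mpr
      (fun y₀ => transfer_continuousAt hF hhc hkc h0 hhk hsumh hsumk hΦkc y₀)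
  · refine squeeze_zero (fun y => tsum_nonneg fun x => mul_nonneg (Nat.cast_nonneg _) (h0 _))
      hle ?_
    rw [hΦk_eq]
    have := (hψt0.const_mul 2).add (hφt0.const_mul 2)
    simpa using this

lemma memC2_zero {X Y : Type*} [TopologicalSpace X] [TopologicalSpace Y]
    (F : X → Y) (ind : X → ℕ) : MemC2 F ind (fun _ => 0) := by
  have hts : transferSq F ind (fun _ => 0) = fun _ => 0 := by
    funext y; simp [transferSq]
  exact ⟨continuous_const, tendsto_const_nhds, fun y => by simpa using summable_zero,
    by rw [hts]; exact continuous_const, by rw [hts]; exact tendsto_const_nhds⟩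

lemma memC2_finsum {X Y : Type*} [TopologicalSpace X] [T2Space X] [TopologicalSpace Y]
    {F : X → Y} {ind : X → ℕ} (hF : IsBranched F ind) {ψ : ℕ → X → ℂ}
    (hψ : ∀ m, MemC2 F ind (ψ m)) (N : ℕ) :
    MemC2 F ind (fun x => ∑ m ∈ Finset.range N, ψ m x) := by
  induction N with
  | zero => simpa using memC2_zero F ind
  | succ n ih =>
      have := memC2_add hF ih (hψ n)
      simpa [Finset.sum_range_succ] using this

noncomputable def evalCLM {ι : Type*} (x : ι) : lp (fun _ : ι => ℂ) 2 →L[ℂ] ℂ :=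
  LinearMap.mkContinuous
    { toFun := fun f => f x
      map_add' := fun f g => by simpa using congrFun (lp.coeFn_add f g) x
      map_smul' := fun c f => by simpa using congrFun (lp.coeFn_smul c f) x }
    1 (fun f => by
      rw [one_mul]; exact lp.norm_apply_le_norm (by norm_num : (2 : ℝ≥0∞) ≠ 0) f x)

@[simp] lemma evalCLM_apply {ι : Type*} (x : ι) (f : lp (fun _ : ι => ℂ) 2) :
    evalCLM x f = f x := rfl

lemma lp_norm_sq {ι : Type*} (V : lp (fun _ : ι => ℂ) 2) : ‖V‖ ^ 2 = ∑' i, ‖V i‖ ^ 2 := by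
  have h := lp.norm_rpow_eq_tsum (p := 2) (by norm_num) V
  simpa [Real.rpow_two] using h

lemma norm_sqrt_ind_mul (n : ℕ) (z : ℂ) :
    ‖(Real.sqrt n : ℂ) * z‖ ^ 2 = (n : ℝ) * ‖z‖ ^ 2 := by
  rw [norm_mul, mul_pow, Complex.norm_real, Real.norm_eq_abs,
    abs_of_nonneg (Real.sqrt_nonneg _), Real.sq_sqrt (Nat.cast_nonneg n)]

/-- **Completeness of `C₂(X)` (Proposition 5.5 of the paper).** If `(ψ_m)` is a
sequence in `C₂(X)` with `∑_m ‖ψ_m‖₂ < ∞`, where `‖ψ‖₂ = ‖Φ(|ψ|²)‖_∞^{1/2}`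
(witnessed by a summable sequence of bounds `c m ≥ 0` with `Φ(|ψ_m|²) ≤ (c m)²`),
then `∑_m ψ_m` converges uniformly on `X` to a function `g ∈ C₀(X)`, and `g ∈ C₂(X)`. -/
theorem c2_complete {X Y : Type*}
    [TopologicalSpace X] [T2Space X] [LocallyCompactSpace X]
    [TopologicalSpace Y] [T2Space Y] [LocallyCompactSpace Y]
    (F : X → Y) (ind : X → ℕ) (hF : IsBranched F ind)
    (ψ : ℕ → X → ℂ) (hψ : ∀ m, MemC2 F ind (ψ m))
    (c : ℕ → ℝ) (hcpos : ∀ m, 0 ≤ c m) (hc : Summable c)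
    (hbound : ∀ m y, transferSq F ind (ψ m) y ≤ c m ^ 2) :
    ∃ g : X → ℂ,
      TendstoUniformly (fun N x => ∑ m ∈ Finset.range N, ψ m x) g atTop ∧
      MemC2 F ind g := by
  classical
  haveI : Fact ((1 : ℝ≥0∞) ≤ 2) := fact_one_le_two_ennreal
  -- the pointwise bound ‖ψ m x‖ ≤ c m
  have habs : ∀ m x, ‖ψ m x‖ ≤ c m := by
    intro m x
    have hsm := (hψ m).2.2.1 (F x)
    have hterm : (ind x : ℝ) * ‖ψ m x‖ ^ 2 ≤ transferSq F ind (ψ m) (F x) :=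
      Summable.le_tsum hsm ⟨x, rfl⟩ fun b _ => mul_nonneg (Nat.cast_nonneg _) (sq_nonneg _)
    have h1 : (1 : ℝ) ≤ (ind x : ℝ) := by exact_mod_cast hF.2.1 x
    have h2 := hbound m (F x)
    nlinarith [norm_nonneg (ψ m x), hcpos m, sq_nonneg (‖ψ m x‖)]
  have hgsum : ∀ x, Summable fun m => ψ m x := fun x =>
    Summable.of_norm (Summable.of_nonneg_of_le (fun m => norm_nonneg _) (fun m => habs m x) hc)
  set g : X → ℂ := fun x => ∑' m, ψ m x with hgdef
  have hTU : TendstoUniformly (fun N x => ∑ m ∈ Finset.range N, ψ m x) g atTop :=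
    tendstoUniformly_tsum_nat hc habs
  -- tail sums
  set tN : ℕ → ℝ := fun N => ∑' i, c (i + N) with htN
  have tailc : Tendsto tN atTop (𝓝 0) := tendsto_sum_nat_add c
  have htail_nonneg : ∀ N, 0 ≤ tN N := fun N => tsum_nonneg fun i => hcpos _
  have hsumc' : ∀ N, Summable fun i => c (i + N) := fun N => (summable_nat_add_iff N).2 hc
  -- uniform closeness of g to partial sums
  have hgdiff : ∀ (N : ℕ) x, ‖g x - ∑ m ∈ Finset.range N, ψ m x‖ ≤ tN N := by
    intro N x
    have hsplit := Summable.sum_add_tsum_nat_add (f := fun m => ψ m x) N (hgsum x)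
    have heq : g x - ∑ m ∈ Finset.range N, ψ m x = ∑' i, ψ (i + N) x := by
      rw [hgdef]; simp only [← hsplit]; ring
    have hsumn : Summable fun i => ‖ψ (i + N) x‖ :=
      Summable.of_nonneg_of_le (fun i => norm_nonneg _) (fun i => habs _ x) (hsumc' N)
    rw [heq]
    calc ‖∑' i, ψ (i + N) x‖ ≤ ∑' i, ‖ψ (i + N) x‖ := norm_tsum_le_tsum_norm hsumn
      _ ≤ tN N := Summable.tsum_le_tsum (fun i => habs _ x) hsumn (hsumc' N)
  -- C₀ properties of g
  have hgc : Continuous g :=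
    hTU.continuous (Eventually.of_forall fun N =>
      continuous_finset_sum _ fun m _ => (hψ m).1).frequently
  have hg0 : Tendsto g (cocompact X) (𝓝 0) := by
    rw [Metric.tendsto_nhds]
    intro ε hε
    obtain ⟨N, hN⟩ : ∃ N, tN N < ε / 2 :=
      (tailc.eventually (eventually_lt_nhds (by linarith : (0:ℝ) < ε / 2))).exists
    have hSN : Tendsto (fun x => ∑ m ∈ Finset.range N, ψ m x) (cocompact X) (𝓝 0) := by
      have := tendsto_finset_sum (Finset.range N) (fun m (_ : m ∈ Finset.range N) => (hψ m).2.1)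
      simpa using this
    filter_upwards [Metric.tendsto_nhds.mp hSN (ε/2) (by linarith)] with x hx
    rw [dist_zero_right] at hx ⊢
    have h1 := hgdiff N x
    have h2 : g x = (∑ m ∈ Finset.range N, ψ m x) + (g x - ∑ m ∈ Finset.range N, ψ m x) := by
      ring
    calc ‖g x‖ ≤ ‖∑ m ∈ Finset.range N, ψ m x‖ + ‖g x - ∑ m ∈ Finset.range N, ψ m x‖ := by
          rw [h2]; exact (norm_add_le _ _).trans (by simp)
      _ < ε / 2 + ε / 2 := by
          have := lt_of_le_of_lt h1 hN
          exact add_lt_add hx this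
      _ = ε := by ring
  -- the fiberwise ℓ² analysis
  have main : ∀ y : Y,
      (Summable fun x : F ⁻¹' {y} => (ind x.1 : ℝ) * ‖g x.1‖ ^ 2) ∧
      ∀ N, |Real.sqrt (transferSq F ind g y)
        - Real.sqrt (transferSq F ind (fun x => ∑ m ∈ Finset.range N, ψ m x) y)| ≤ tN N := by
    intro y
    set vec : (X → ℂ) → ∀ _x : F ⁻¹' {y}, ℂ :=
      fun f x => (Real.sqrt (ind x.1) : ℂ) * f x.1 with hvec
    have hvnorm : ∀ (f : X → ℂ) (x : F ⁻¹' {y}),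
        ‖vec f x‖ ^ 2 = (ind x.1 : ℝ) * ‖f x.1‖ ^ 2 :=
      fun f x => norm_sqrt_ind_mul _ _
    have hmem : ∀ f : X → ℂ,
        (Summable fun x : F ⁻¹' {y} => (ind x.1 : ℝ) * ‖f x.1‖ ^ 2) →
        Memℓp (vec f) 2 := by
      intro f hf
      apply memℓp_gen
      refine hf.congr fun x => ?_
      rw [show ((2:ℝ≥0∞)).toReal = (2:ℝ) from by norm_num, Real.rpow_two, hvnorm f x]
    have hlpnorm : ∀ (f : X → ℂ) (V : lp (fun _ : F ⁻¹' {y} => ℂ) 2), ⇑V = vec f →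
        transferSq F ind f y = ‖V‖ ^ 2 := by
      intro f V hV
      rw [lp_norm_sq V, transferSq]
      exact (tsum_congr fun x => by rw [hV, hvnorm f x]).symm
    set Vm : ℕ → lp (fun _ : F ⁻¹' {y} => ℂ) 2 :=
      fun m => ⟨vec (ψ m), hmem _ ((hψ m).2.2.1 y)⟩ with hVm
    have hVmnorm : ∀ m, ‖Vm m‖ ≤ c m := by
      intro m
      have h1 : transferSq F ind (ψ m) y = ‖Vm m‖ ^ 2 := hlpnorm (ψ m) (Vm m) rfl
      have h2 := hbound m y
      nlinarith [norm_nonneg (Vm m), hcpos m]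
    have hVs : Summable Vm :=
      Summable.of_norm (Summable.of_nonneg_of_le (fun m => norm_nonneg _) hVmnorm hc)
    set W : lp (fun _ : F ⁻¹' {y} => ℂ) 2 := ∑' m, Vm m with hW
    have hWsum : HasSum Vm W := hVs.hasSum
    have hWcoe : ⇑W = vec g := by
      funext x
      have h1 : HasSum (fun m => evalCLM x (Vm m)) (evalCLM x W) := hWsum.mapL (evalCLM x)
      have h2 : W x = ∑' m, vec (ψ m) x := by
        simpa using h1.tsum_eq.symm
      rw [h2, hvec]
      simp only
      rw [tsum_mul_left]
  -- summability of the fiber sums for g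
    have hgsummable : Summable fun x : F ⁻¹' {y} => (ind x.1 : ℝ) * ‖g x.1‖ ^ 2 := by
      have := (lp.memℓp W).summable (p := 2) (by norm_num)
      refine this.congr fun x => ?_
      rw [show ((2:ℝ≥0∞)).toReal = (2:ℝ) from by norm_num, Real.rpow_two, hWcoe, hvnorm g x]
    refine ⟨hgsummable, fun N => ?_⟩
    -- partial sums in lp
    set PN : lp (fun _ : F ⁻¹' {y} => ℂ) 2 := ∑ m ∈ Finset.range N, Vm m with hPN
    have hPNcoe : ⇑PN = vec (fun x => ∑ m ∈ Finset.range N, ψ m x) := by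
      funext x
      rw [hPN]
      have := lp.coeFn_sum (f := Vm) (s := Finset.range N)
      rw [this]
      simp only [Finset.sum_apply, hvec, Finset.mul_sum]
      exact Finset.sum_congr rfl fun m _ => rfl
    have hdiffnorm : ‖W - PN‖ ≤ tN N := by
      have hsplit := Summable.sum_add_tsum_nat_add (f := Vm) N hVs
      have heq : W - PN = ∑' i, Vm (i + N) := by
        rw [hW, hPN, ← hsplit]; abel
      have hsumn : Summable fun i => ‖Vm (i + N)‖ :=
        Summable.of_nonneg_of_le (fun i => norm_nonneg _) (fun i => hVmnorm _) (hsumc' N)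
      rw [heq]
      calc ‖∑' i, Vm (i + N)‖ ≤ ∑' i, ‖Vm (i + N)‖ := norm_tsum_le_tsum_norm hsumn
        _ ≤ tN N := Summable.tsum_le_tsum (fun i => hVmnorm _) hsumn (hsumc' N)
    have e1 : Real.sqrt (transferSq F ind g y) = ‖W‖ := by
      rw [hlpnorm g W hWcoe, Real.sqrt_sq (norm_nonneg W)]
    have e2 : Real.sqrt (transferSq F ind (fun x => ∑ m ∈ Finset.range N, ψ m x) y) = ‖PN‖ := by
      rw [hlpnorm _ PN hPNcoe, Real.sqrt_sq (norm_nonneg PN)]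
    rw [e1, e2]
    exact (abs_norm_sub_norm_le W PN).trans hdiffnorm
  -- assemble everything
  set nG : Y → ℝ := fun y => Real.sqrt (transferSq F ind g y) with hnG
  set nS : ℕ → Y → ℝ :=
    fun N y => Real.sqrt (transferSq F ind (fun x => ∑ m ∈ Finset.range N, ψ m x) y) with hnS
  have hSN2 : ∀ N, MemC2 F ind (fun x => ∑ m ∈ Finset.range N, ψ m x) := memC2_finsum hF hψ
  have hnSc : ∀ N, Continuous (nS N) := fun N => Real.continuous_sqrt.comp (hSN2 N).2.2.2.1
  have hTUn : TendstoUniformly nS nG atTop := by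
    rw [Metric.tendstoUniformly_iff]
    intro ε hε
    filter_upwards [tailc.eventually (eventually_lt_nhds hε)] with N hN y
    rw [Real.dist_eq]
    exact lt_of_le_of_lt ((main y).2 N) hN
  have hnGc : Continuous nG := hTUn.continuous (Eventually.of_forall hnSc).frequently
  have htseq : transferSq F ind g = fun y => nG y ^ 2 := by
    funext y
    show transferSq F ind g y = Real.sqrt (transferSq F ind g y) ^ 2
    have hnn : 0 ≤ transferSq F ind g y :=
      tsum_nonneg fun x => mul_nonneg (Nat.cast_nonneg _) (sq_nonneg _)
    exact (Real.sq_sqrt hnn).symm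
  have hnG0 : Tendsto nG (cocompact Y) (𝓝 0) := by
    rw [Metric.tendsto_nhds]
    intro ε hε
    obtain ⟨N, hN⟩ := (tailc.eventually (eventually_lt_nhds (half_pos hε))).exists
    have hsq0 : Tendsto Real.sqrt (𝓝 0) (𝓝 0) := by
      have := Real.continuous_sqrt.tendsto 0
      rwa [Real.sqrt_zero] at this
    have hS0 : Tendsto (nS N) (cocompact Y) (𝓝 0) := hsq0.comp (hSN2 N).2.2.2.2
    filter_upwards [Metric.tendsto_nhds.mp hS0 (ε/2) (half_pos hε)] with y hy
    rw [dist_zero_right, Real.norm_eq_abs, abs_of_nonneg (Real.sqrt_nonneg _)] at hy ⊢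
    have h3 := (main y).2 N
    rw [abs_sub_le_iff] at h3
    linarith [h3.1, htail_nonneg N]
  refine ⟨g, hTU, hgc, hg0, fun y => (main y).1, ?_, ?_⟩
  · rw [htseq]; exact hnGc.pow 2
  · rw [htseq]
    have hp2 : Tendsto (fun t : ℝ => t ^ 2) (𝓝 0) (𝓝 0) := by
      have := (continuous_pow 2).tendsto (0 : ℝ)
      simpa using this
    exact hp2.comp hnG0
end

section
/- Let F : X → Y be a branched function with transfer operator Φ. Then C_c(X) is dense in C₂(X) with respect to the norm ‖·‖₂: for every ψ ∈ C₂(X) and every ε > 0 there exists φ ∈ C_c(X) with ‖Φ(|ψ − φ|²)‖_∞^{1/2} ≤ ε. -/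
open Filter Topology

set_option linter.unusedSectionVars false

section Aux

variable {X Y : Type*} [TopologicalSpace X] [T2Space X]
  [TopologicalSpace Y] [T2Space Y]
  {F : X → Y} {ind : X → ℕ}

/-- Inside a branch neighbourhood `U` of `x`, the fiber of `F x` is just `{x}`. -/
lemma fiber_singleton_of_branchedAt {x : X} (h : BranchedAt F ind x) :
    ∃ U : Set X, IsOpen U ∧ x ∈ U ∧ ∀ u ∈ U, F u = F x → u = x := by
  obtain ⟨U, V, g, hU, hxU, _, _, _, hgF, hgFx, _, hUeq, _⟩ := h
  refine ⟨U, hU, hxU, fun u hu hFu => ?_⟩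
  rw [hUeq] at hu
  obtain ⟨_, ⟨i, rfl⟩, w, hw, rfl⟩ := hu
  rw [hgF i w hw] at hFu
  rw [hFu, hgFx i]

/-- Fibers intersected with compact sets are finite. -/
lemma fiber_inter_compact_finite (hF : IsBranched F ind) {C : Set X} (hC : IsCompact C)
    (y : Y) : (F ⁻¹' {y} ∩ C).Finite := by
  obtain ⟨hFc, _, hbr⟩ := hF
  set S : Set X := F ⁻¹' {y} ∩ C with hS
  have hScpt : IsCompact S := (hC.inter_left (isClosed_singleton.preimage hFc))
  choose! U hUo hxU hloc using fun x : X => fiber_singleton_of_branchedAt (hbr x)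
  have hcover : S ⊆ ⋃ x ∈ S, U x := fun z hz => Set.mem_biUnion hz (hxU z)
  obtain ⟨t, hts, htfin, hcov⟩ := hScpt.elim_finite_subcover_image (fun x _ => hUo x) hcover
  refine Set.Finite.subset htfin (fun z hz => ?_)
  obtain ⟨x, hxt, hzU⟩ := Set.mem_iUnion₂.1 (hcov hz)
  have hx : x ∈ S := hts hxt
  have : F z = F x := by
    rw [hz.1, hx.1]
  rwa [hloc x z hzU this]


/-- The transfer operator of a compactly supported continuous function:
fiberwise summability and the key local formula. -/
lemma transfer_cc (hF : IsBranched F ind) {k : X → ℝ} (hk : Continuous k)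
    (hks : HasCompactSupport k) :
    (∀ y : Y, Summable fun x : F ⁻¹' {y} => (ind x.1 : ℝ) * k x.1) ∧
    Continuous (fun y : Y => ∑' x : F ⁻¹' {y}, (ind x.1 : ℝ) * k x.1) := by
  classical
  obtain ⟨hFc, hpos, hbr⟩ := hF
  -- fiberwise summability
  have hfin : ∀ y : Y, (F ⁻¹' {y} ∩ tsupport k).Finite := fun y =>
    fiber_inter_compact_finite ⟨hFc, hpos, hbr⟩ hks y
  have hsummable : ∀ y : Y, Summable fun x : F ⁻¹' {y} => (ind x.1 : ℝ) * k x.1 := by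
    intro y
    apply summable_of_ne_finset_zero (s := (hfin y).toFinset.subtype (· ∈ F ⁻¹' {y}))
    intro u hu
    rw [Finset.mem_subtype, Set.Finite.mem_toFinset] at hu
    have hk0 : k u.1 = 0 := by
      by_contra h
      exact hu ⟨u.2, subset_tsupport k h⟩
    rw [hk0, mul_zero]
  refine ⟨hsummable, ?_⟩
  rw [continuous_iff_continuousAt]
  intro y
  -- branch data
  choose U V g hUo hxU hVo hFxV hgU hgF hgFx hgcont hUeq hind using hbr
  -- the finite fiber ∩ support
  set s : Finset X := (hfin y).toFinset with hs
  have hmem_s : ∀ x : X, x ∈ s ↔ F x = y ∧ x ∈ tsupport k := by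
    intro x
    rw [hs, Set.Finite.mem_toFinset]
    exact Iff.rfl
  -- disjoint open sets around the points of s
  obtain ⟨O, hO, hOdisj⟩ := (s.finite_toSet).t2_separation
  -- the neighbourhood conditions
  have hFx : ∀ x ∈ s, F x = y := fun x hx => ((hmem_s x).1 hx).1
  have hVy : ∀ x ∈ s, y ∈ V x := fun x hx => hFx x hx ▸ hFxV x
  -- the "bad" compact set
  set B : Set X := tsupport k \ ⋃ x ∈ s, U x with hB
  have hBcpt : IsCompact B :=
    hks.diff (isOpen_biUnion (fun x _ => hUo x))
  have hyB : y ∉ F '' B := by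
    rintro ⟨u, ⟨hu1, hu2⟩, hu3⟩
    exact hu2 (Set.mem_biUnion ((hmem_s u).2 ⟨hu3, hu1⟩) (hxU u))
  -- eventual conditions
  have hev : ∀ᶠ v in 𝓝 y, (∀ x ∈ s, v ∈ V x) ∧ v ∉ F '' B ∧
      (∀ x ∈ s, ∀ i : Fin (ind x), g x i v ∈ O x) := by
    refine Filter.Eventually.and ?_ (Filter.Eventually.and ?_ ?_)
    · rw [Filter.eventually_all_finset]
      intro x hx
      exact (hVo x).mem_nhds (hVy x hx)
    · have : IsClosed (F '' B) := (hBcpt.image hFc).isClosed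
      exact this.isOpen_compl.mem_nhds hyB
    · rw [Filter.eventually_all_finset]
      intro x hx
      rw [eventually_all]
      intro i
      have hnhds : 𝓝[V x] y = 𝓝 y := nhdsWithin_eq_nhds.2 ((hVo x).mem_nhds (hVy x hx))
      have := hgcont x i
      rw [hFx x hx] at this
      have htend : Tendsto (g x i) (𝓝 y) (𝓝 (g x i y)) := by
        rw [← hnhds]; exact this
      have hgO : g x i y ∈ O x := by
        have : g x i y = x := by rw [← hFx x hx, hgFx x i]
        rw [this]; exact (hO x).1
      exact htend (((hO x).2).mem_nhds hgO)
  -- the key local formula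
  have key : ∀ v : Y, (∀ x ∈ s, v ∈ V x) → v ∉ F '' B →
      (∀ x ∈ s, ∀ i : Fin (ind x), g x i v ∈ O x) →
      ∑' x : F ⁻¹' {v}, (ind x.1 : ℝ) * k x.1
        = ∑ x ∈ s, ∑ i : Fin (ind x), k (g x i v) := by
    intro v hvV hvB hvO
    set D : Finset X := s.biUnion (fun x => Finset.image (fun i => g x i v) Finset.univ) with hD
    have hmemD : ∀ u, u ∈ D ↔ ∃ x ∈ s, ∃ i : Fin (ind x), g x i v = u := by
      intro u; simp [hD]
    have hDfiber : ∀ u ∈ D, u ∈ F ⁻¹' {v} := by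
      intro u hu
      obtain ⟨x, hx, i, rfl⟩ := (hmemD u).1 hu
      exact hgF x i v (hvV x hx)
    have hzero : ∀ u : F ⁻¹' {v}, u ∉ D.subtype (· ∈ F ⁻¹' {v}) →
        (ind u.1 : ℝ) * k u.1 = 0 := by
      intro u hu
      rw [Finset.mem_subtype] at hu
      by_contra h
      have hk0 : k u.1 ≠ 0 := fun h0 => h (by rw [h0, mul_zero])
      have hsupp : u.1 ∈ tsupport k := subset_tsupport k hk0
      have hU : u.1 ∈ ⋃ x ∈ s, U x := by
        by_contra hnot
        exact hvB ⟨u.1, ⟨hsupp, hnot⟩, u.2⟩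
      obtain ⟨x, hx, hxin⟩ := Set.mem_iUnion₂.1 hU
      rw [hUeq x] at hxin
      obtain ⟨_, ⟨i, rfl⟩, w, hw, hwu⟩ := hxin
      have hwv : w = v := by
        rw [← hgF x i w hw, hwu]; exact u.2
      exact hu ((hmemD u.1).2 ⟨x, hx, i, by rw [← hwu, hwv]⟩)
    have hLHS : ∑' x : F ⁻¹' {v}, (ind x.1 : ℝ) * k x.1
        = ∑ u ∈ D, (ind u : ℝ) * k u := by
      rw [tsum_eq_sum hzero]
      exact Finset.sum_subtype_of_mem (fun u => (ind u : ℝ) * k u) hDfiber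
    have hRHS : ∀ x ∈ s, ∑ i : Fin (ind x), k (g x i v)
        = ∑ u ∈ Finset.image (fun i : Fin (ind x) => g x i v) Finset.univ,
            (ind u : ℝ) * k u := by
      intro x hx
      have hcomp := Finset.sum_comp (s := (Finset.univ : Finset (Fin (ind x))))
        (fun u : X => k u) (fun i : Fin (ind x) => g x i v)
      rw [hcomp]
      refine Finset.sum_congr rfl (fun u hu => ?_)
      obtain ⟨j, _, hj⟩ := Finset.mem_image.1 hu
      have hFu : F u = v := by rw [← hj]; exact hgF x j v (hvV x hx)
      have huU : u ∈ U x := by rw [← hj]; exact hgU x j v (hvV x hx)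
      have hiff : ∀ i : Fin (ind x), u ∈ g x i '' V x ↔ g x i v = u := by
        intro i
        constructor
        · rintro ⟨w, hw, hwu⟩
          have : w = v := by rw [← hgF x i w hw, hwu, hFu]
          rw [← hwu, this]
        · intro h
          exact ⟨v, hvV x hx, h⟩
      have hcard : ind u = (Finset.univ.filter (fun i : Fin (ind x) => g x i v = u)).card := by
        rw [hind x u huU, Nat.card_eq_fintype_card]
        rw [Fintype.card_subtype]
        congr 1
        apply Finset.filter_congr
        intro i _
        simp [hiff i]
      rw [← hcard, nsmul_eq_mul]
    have hdisj : (↑s : Set X).PairwiseDisjoint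
        (fun x => Finset.image (fun i : Fin (ind x) => g x i v) Finset.univ) := by
      intro a ha b hb hab
      refine Finset.disjoint_left.mpr ?_
      intro u hua hub
      obtain ⟨i, _, rfl⟩ := Finset.mem_image.1 hua
      obtain ⟨j, _, hj⟩ := Finset.mem_image.1 hub
      exact Set.disjoint_left.1 (hOdisj ha hb hab) (hvO a ha i) (hj ▸ hvO b hb j)
    rw [hLHS, hD, Finset.sum_biUnion hdisj]
    exact Finset.sum_congr rfl (fun x hx => (hRHS x hx).symm)
  -- eventual equality and continuity of the local model
  have heq : (fun v : Y => ∑' x : F ⁻¹' {v}, (ind x.1 : ℝ) * k x.1)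
      =ᶠ[𝓝 y] fun v => ∑ x ∈ s, ∑ i : Fin (ind x), k (g x i v) :=
    hev.mono (fun v hv => key v hv.1 hv.2.1 hv.2.2)
  have hTc : ContinuousAt (fun v => ∑ x ∈ s, ∑ i : Fin (ind x), k (g x i v)) y := by
    apply tendsto_finset_sum
    intro x hx
    apply tendsto_finset_sum
    intro i _
    have hgc : ContinuousAt (g x i) y := by
      have h := hgcont x i
      rw [hFx x hx] at h
      exact h.continuousAt ((hVo x).mem_nhds (hVy x hx))
    exact (hk.continuousAt.comp hgc :)
  exact hTc.congr heq.symm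


lemma hasCompactSupport_max {f g : X → ℝ} (hf : HasCompactSupport f)
    (hg : HasCompactSupport g) : HasCompactSupport (fun x => max (f x) (g x)) := by
  refine IsCompact.of_isClosed_subset (hf.union hg) isClosed_closure ?_
  have h1 : Function.support (fun x => max (f x) (g x)) ⊆
      Function.support f ∪ Function.support g := by
    intro x hx
    rw [Function.mem_support] at hx
    by_cases hfx : f x = 0
    · right
      intro hgx
      exact hx (by rw [hfx, hgx, max_self])
    · exact Or.inl hfx
  calc closure (Function.support fun x => max (f x) (g x))
      ⊆ closure (Function.support f ∪ Function.support g) := closure_mono h1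
    _ = tsupport f ∪ tsupport g := closure_union

lemma urysohn_finset [LocallyCompactSpace X] (E : Finset X) :
    ∃ h : X → ℝ, Continuous h ∧ HasCompactSupport h ∧ (∀ x, 0 ≤ h x ∧ h x ≤ 1) ∧
      ∀ x ∈ E, h x = 1 := by
  obtain ⟨f, hf1, _, hfc, hf01⟩ := exists_continuous_one_zero_of_isCompact
    (E.finite_toSet.isCompact) isClosed_empty (Set.disjoint_empty _)
  exact ⟨f, f.continuous, hfc, fun x => ⟨(hf01 x).1, (hf01 x).2⟩, fun x hx => hf1 hx⟩

end Aux

/-- **Density of `C_c(X)` in `C₂(X)` (Proposition 5.5 of the paper).** For every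
`ψ ∈ C₂(X)` and `ε > 0` there is `φ ∈ C_c(X)` with `‖ψ − φ‖₂ ≤ ε`, i.e.
`Φ(|ψ − φ|²)(y) ≤ ε²` for every `y` (with all the fiber sums convergent). -/
theorem cc_dense_in_c2 {X Y : Type*}
    [TopologicalSpace X] [T2Space X] [LocallyCompactSpace X]
    [TopologicalSpace Y] [T2Space Y] [LocallyCompactSpace Y]
    (F : X → Y) (ind : X → ℕ) (hF : IsBranched F ind)
    (ψ : X → ℂ) (hψ : MemC2 F ind ψ) :
    ∀ ε : ℝ, 0 < ε → ∃ φ : X → ℂ, Continuous φ ∧ HasCompactSupport φ ∧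
      ∀ y : Y,
        (Summable fun x : F ⁻¹' {y} => (ind x.1 : ℝ) * ‖ψ x.1 - φ x.1‖ ^ 2) ∧
        transferSq F ind (fun x => ψ x - φ x) y ≤ ε ^ 2 := by
  classical
  obtain ⟨hψc, hψ0, hsum, hΦc, hΦ0⟩ := hψ
  intro ε hε
  set a : X → ℝ := fun x => ‖ψ x‖ ^ 2 with ha
  have ha0 : ∀ x, 0 ≤ a x := fun x => sq_nonneg _
  have haC : Continuous a := (continuous_norm.comp hψc).pow 2
  have hε2 : (0:ℝ) < ε ^ 2 := by positivity
  -- compact set outside which Φ|ψ|² is small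
  obtain ⟨K, hKc, hK⟩ := mem_cocompact.1 (hΦ0 (Metric.ball_mem_nhds (0:ℝ) hε2))
  -- local step: a good compactly supported bump near each y
  have hstep : ∀ y : Y, ∃ h : X → ℝ, Continuous h ∧ HasCompactSupport h ∧
      (∀ x, 0 ≤ h x ∧ h x ≤ 1) ∧
      ∃ W : Set Y, IsOpen W ∧ y ∈ W ∧ ∀ v ∈ W,
        transferSq F ind ψ v
          - ∑' x : F ⁻¹' {v}, (ind x.1 : ℝ) * (h x.1 * a x.1) < ε ^ 2 := by
    intro y
    obtain ⟨t0, ht0⟩ : ∃ t0 : Finset (F ⁻¹' {y}),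
        transferSq F ind ψ y - ε ^ 2 / 2 < ∑ x ∈ t0, (ind x.1 : ℝ) * a x.1 := by
      have hlt : transferSq F ind ψ y - ε ^ 2 / 2 < transferSq F ind ψ y := by linarith
      exact ((hsum y).hasSum.eventually (eventually_gt_nhds hlt)).exists
    obtain ⟨h, hc, hs, h01, h1⟩ := urysohn_finset (X := X) (t0.image Subtype.val)
    refine ⟨h, hc, hs, h01, ?_⟩
    have hkc : Continuous (fun x => h x * a x) := hc.mul haC
    have hks : HasCompactSupport (fun x => h x * a x) := hs.mul_right
    obtain ⟨hksum, hkcont⟩ := transfer_cc ⟨hF.1, hF.2.1, hF.2.2⟩ hkc hks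
    have hky : transferSq F ind ψ y
        - ∑' x : F ⁻¹' {y}, (ind x.1 : ℝ) * (h x.1 * a x.1) < ε ^ 2 := by
      have hge : ∑ x ∈ t0, (ind x.1 : ℝ) * (h x.1 * a x.1)
          ≤ ∑' x : F ⁻¹' {y}, (ind x.1 : ℝ) * (h x.1 * a x.1) := by
        refine Summable.sum_le_tsum t0 (fun i _ => ?_) (hksum y)
        have := (h01 i.1).1
        have := ha0 i.1
        positivity
      have heq : ∑ x ∈ t0, (ind x.1 : ℝ) * (h x.1 * a x.1)
          = ∑ x ∈ t0, (ind x.1 : ℝ) * a x.1 := by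
        refine Finset.sum_congr rfl (fun x hx => ?_)
        rw [h1 x.1 (Finset.mem_image_of_mem _ hx), one_mul]
      rw [← heq] at ht0
      linarith
    have hd : ContinuousAt (fun v =>
        transferSq F ind ψ v - ∑' x : F ⁻¹' {v}, (ind x.1 : ℝ) * (h x.1 * a x.1)) y :=
      (hΦc.continuousAt).sub hkcont.continuousAt
    have hevent : ∀ᶠ v in 𝓝 y, transferSq F ind ψ v
        - ∑' x : F ⁻¹' {v}, (ind x.1 : ℝ) * (h x.1 * a x.1) < ε ^ 2 :=
      hd.eventually_lt continuousAt_const hky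
    obtain ⟨W, hWsub, hWo, hyW⟩ := mem_nhds_iff.1 hevent
    exact ⟨W, hWo, hyW, fun v hv => hWsub hv⟩
  choose h hhc hhs hh01 W hWo hyW hW using hstep
  -- finite subcover of K
  have hKcov : K ⊆ ⋃ y ∈ K, W y := fun y hy => Set.mem_biUnion hy (hyW y)
  obtain ⟨t, htK, htfin, htcov⟩ := hKc.elim_finite_subcover_image (fun y _ => hWo y) hKcov
  -- a dominating bump
  obtain ⟨H, hHc, hHs, hH01, hHdom⟩ : ∃ H : X → ℝ, Continuous H ∧ HasCompactSupport H ∧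
      (∀ x, 0 ≤ H x ∧ H x ≤ 1) ∧ ∀ y ∈ t, ∀ x, h y x ≤ H x := by
    refine Set.Finite.induction_on (motive := fun t _ => ∃ H : X → ℝ, Continuous H ∧
        HasCompactSupport H ∧ (∀ x, 0 ≤ H x ∧ H x ≤ 1) ∧ ∀ y ∈ t, ∀ x, h y x ≤ H x)
        t htfin ?_ ?_
    · refine ⟨fun _ => 0, continuous_const, ?_, fun x => ⟨le_refl 0, zero_le_one⟩,
        fun y hy => absurd hy (Set.notMem_empty y)⟩
      show HasCompactSupport (fun _ : X => (0:ℝ))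
      simp [HasCompactSupport, tsupport]
    · rintro z t' hz ht' ⟨H, hc, hs, hb, hdom⟩
      refine ⟨fun x => max (h z x) (H x), (hhc z).max hc, hasCompactSupport_max (hhs z) hs,
        fun x => ⟨le_trans (hb x).1 (le_max_right _ _), max_le (hh01 z x).2 (hb x).2⟩,
        fun y hy x => ?_⟩
      rcases Set.mem_insert_iff.1 hy with rfl | hy'
      · exact le_max_left _ _
      · exact (hdom y hy' x).trans (le_max_right _ _)
  -- the approximant
  refine ⟨fun x => (H x : ℂ) * ψ x, (Complex.continuous_ofReal.comp hHc).mul hψc, ?_, ?_⟩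
  · have : HasCompactSupport (fun x => (H x : ℂ)) :=
      hHs.comp_left (g := (fun r : ℝ => (r : ℂ))) rfl
    exact this.mul_right
  intro y
  -- pointwise description of the terms
  have hterm : ∀ x : X, ‖ψ x - (H x : ℂ) * ψ x‖ ^ 2 = (1 - H x) ^ 2 * a x := by
    intro x
    have : ψ x - (H x : ℂ) * ψ x = ((1 - H x : ℝ) : ℂ) * ψ x := by
      push_cast; ring
    rw [this, norm_mul, mul_pow, Complex.norm_real, Real.norm_eq_abs,
      abs_of_nonneg (by linarith [(hH01 x).2] : (0:ℝ) ≤ 1 - H x)]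
  have hle1 : ∀ x : X, (1 - H x) ^ 2 ≤ 1 := by
    intro x
    have h1 := (hH01 x).1
    have h2 := (hH01 x).2
    nlinarith
  -- summability
  have hsummable : Summable fun x : F ⁻¹' {y} =>
      (ind x.1 : ℝ) * ‖ψ x.1 - (H x.1 : ℂ) * ψ x.1‖ ^ 2 := by
    refine Summable.of_nonneg_of_le (fun x => ?_) (fun x => ?_) (hsum y)
    · positivity
    · rw [hterm x.1]
      have := hle1 x.1
      have := ha0 x.1
      have : (1 - H x.1) ^ 2 * a x.1 ≤ a x.1 := by nlinarith [ha0 x.1, hle1 x.1]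
      calc (ind x.1 : ℝ) * ((1 - H x.1) ^ 2 * a x.1) ≤ (ind x.1 : ℝ) * a x.1 := by
            apply mul_le_mul_of_nonneg_left this (by positivity)
        _ = (ind x.1 : ℝ) * ‖ψ x.1‖ ^ 2 := rfl
  refine ⟨hsummable, ?_⟩
  have hptle : ∀ (c : X → ℝ), (∀ x, 0 ≤ c x) → (∀ x, (1 - H x) ^ 2 ≤ c x) →
      ∀ x : F ⁻¹' {y}, (ind x.1 : ℝ) * ‖ψ x.1 - (H x.1 : ℂ) * ψ x.1‖ ^ 2
        ≤ (ind x.1 : ℝ) * (c x.1 * a x.1) := by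
    intro c hc0 hcle x
    rw [hterm x.1]
    have h1 : (1 - H x.1) ^ 2 * a x.1 ≤ c x.1 * a x.1 :=
      mul_le_mul_of_nonneg_right (hcle x.1) (ha0 x.1)
    exact mul_le_mul_of_nonneg_left h1 (Nat.cast_nonneg _)
  by_cases hyK : y ∈ K
  · obtain ⟨z, hzt, hyz⟩ := Set.mem_iUnion₂.1 (htcov hyK)
    have hsumk : Summable fun x : F ⁻¹' {y} => (ind x.1 : ℝ) * (h z x.1 * a x.1) := by
      refine Summable.of_nonneg_of_le (fun x => ?_) (fun x => ?_) (hsum y)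
      · have := (hh01 z x.1).1; have := ha0 x.1; positivity
      · have h2 := (hh01 z x.1).2
        have h3 : h z x.1 * a x.1 ≤ a x.1 := by
          nlinarith [ha0 x.1, (hh01 z x.1).1]
        exact mul_le_mul_of_nonneg_left h3 (Nat.cast_nonneg _)
    have hsummid : Summable fun x : F ⁻¹' {y} => (ind x.1 : ℝ) * ((1 - h z x.1) * a x.1) := by
      refine Summable.of_nonneg_of_le (fun x => ?_) (fun x => ?_) (hsum y)
      · have := (hh01 z x.1).2; have := ha0 x.1
        have : (0:ℝ) ≤ 1 - h z x.1 := by linarith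
        positivity
      · have h3 : (1 - h z x.1) * a x.1 ≤ a x.1 := by
          nlinarith [ha0 x.1, (hh01 z x.1).1]
        exact mul_le_mul_of_nonneg_left h3 (Nat.cast_nonneg _)
    have hcle : ∀ x : X, (1 - H x) ^ 2 ≤ (1 - h z x) := by
      intro x
      have hd := hHdom z hzt x
      have h1 := (hH01 x).1
      have h2 := (hH01 x).2
      nlinarith
    have hbound : transferSq F ind (fun x => ψ x - (H x : ℂ) * ψ x) y
        ≤ ∑' x : F ⁻¹' {y}, (ind x.1 : ℝ) * ((1 - h z x.1) * a x.1) := by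
      refine Summable.tsum_le_tsum ?_ hsummable hsummid
      refine hptle (fun x => 1 - h z x) (fun x => ?_) hcle
      show (0:ℝ) ≤ 1 - h z x
      linarith [(hh01 z x).2]
    have hsplit : ∑' x : F ⁻¹' {y}, (ind x.1 : ℝ) * ((1 - h z x.1) * a x.1)
        = transferSq F ind ψ y - ∑' x : F ⁻¹' {y}, (ind x.1 : ℝ) * (h z x.1 * a x.1) := by
      have hsum' : Summable fun x : F ⁻¹' {y} => (ind x.1 : ℝ) * a x.1 := hsum y
      have htr : transferSq F ind ψ y = ∑' x : F ⁻¹' {y}, (ind x.1 : ℝ) * a x.1 := rfl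
      rw [htr, ← Summable.tsum_sub hsum' hsumk]
      exact tsum_congr (fun x => by ring)
    have hWz := hW z y hyz
    linarith
  · have hΦy : transferSq F ind ψ y < ε ^ 2 := by
      have hmem := hK (hyK : y ∈ Kᶜ)
      have : dist (transferSq F ind ψ y) 0 < ε ^ 2 := hmem
      rw [Real.dist_eq, sub_zero] at this
      exact lt_of_le_of_lt (le_abs_self _) this
    have hbound : transferSq F ind (fun x => ψ x - (H x : ℂ) * ψ x) y
        ≤ transferSq F ind ψ y := by
      refine Summable.tsum_le_tsum ?_ hsummable (hsum y)
      have := hptle (fun _ => 1) (fun _ => zero_le_one) (fun x => hle1 x)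
      intro x
      have h5 := this x
      rw [one_mul] at h5
      exact h5
    linarith
end

section
/- Let F : X → Y and G : Y → Z be branched functions with index functions ind_F and ind_G respectively, where X, Y, Z are locally compact Hausdorff spaces. Then the composition G ∘ F : X → Z is a branched function with index function ind_{G∘F}(x) = ind_G(F(x)) · ind_F(x). -/
open Filter Topology

/-- Shrinking a branched chart: the union of images of a smaller open set `V₀ ⊆ V`
equals `U ∩ F ⁻¹' V₀`. -/
lemma chart_shrink {X Y : Type*} (F : X → Y) (U : Set X) (V V₀ : Set Y) {n : ℕ}
    (g : Fin n → Y → X)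
    (hgU : ∀ i, ∀ v ∈ V, g i v ∈ U) (hFg : ∀ i, ∀ v ∈ V, F (g i v) = v)
    (hU : U = ⋃ i, g i '' V) (hV₀ : V₀ ⊆ V) :
    (⋃ i, g i '' V₀) = U ∩ F ⁻¹' V₀ := by
  ext u
  simp only [Set.mem_iUnion, Set.mem_image, Set.mem_inter_iff, Set.mem_preimage]
  constructor
  · rintro ⟨i, v, hv, rfl⟩
    refine ⟨hgU i v (hV₀ hv), ?_⟩
    rw [hFg i v (hV₀ hv)]; exact hv
  · rintro ⟨huU, huF⟩
    rw [hU] at huU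
    simp only [Set.mem_iUnion, Set.mem_image] at huU
    obtain ⟨i, v, hv, rfl⟩ := huU
    rw [hFg i v hv] at huF
    exact ⟨i, v, huF, rfl⟩

/-- **Composition of branched functions.** If `F : X → Y` and `G : Y → Z` are branched
functions with index functions `ind_F`, `ind_G`, then `G ∘ F` is a branched function
with index function `x ↦ ind_G(F(x)) · ind_F(x)`. -/
theorem isBranched_comp {X Y Z : Type*}
    [TopologicalSpace X] [T2Space X] [LocallyCompactSpace X]
    [TopologicalSpace Y] [T2Space Y] [LocallyCompactSpace Y]
    [TopologicalSpace Z] [T2Space Z] [LocallyCompactSpace Z]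
    (F : X → Y) (G : Y → Z) (indF : X → ℕ) (indG : Y → ℕ)
    (hF : IsBranched F indF) (hG : IsBranched G indG) :
    IsBranched (G ∘ F) (fun x => indG (F x) * indF x) := by
  obtain ⟨hFc, hFpos, hFbr⟩ := hF
  obtain ⟨hGc, hGpos, hGbr⟩ := hG
  refine ⟨hGc.comp hFc, fun x => Nat.mul_pos (hGpos _) (hFpos _), fun x => ?_⟩
  obtain ⟨U, V, g, hUo, hxU, hVo, hFxV, hgU, hFg, hgx, hgc, hUeq, hind⟩ := hFbr x
  obtain ⟨U', V', h, hU'o, hFxU', hV'o, hGFxV', hhU', hGh, hhx, hhc, hU'eq, hind'⟩ :=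
    hGbr (F x)
  -- choose a small open W around G (F x)
  obtain ⟨W, hWo, hGFxW, hWV', hhW⟩ :
      ∃ W : Set Z, IsOpen W ∧ G (F x) ∈ W ∧ W ⊆ V' ∧ ∀ j, ∀ w ∈ W, h j w ∈ V ∩ U' := by
    have hmem : ∀ j : Fin (indG (F x)), h j ⁻¹' (V ∩ U') ∈ 𝓝 (G (F x)) := by
      intro j
      have hc := hhc j
      rw [ContinuousWithinAt, hV'o.nhdsWithin_eq hGFxV'] at hc
      have hx' : h j (G (F x)) ∈ V ∩ U' := by rw [hhx j]; exact ⟨hFxV, hFxU'⟩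
      exact hc ((hVo.inter hU'o).mem_nhds hx')
    have hnb : (V' ∩ ⋂ j, h j ⁻¹' (V ∩ U')) ∈ 𝓝 (G (F x)) :=
      Filter.inter_mem (hV'o.mem_nhds hGFxV') (Filter.iInter_mem.mpr hmem)
    obtain ⟨W, hWsub, hWo, hGFxW⟩ := mem_nhds_iff.mp hnb
    exact ⟨W, hWo, hGFxW, fun z hz => (hWsub hz).1,
      fun j w hw => Set.mem_iInter.mp (hWsub hw).2 j⟩
  set U₁ : Set Y := U' ∩ G ⁻¹' W with hU₁def
  have hU₁o : IsOpen U₁ := hU'o.inter (hWo.preimage hGc)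
  have hU₁eq : (⋃ j, h j '' W) = U₁ :=
    chart_shrink G U' V' W h hhU' hGh hU'eq hWV'
  have hU₁V : U₁ ⊆ V := by
    rw [← hU₁eq]
    rintro y hy
    simp only [Set.mem_iUnion, Set.mem_image] at hy
    obtain ⟨j, w, hw, rfl⟩ := hy
    exact (hhW j w hw).1
  set U₀ : Set X := U ∩ F ⁻¹' U₁ with hU₀def
  have hU₀o : IsOpen U₀ := hUo.inter (hU₁o.preimage hFc)
  have hU₀eq : (⋃ i, g i '' U₁) = U₀ := chart_shrink F U V U₁ g hgU hFg hUeq hU₁V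
  have hFxU₁ : F x ∈ U₁ := ⟨hFxU', hGFxW⟩
  have hxU₀ : x ∈ U₀ := ⟨hxU, hFxU₁⟩
  -- branch maps for G ∘ F
  set k : Fin (indG (F x) * indF x) → Z → X :=
    fun p z => g (finProdFinEquiv.symm p).2 (h (finProdFinEquiv.symm p).1 z) with hkdef
  -- the composed branches land in U₀
  have hkU₀ : ∀ (j : Fin (indG (F x))) (i : Fin (indF x)), ∀ w ∈ W, g i (h j w) ∈ U₀ := by
    intro j i w hw
    have h1 := hhW j w hw
    refine ⟨hgU i _ h1.1, ?_⟩
    show F (g i (h j w)) ∈ U₁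
    rw [hFg i _ h1.1]
    exact ⟨h1.2, by simp only [Set.mem_preimage]; rw [hGh j w (hWV' hw)]; exact hw⟩
  -- key membership characterization
  have key : ∀ (u : X), u ∈ U₀ → ∀ (j : Fin (indG (F x))) (i : Fin (indF x)),
      ((∃ w ∈ W, g i (h j w) = u) ↔ (F u ∈ h j '' V' ∧ u ∈ g i '' V)) := by
    intro u hu j i
    constructor
    · rintro ⟨w, hw, rfl⟩
      have h1 := hhW j w hw
      have e1 : F (g i (h j w)) = h j w := hFg i _ h1.1
      exact ⟨⟨w, hWV' hw, e1.symm⟩, ⟨h j w, h1.1, rfl⟩⟩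
    · rintro ⟨⟨v', hv', hv'eq⟩, ⟨v, hv, hveq⟩⟩
      have hFuv : F u = v := by rw [← hveq, hFg i v hv]
      have hGFu : G (F u) = v' := by rw [← hv'eq, hGh j v' hv']
      have hWmem : G (F u) ∈ W := hu.2.2
      refine ⟨G (F u), hWmem, ?_⟩
      rw [hGFu, hv'eq, hFuv, hveq]
  -- union of branch images equals U₀
  have hUnion : U₀ = ⋃ p, k p '' W := by
    ext u
    simp only [Set.mem_iUnion, Set.mem_image, hkdef]
    constructor
    · intro hu
      have hu' : u ∈ ⋃ i, g i '' U₁ := hU₀eq ▸ hu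
      simp only [Set.mem_iUnion, Set.mem_image] at hu'
      obtain ⟨i, v, hv, rfl⟩ := hu'
      have hv' : v ∈ ⋃ j, h j '' W := hU₁eq ▸ hv
      simp only [Set.mem_iUnion, Set.mem_image] at hv'
      obtain ⟨j, w, hw, rfl⟩ := hv'
      refine ⟨finProdFinEquiv (j, i), w, hw, ?_⟩
      rw [Equiv.symm_apply_apply]
    · rintro ⟨p, w, hw, rfl⟩
      exact hkU₀ _ _ w hw
  refine ⟨U₀, W, k, hU₀o, hxU₀, hWo, hGFxW, ?_, ?_, ?_, ?_, hUnion, ?_⟩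
  · -- maps into U₀
    intro p w hw
    exact hkU₀ _ _ w hw
  · -- right inverse
    intro p w hw
    have h1 := hhW (finProdFinEquiv.symm p).1 w hw
    show G (F (g _ (h _ w))) = w
    rw [hFg _ _ h1.1, hGh _ w (hWV' hw)]
  · -- sends center to center
    intro p
    show g _ (h _ (G (F x))) = x
    rw [hhx, hgx]
  · -- continuity within W at the center
    intro p
    have h1 : ContinuousWithinAt (h (finProdFinEquiv.symm p).1) W (G (F x)) :=
      (hhc _).mono hWV'
    have h2 : ContinuousWithinAt (g (finProdFinEquiv.symm p).2) V
        (h (finProdFinEquiv.symm p).1 (G (F x))) := by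
      rw [hhx]; exact hgc _
    exact h2.comp h1 (fun w hw => (hhW _ w hw).1)
  · -- the index formula
    intro u hu
    have hu1 : u ∈ U := hu.1
    have hu2 : F u ∈ U' := hu.2.1
    have c1 : indF u = Nat.card {i : Fin (indF x) // u ∈ g i '' V} := hind u hu1
    have c2 : indG (F u) = Nat.card {j : Fin (indG (F x)) // F u ∈ h j '' V'} :=
      hind' (F u) hu2
    show indG (F u) * indF u = _
    rw [c1, c2, ← Nat.card_prod]
    refine Nat.card_congr ?_
    refine ((Equiv.subtypeProdEquivProd
      (p := fun j : Fin (indG (F x)) => F u ∈ h j '' V')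
      (q := fun i : Fin (indF x) => u ∈ g i '' V)).symm.trans
      (Equiv.subtypeEquiv finProdFinEquiv ?_))
    intro a
    simp only [Equiv.symm_apply_apply, hkdef, Set.mem_image]
    exact (key u hu a.1 a.2).symm
end

section
/- Let F : U → V be a branched function with index function ind_F, and let Y ⊆ V be a closed subset. Set X := F⁻¹(Y), a closed subset of U. Then the restriction F|_X : X → Y (with the subspace topologies, under which X and Y are again locally compact Hausdorff) is a branched function with index function ind_F|_X. -/
open Filter Topology

/-- **Restriction of a branched function to the preimage of a closed set.** If
`F : U → V` is branched with index function `ind_F` and `Y ⊆ V` is closed, then with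
`X := F⁻¹(Y)` the restriction `F|_X : X → Y` (with the subspace topologies) is a
branched function with index function `ind_F|_X`. -/
theorem isBranched_restrict_closed {U V : Type*}
    [TopologicalSpace U] [T2Space U] [LocallyCompactSpace U]
    [TopologicalSpace V] [T2Space V] [LocallyCompactSpace V]
    (F : U → V) (ind : U → ℕ) (hF : IsBranched F ind)
    (Y : Set V) (hY : IsClosed Y) :
    IsBranched (fun x : F ⁻¹' Y => (⟨F x.1, x.2⟩ : Y)) (fun x : F ⁻¹' Y => ind x.1) := by
  classical
  obtain ⟨hcont, hpos, hbr⟩ := hF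
  refine ⟨(hcont.comp continuous_subtype_val).subtype_mk _, fun x => hpos x.1, fun x => ?_⟩
  obtain ⟨U', V', g, hUo, hxU, hVo, hFxV, hgU, hFg, hgFx, hgc, hUeq, hind⟩ := hbr x.1
  have hmem : ∀ (i : Fin (ind x.1)) (v : Y), v.1 ∈ V' → g i v.1 ∈ F ⁻¹' Y := by
    intro i v hv
    show F (g i v.1) ∈ Y
    rw [hFg i v.1 hv]; exact v.2
  refine ⟨Subtype.val ⁻¹' U', Subtype.val ⁻¹' V',
    fun i v => if h : v.1 ∈ V' then ⟨g i v.1, hmem i v h⟩ else x,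
    hUo.preimage continuous_subtype_val, hxU,
    hVo.preimage continuous_subtype_val, hFxV, ?_, ?_, ?_, ?_, ?_, ?_⟩
  · intro i v hv
    rw [Set.mem_preimage] at hv ⊢
    simpa [dif_pos hv] using hgU i v.1 hv
  · intro i v hv
    rw [Set.mem_preimage] at hv
    apply Subtype.ext
    simpa [dif_pos hv] using hFg i v.1 hv
  · intro i
    apply Subtype.ext
    simpa [dif_pos hFxV] using hgFx i
  · intro i
    have h1 : ContinuousWithinAt ((g i) ∘ Subtype.val) (Subtype.val ⁻¹' V')
        (⟨F x.1, x.2⟩ : Y) :=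
      ContinuousWithinAt.comp (f := (Subtype.val : Y → V)) (x := (⟨F x.1, x.2⟩ : Y))
        (hgc i) continuous_subtype_val.continuousWithinAt (fun v hv => hv)
    have h3 : ∀ v ∈ (Subtype.val ⁻¹' V' : Set Y),
        ((if h : v.1 ∈ V' then ⟨g i v.1, hmem i v h⟩ else x : F ⁻¹' Y) : U)
          = ((g i) ∘ Subtype.val) v := by
      intro v hv
      rw [Set.mem_preimage] at hv
      simp [dif_pos hv]
    have h2 : ContinuousWithinAt
        (fun v : Y => ((if h : v.1 ∈ V' then ⟨g i v.1, hmem i v h⟩ else x : F ⁻¹' Y) : U))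
        (Subtype.val ⁻¹' V') (⟨F x.1, x.2⟩ : Y) :=
      h1.congr h3 (h3 _ hFxV)
    rw [Topology.IsInducing.subtypeVal.continuousWithinAt_iff]
    exact h2
  · ext u
    simp only [Set.mem_preimage, Set.mem_iUnion]
    constructor
    · intro hu
      rw [hUeq] at hu
      obtain ⟨i, v, hv, hgv⟩ := Set.mem_iUnion.mp hu
      have hvY : v ∈ Y := by rw [← hFg i v hv, hgv]; exact u.2
      refine ⟨i, ⟨v, hvY⟩, hv, ?_⟩
      apply Subtype.ext
      simpa [dif_pos hv] using hgv
    · rintro ⟨i, v, hv, rfl⟩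
      rw [Set.mem_preimage] at hv
      simpa [dif_pos hv] using hgU i v.1 hv
  · intro u hu
    show ind u.1 = _
    rw [hind u.1 hu]
    apply Nat.card_congr
    refine Equiv.subtypeEquivRight fun i => ?_
    constructor
    · rintro ⟨v, hv, hgv⟩
      have hvY : v ∈ Y := by rw [← hFg i v hv, hgv]; exact u.2
      refine ⟨⟨v, hvY⟩, hv, ?_⟩
      apply Subtype.ext
      simpa [dif_pos hv] using hgv
    · rintro ⟨v, hv, rfl⟩
      rw [Set.mem_preimage] at hv
      exact ⟨v.1, hv, by simp [dif_pos hv]⟩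
end

section
/- Let M ⊆ ℂ be open, let F̃ : ℂ → ℂ be analytic on M, and let x ∈ M be a point at which F̃ is not locally constant, so that n := ind_{F̃}(x), the order of vanishing of z ↦ F̃(z) − F̃(x) at x, is a finite positive integer. Then there exist an open neighbourhood U ⊆ M of x, an open neighbourhood V of F̃(x), and maps g_i : V → U for i = 1,…,n such that: (1) F̃(g_i(v)) = v for all v ∈ V and all i; (2) g_i(F̃(x)) = x and g_i is continuous at the point F̃(x), for all i; (3) U = ⋃_{i=1}^{n} g_i(V); (4) for every u ∈ U, the order of vanishing of z ↦ F̃(z) − F̃(u) at u equals |{i ≤ n : u ∈ g_i(V)}|. In particular, every nonconstant holomorphic map is a branched function whose index function is the local order of vanishing. -/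
open Filter Topology

open scoped Classical in
/-- The order of vanishing of `z ↦ f z − f x` at `x`, for `f` analytic near `x`
(and junk value `0` otherwise).  For a holomorphic map this is the local index
`ind_f(x)`. -/
noncomputable def vanishingOrder (f : ℂ → ℂ) (x : ℂ) : ℕ∞ :=
  if h : AnalyticAt ℂ (fun z => f z - f x) x then analyticOrderAt (fun z => f z - f x) x else 0

/-! ### Auxiliary material -/

/-- A global branch of the `n`-th root, vanishing at `0`. -/
noncomputable def croot (n : ℕ) (w : ℂ) : ℂ :=
  if w = 0 then 0 else Complex.exp (Complex.log w / n)

lemma croot_zero (n : ℕ) : croot n 0 = 0 := if_pos rfl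

lemma croot_pow {n : ℕ} (hn : n ≠ 0) (w : ℂ) : croot n w ^ n = w := by
  rcases eq_or_ne w 0 with rfl | hw
  · simp [croot_zero, zero_pow hn]
  · rw [croot, if_neg hw, ← Complex.exp_nat_mul]
    have hcn : (n : ℂ) ≠ 0 := Nat.cast_ne_zero.mpr hn
    rw [show (n : ℂ) * (Complex.log w / n) = Complex.log w by field_simp]
    exact Complex.exp_log hw

lemma croot_abs_pow {n : ℕ} (hn : n ≠ 0) (w : ℂ) :
    ‖croot n w‖ ^ n = ‖w‖ := by
  rw [← norm_pow, croot_pow hn]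

lemma croot_tendsto {n : ℕ} (hn : n ≠ 0) :
    Tendsto (croot n) (𝓝 0) (𝓝 0) := by
  rw [Metric.tendsto_nhds_nhds]
  intro ε hε
  refine ⟨ε ^ n, pow_pos hε n, fun {w} hw => ?_⟩
  rw [dist_zero_right] at hw ⊢
  have h1 : ‖croot n w‖ ^ n < ε ^ n := by
    rw [croot_abs_pow hn]
    exact hw
  exact lt_of_pow_lt_pow_left₀ n hε.le h1

/-- An analytic function which does not vanish at a point has an analytic `n`-th
root near that point. -/
lemma exists_analytic_nthRoot {g : ℂ → ℂ} {x : ℂ} (hg : AnalyticAt ℂ g x)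
    (hgx : g x ≠ 0) {n : ℕ} (hn : n ≠ 0) :
    ∃ h : ℂ → ℂ, AnalyticAt ℂ h x ∧ ∀ᶠ z in 𝓝 x, h z ^ n = g z := by
  have hcn : (n : ℂ) ≠ 0 := Nat.cast_ne_zero.mpr hn
  set c := Complex.exp (Complex.log (g x) / n) with hc
  have hcpow : c ^ n = g x := by
    rw [hc, ← Complex.exp_nat_mul,
      show (n : ℂ) * (Complex.log (g x) / n) = Complex.log (g x) by field_simp]
    exact Complex.exp_log hgx
  refine ⟨fun z => c * Complex.exp (Complex.log (g z / g x) / n), ?_, ?_⟩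
  · have hdiv : AnalyticAt ℂ (fun z => g z / g x) x := hg.div analyticAt_const hgx
    have h1 : (g x / g x) ∈ Complex.slitPlane := by
      rw [div_self hgx]; exact Complex.one_mem_slitPlane
    have hlog' : AnalyticAt ℂ (fun z => Complex.log (g z / g x)) x := hdiv.clog h1
    exact analyticAt_const.mul ((hlog'.div analyticAt_const hcn).cexp)
  · have hne : ∀ᶠ z in 𝓝 x, g z ≠ 0 := hg.continuousAt.eventually_ne hgx
    filter_upwards [hne] with z hz
    have hdz : g z / g x ≠ 0 := div_ne_zero hz hgx
    rw [mul_pow, hcpow, ← Complex.exp_nat_mul,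
      show (n : ℂ) * (Complex.log (g z / g x) / n) = Complex.log (g z / g x) by field_simp,
      Complex.exp_log hdz, mul_div_cancel₀ _ hgx]

/-- If an analytic function vanishes at a point but its derivative does not,
its order of vanishing is `1`. -/
lemma order_eq_one_of_deriv_ne_zero {f : ℂ → ℂ} {u : ℂ} (hf : AnalyticAt ℂ f u)
    (h0 : f u = 0) (hd : deriv f u ≠ 0) : analyticOrderAt f u = 1 := by
  have hne : analyticOrderAt f u ≠ ⊤ := by
    intro ht
    apply hd
    have hev : f =ᶠ[𝓝 u] fun _ => (0 : ℂ) := analyticOrderAt_eq_top.mp ht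
    rw [hev.deriv_eq, deriv_const]
  obtain ⟨m, hm⟩ := WithTop.ne_top_iff_exists.mp hne
  obtain ⟨p, hpA, hpu, hpe⟩ := (hf.analyticOrderAt_eq_natCast (n := m)).mp hm.symm
  simp only [smul_eq_mul] at hpe
  have hm0 : m ≠ 0 := by
    rintro rfl
    apply hpu
    have := hpe.self_of_nhds
    simpa [h0] using this.symm
  have hm2 : ¬ 2 ≤ m := by
    intro h2
    apply hd
    have h1 : HasDerivAt (fun z => (z - u) ^ m) 0 u := by
      have := ((hasDerivAt_id u).sub_const u).fun_pow m
      simpa [zero_pow (by omega : m - 1 ≠ 0)] using this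
    have h2' : HasDerivAt (fun z => (z - u) ^ m * p z)
        (0 * p u + (u - u) ^ m * deriv p u) u :=
      h1.mul hpA.differentiableAt.hasDerivAt
    have h3 : HasDerivAt (fun z => (z - u) ^ m * p z) 0 u := by
      simpa [zero_pow hm0] using h2'
    have h4 : HasDerivAt f 0 u := h3.congr_of_eventuallyEq hpe
    exact h4.deriv
  have : m = 1 := by omega
  rw [← hm, this]
  rfl

/-- **Holomorphic maps are branched.** If `F̃` is
analytic on an open set `M ⊆ ℂ` and `x ∈ M` is a point where the order of vanishing
`n` of `z ↦ F̃(z) − F̃(x)` is a finite positive integer, then `F̃` admits a system of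
`n` inverse branches centered at `x`, whose branch counts compute the order of
vanishing at every point of the neighbourhood. -/
theorem holomorphic_isBranchedAt (M : Set ℂ) (hM : IsOpen M) (Ft : ℂ → ℂ)
    (hA : AnalyticOnNhd ℂ Ft M) (x : ℂ) (hx : x ∈ M)
    (n : ℕ) (hn : 0 < n) (hord : vanishingOrder Ft x = (n : ℕ∞)) :
    ∃ (U : Set ℂ) (V : Set ℂ) (g : Fin n → ℂ → ℂ),
      IsOpen U ∧ x ∈ U ∧ U ⊆ M ∧ IsOpen V ∧ Ft x ∈ V ∧
      (∀ i, ∀ v ∈ V, g i v ∈ U) ∧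
      (∀ i, ∀ v ∈ V, Ft (g i v) = v) ∧
      (∀ i, g i (Ft x) = x) ∧
      (∀ i, ContinuousWithinAt (g i) V (Ft x)) ∧
      (U = ⋃ i, g i '' V) ∧
      (∀ u ∈ U, vanishingOrder Ft u = (Nat.card {i : Fin n // u ∈ g i '' V} : ℕ∞)) := by
  classical
  have hn' : n ≠ 0 := hn.ne'
  haveI : NeZero n := ⟨hn'⟩
  have hAx : AnalyticAt ℂ (fun z => Ft z - Ft x) x := (hA x hx).sub analyticAt_const
  have hordx : analyticOrderAt (fun z => Ft z - Ft x) x = (n : ℕ∞) := by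
    unfold vanishingOrder at hord
    rwa [dif_pos hAx] at hord
  obtain ⟨g0, hg0A, hg0x, hg0eq⟩ := (hAx.analyticOrderAt_eq_natCast (n := n)).mp hordx
  simp only [smul_eq_mul] at hg0eq
  obtain ⟨h, hhA, hhpow⟩ := exists_analytic_nthRoot hg0A hg0x hn'
  have hhx : h x ^ n = g0 x := hhpow.self_of_nhds
  have hhx0 : h x ≠ 0 := fun h0 => hg0x (by rw [← hhx, h0, zero_pow hn'])
  set φ : ℂ → ℂ := fun z => (z - x) * h z with hφdef
  have hφA : AnalyticAt ℂ φ x := ((analyticAt_id).sub analyticAt_const).mul hhA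
  have hφx : φ x = 0 := by simp [hφdef]
  have hder : HasDerivAt φ (h x) x := by
    have := ((hasDerivAt_id x).sub_const x).fun_mul hhA.differentiableAt.hasDerivAt
    simpa using this
  have hderiv_x : deriv φ x = h x := hder.deriv
  have hstrict : HasStrictDerivAt φ (h x) x := by
    have h1 := hφA.hasStrictFDerivAt.hasStrictDerivAt
    rwa [fderiv_apply_one_eq_deriv, hderiv_x] at h1
  set e : OpenPartialHomeomorph ℂ ℂ :=
    (hstrict.hasStrictFDerivAt_equiv hhx0).toOpenPartialHomeomorph φ with he
  have hecoe : ⇑e = φ := HasStrictFDerivAt.toOpenPartialHomeomorph_coe _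
  have hxsrc : x ∈ e.source := HasStrictFDerivAt.mem_toOpenPartialHomeomorph_source _
  -- continuity of deriv φ at x
  have hcderiv : ContinuousAt (deriv φ) x := by
    have h1 : ContinuousAt (fderiv ℂ φ) x := hφA.fderiv.continuousAt
    have h2 : ContinuousAt (fun z => fderiv ℂ φ z 1) x :=
      ((ContinuousLinearMap.apply ℂ ℂ (1 : ℂ)).continuous.continuousAt).comp h1
    have h3 : deriv φ = fun z => fderiv ℂ φ z 1 := funext fun z => (fderiv_apply_one_eq_deriv).symm
    rwa [h3]
  -- eventual facts near x
  have EvA : ∀ᶠ z in 𝓝 x, AnalyticAt ℂ φ z := hφA.eventually_analyticAt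
  have EvD : ∀ᶠ z in 𝓝 x, deriv φ z ≠ 0 :=
    hcderiv.eventually_ne (by rw [hderiv_x]; exact hhx0)
  have EvI : ∀ᶠ z in 𝓝 x, Ft z = Ft x + φ z ^ n := by
    filter_upwards [hg0eq, hhpow] with z h1 h2
    have h3 : φ z ^ n = (z - x) ^ n * g0 z := by
      rw [hφdef]; simp only [mul_pow, h2]
    rw [h3, ← h1]; ring
  have EvM : ∀ᶠ z in 𝓝 x, z ∈ M := hM.eventually_mem hx
  obtain ⟨W0, hW0sub, hW0open, hxW0⟩ :=
    eventually_nhds_iff.mp (EvA.and (EvD.and (EvI.and EvM)))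
  -- choose the radius ρ
  have hO : IsOpen (W0 ∩ e.source) := hW0open.inter e.open_source
  have hT : IsOpen (e.target ∩ e.symm ⁻¹' (W0 ∩ e.source)) :=
    e.isOpen_inter_preimage_symm hO
  have h0target : (0 : ℂ) ∈ e.target := by
    have := e.map_source hxsrc; rwa [hecoe, hφx] at this
  have hsymm0 : e.symm 0 = x := by
    have := e.left_inv hxsrc; rwa [hecoe, hφx] at this
  have h0T : (0 : ℂ) ∈ e.target ∩ e.symm ⁻¹' (W0 ∩ e.source) :=
    ⟨h0target, by rw [Set.mem_preimage, hsymm0]; exact ⟨hxW0, hxsrc⟩⟩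
  obtain ⟨ρ, hρpos, hball⟩ := Metric.isOpen_iff.mp hT 0 h0T
  -- roots of unity
  set ω : ℂ := Complex.exp (2 * Real.pi * Complex.I / n) with hω
  have hprim : IsPrimitiveRoot ω n := Complex.isPrimitiveRoot_exp n hn'
  have hωn : ω ^ n = 1 := hprim.pow_eq_one
  have hωabs1 : ‖ω‖ = 1 := by
    rw [hω, show (2 * (Real.pi : ℂ) * Complex.I / n) =
        ((2 * Real.pi / n : ℝ) : ℂ) * Complex.I by push_cast; ring,
      Complex.norm_exp_ofReal_mul_I]
  have hωabs : ∀ i : ℕ, ‖ω ^ i‖ = 1 := fun i => by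
    rw [norm_pow, hωabs1, one_pow]
  -- the data
  set U : Set ℂ := e.symm '' Metric.ball 0 ρ with hU
  set V : Set ℂ := Metric.ball (Ft x) (ρ ^ n) with hV
  set g : Fin n → ℂ → ℂ := fun i v => e.symm (ω ^ (i : ℕ) * croot n (v - Ft x)) with hg
  have hballsub : Metric.ball (0 : ℂ) ρ ⊆ e.target := fun w hw => (hball hw).1
  have himg : ∀ w ∈ Metric.ball (0 : ℂ) ρ, e.symm w ∈ W0 ∩ e.source :=
    fun w hw => (hball hw).2
  have hright : ∀ w ∈ Metric.ball (0 : ℂ) ρ, φ (e.symm w) = w := by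
    intro w hw; rw [← hecoe]; exact e.right_inv (hballsub hw)
  have hUopen : IsOpen U := by
    rw [hU, e.symm_image_eq_source_inter_preimage hballsub]
    exact e.isOpen_inter_preimage Metric.isOpen_ball
  have hxU : x ∈ U := ⟨0, Metric.mem_ball_self hρpos, hsymm0⟩
  have hUW0 : U ⊆ W0 := by
    rintro u ⟨w, hw, rfl⟩; exact (himg w hw).1
  have hUM : U ⊆ M := fun u hu => ((hW0sub u (hUW0 hu)).2.2.2)
  have hVopen : IsOpen V := Metric.isOpen_ball
  have hFtxV : Ft x ∈ V := Metric.mem_ball_self (pow_pos hρpos n)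
  -- the argument of `e.symm` in the definition of `g` lies in the ball
  have hargball : ∀ (i : Fin n), ∀ v ∈ V,
      ω ^ (i : ℕ) * croot n (v - Ft x) ∈ Metric.ball (0 : ℂ) ρ := by
    intro i v hv
    rw [Metric.mem_ball, dist_zero_right, norm_mul, hωabs, one_mul]
    have h1 : ‖croot n (v - Ft x)‖ ^ n < ρ ^ n := by
      rw [croot_abs_pow hn']
      have h2 := Metric.mem_ball.mp hv
      rwa [Complex.dist_eq] at h2
    exact lt_of_pow_lt_pow_left₀ n hρpos.le h1
  have hgU : ∀ (i : Fin n), ∀ v ∈ V, g i v ∈ U := fun i v hv =>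
    ⟨_, hargball i v hv, rfl⟩
  have hFg : ∀ (i : Fin n), ∀ v ∈ V, Ft (g i v) = v := by
    intro i v hv
    have harg := hargball i v hv
    have h1 : φ (g i v) = ω ^ (i : ℕ) * croot n (v - Ft x) := hright _ harg
    have h2 : g i v ∈ W0 := (himg _ harg).1
    have h3 := (hW0sub _ h2).2.2.1
    rw [h3, h1, mul_pow, ← pow_mul, mul_comm (i : ℕ) n, pow_mul, hωn, one_pow,
      one_mul, croot_pow hn']
    ring
  have hgx : ∀ i : Fin n, g i (Ft x) = x := by
    intro i
    simp only [hg, sub_self, croot_zero, mul_zero, hsymm0]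
  have hgcont : ∀ i : Fin n, ContinuousWithinAt (g i) V (Ft x) := by
    intro i
    apply ContinuousAt.continuousWithinAt
    have hsc : ContinuousAt e.symm 0 := e.continuousAt_symm h0target
    have h1 : Tendsto (fun v : ℂ => v - Ft x) (𝓝 (Ft x)) (𝓝 0) := by
      have : Tendsto (fun v : ℂ => v - Ft x) (𝓝 (Ft x)) (𝓝 (Ft x - Ft x)) :=
        tendsto_id.sub tendsto_const_nhds
      simpa using this
    have h2 := (croot_tendsto hn').comp h1
    have h3 : Tendsto (fun v => ω ^ (i : ℕ) * croot n (v - Ft x)) (𝓝 (Ft x)) (𝓝 0) := by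
      have := h2.const_mul (ω ^ (i : ℕ))
      simpa using this
    have h4 := hsc.tendsto.comp h3
    rw [hsymm0] at h4
    have h5 : g i (Ft x) = x := hgx i
    unfold ContinuousAt
    rw [h5]
    exact h4
  -- the heart: union and counting
  have hmain : ∀ u ∈ U, (∃ i : Fin n, u ∈ g i '' V) ∧
      vanishingOrder Ft u = (Nat.card {i : Fin n // u ∈ g i '' V} : ℕ∞) := by
    intro u hu
    obtain ⟨w, hwball, hwu⟩ := hu
    have hφu : φ u = w := by rw [← hwu]; exact hright w hwball
    have huW0 : u ∈ W0 := by rw [← hwu]; exact (himg w hwball).1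
    obtain ⟨hφAu, hderu, hFtu, huM⟩ := hW0sub u huW0
    have hFtuw : Ft u = Ft x + w ^ n := by rw [hFtu, hφu]
    have hFtuV : Ft u ∈ V := by
      rw [hV, Metric.mem_ball, hFtuw, Complex.dist_eq, add_sub_cancel_left, norm_pow]
      have hw : ‖w‖ < ρ := by
        have := Metric.mem_ball.mp hwball
        rwa [Complex.dist_eq, sub_zero] at this
      exact pow_lt_pow_left₀ hw (norm_nonneg w) hn'
    have hcrit : ∀ i : Fin n, u ∈ g i '' V ↔ ω ^ (i : ℕ) * croot n (w ^ n) = w := by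
      intro i
      constructor
      · rintro ⟨v, hv, hgv⟩
        have harg := hargball i v hv
        have h1 : φ (g i v) = ω ^ (i : ℕ) * croot n (v - Ft x) := hright _ harg
        have h2 : v = Ft u := by rw [← hFg i v hv, hgv]
        rw [hgv, hφu] at h1
        rw [h2, hFtuw, add_sub_cancel_left] at h1
        exact h1.symm
      · intro hiw
        refine ⟨Ft u, hFtuV, ?_⟩
        simp only [hg]
        rw [hFtuw, add_sub_cancel_left, hiw, hwu]
    rcases eq_or_ne w 0 with rfl | hw0
    · -- the center point
      have hux : u = x := by rw [← hwu, hsymm0]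
      have hall : ∀ i : Fin n, u ∈ g i '' V := by
        intro i
        rw [hcrit i]
        simp [zero_pow hn', croot_zero]
      refine ⟨⟨⟨0, hn⟩, hall _⟩, ?_⟩
      have hcard : Nat.card {i : Fin n // u ∈ g i '' V} = n := by
        rw [Nat.card_congr (Equiv.subtypeUnivEquiv hall), Nat.card_eq_fintype_card,
          Fintype.card_fin]
      rw [hcard, hux]
      exact hord
    · -- points with `φ u ≠ 0`
      set R := croot n (w ^ n) with hR
      have hRn : R ^ n = w ^ n := croot_pow hn' _
      have hR0 : R ≠ 0 := by
        intro h0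
        apply hw0
        have : w ^ n = 0 := by rw [← hRn, h0, zero_pow hn']
        exact pow_eq_zero_iff hn' |>.mp this
      have hξ : (w / R) ^ n = 1 := by
        rw [div_pow, hRn, div_self (pow_ne_zero _ hw0)]
      obtain ⟨i0, hi0n, hi0⟩ := hprim.eq_pow_of_pow_eq_one hξ
      have hcond : ∀ i : Fin n, (ω ^ (i : ℕ) * R = w ↔ (i : ℕ) = i0) := by
        intro i
        constructor
        · intro hiw
          apply hprim.pow_inj i.isLt hi0n
          rw [hi0, eq_div_iff hR0]
          exact hiw
        · rintro hieq
          rw [hieq, hi0, div_mul_cancel₀ _ hR0]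
      refine ⟨⟨⟨i0, hi0n⟩, (hcrit _).mpr ((hcond _).mpr rfl)⟩, ?_⟩
      have hcard : Nat.card {i : Fin n // u ∈ g i '' V} = 1 := by
        rw [Nat.card_eq_one_iff_unique]
        constructor
        · constructor
          rintro ⟨i, hi⟩ ⟨j, hj⟩
          have hi' := (hcond i).mp ((hcrit i).mp hi)
          have hj' := (hcond j).mp ((hcrit j).mp hj)
          exact Subtype.ext (Fin.ext (hi'.trans hj'.symm))
        · exact ⟨⟨⟨i0, hi0n⟩, (hcrit _).mpr ((hcond _).mpr rfl)⟩⟩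
      rw [hcard]
      have hAu : AnalyticAt ℂ (fun z => Ft z - Ft u) u := (hA u huM).sub analyticAt_const
      unfold vanishingOrder
      rw [dif_pos hAu]
      have hevu : (fun z => Ft z - Ft u) =ᶠ[𝓝 u] (fun z => Ft x + φ z ^ n - Ft u) := by
        filter_upwards [hW0open.eventually_mem huW0] with z hz
        rw [(hW0sub z hz).2.2.1]
      have hDu : HasDerivAt (fun z => Ft x + φ z ^ n - Ft u)
          ((n : ℂ) * φ u ^ (n - 1) * deriv φ u) u := by
        have h1 : HasDerivAt φ (deriv φ u) u := hφAu.differentiableAt.hasDerivAt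
        have h2 := h1.pow n
        exact (h2.const_add (Ft x)).sub_const (Ft u)
      have hD : deriv (fun z => Ft z - Ft u) u = (n : ℂ) * φ u ^ (n - 1) * deriv φ u := by
        rw [hevu.deriv_eq]; exact hDu.deriv
      have h1 := order_eq_one_of_deriv_ne_zero hAu (by simp)
        (by
          rw [hD]
          exact mul_ne_zero (mul_ne_zero (Nat.cast_ne_zero.mpr hn')
            (pow_ne_zero _ (hφu ▸ hw0))) hderu)
      rw [h1]
      rfl
  refine ⟨U, V, g, hUopen, hxU, hUM, hVopen, hFtxV, hgU, hFg, hgx, hgcont, ?_,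
    fun u hu => (hmain u hu).2⟩
  apply Set.Subset.antisymm
  · intro u hu
    obtain ⟨i, hi⟩ := (hmain u hu).1
    exact Set.mem_iUnion.mpr ⟨i, hi⟩
  · exact Set.iUnion_subset fun i => Set.image_subset_iff.mpr fun v hv => hgU i v hv
end

section
/- Let F̃ : ℂ → ℂ be an entire nonconstant function, let Y ⊆ ℂ be a closed set with no isolated points, let X := F̃⁻¹(Y), and let x ∈ X. Then ind_{F̃}(x) is the greatest natural number d with the following property: there exist points x_{n,i} ∈ X for n ∈ ℕ and 1 ≤ i ≤ d such that (i) for each i, x_{n,i} → x as n → ∞; (ii) for every n and all i, j, F̃(x_{n,i}) = F̃(x_{n,j}) and F̃(x_{n,i}) ≠ F̃(x); (iii) for each n the points x_{n,1}, …, x_{n,d} are pairwise distinct. That is, such points exist for d = ind_{F̃}(x), and any d admitting such points satisfies d ≤ ind_{F̃}(x). -/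
open Filter Topology

/-- There exist, for each `m`, `d` pairwise-distinct points of `X = F̃⁻¹(Y)` converging to
`x`, sharing a common `F̃`-value different from `F̃(x)`. -/
def HasApproxBranchPoints (Ft : ℂ → ℂ) (Y : Set ℂ) (x : ℂ) (d : ℕ) : Prop :=
  ∃ p : ℕ → Fin d → ℂ,
    (∀ m i, Ft (p m i) ∈ Y) ∧
    (∀ i, Tendsto (fun m => p m i) atTop (nhds x)) ∧
    (∀ m i j, Ft (p m i) = Ft (p m j)) ∧
    (∀ m i, Ft (p m i) ≠ Ft x) ∧
    (∀ m, Function.Injective fun i => p m i)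

/-- **Lemma 7.1 of the paper (index characterization).** Let `F̃` be entire and
nonconstant, `Y ⊆ ℂ` closed with no isolated points, `X := F̃⁻¹(Y)` and `x ∈ X`.
Then `ind_{F̃}(x)` (the order of vanishing of `z ↦ F̃(z) − F̃(x)` at `x`) is the
greatest `d` for which `d` approximating branch points exist. -/
theorem vanishingOrder_eq_sup_approxBranchPoints (Ft : ℂ → ℂ)
    (hD : Differentiable ℂ Ft) (hnc : ∃ a b : ℂ, Ft a ≠ Ft b)
    (Y : Set ℂ) (hY : IsClosed Y) (hYperf : ∀ y ∈ Y, y ∈ closure (Y \ {y}))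
    (x : ℂ) (hx : Ft x ∈ Y)
    (n : ℕ) (hord : vanishingOrder Ft x = (n : ℕ∞)) :
    HasApproxBranchPoints Ft Y x n ∧
      ∀ d : ℕ, HasApproxBranchPoints Ft Y x d → d ≤ n := by
  classical
  have hfa : AnalyticAt ℂ (fun z => Ft z - Ft x) x := (hD.sub_const (Ft x)).analyticAt x
  have hord' : analyticOrderAt (fun z => Ft z - Ft x) x = (n : ℕ∞) := by
    simp only [vanishingOrder] at hord
    rwa [dif_pos hfa] at hord
  obtain ⟨g, hg, hgx, hfg⟩ := hfa.analyticOrderAt_eq_natCast.mp hord'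
  have hn : 0 < n := by
    rcases Nat.eq_zero_or_pos n with h0 | h
    · exfalso
      have h1 := hfg.self_of_nhds
      simp only [h0, pow_zero, one_smul, sub_self] at h1
      exact hgx h1.symm
    · exact h
  obtain ⟨c, hc⟩ := IsAlgClosed.exists_pow_nat_eq (g x) hn
  have hc0 : c ≠ 0 := by
    intro h
    apply hgx
    rw [← hc, h, zero_pow hn.ne']
  have hncast : (n : ℂ) ≠ 0 := Nat.cast_ne_zero.mpr hn.ne'
  set r : ℂ → ℂ := fun z => c * Complex.exp (Complex.log (g z / g x) / n) with hr_def
  have hra : AnalyticAt ℂ r x := by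
    apply analyticAt_const.mul
    apply AnalyticAt.cexp
    apply AnalyticAt.div _ analyticAt_const hncast
    refine (hg.fun_div analyticAt_const hgx).clog ?_
    rw [div_self hgx]
    exact Complex.one_mem_slitPlane
  have hrx : r x = c := by
    rw [hr_def]
    simp only [div_self hgx, Complex.log_one, zero_div, Complex.exp_zero, mul_one]
  have hgne : ∀ᶠ z in 𝓝 x, g z ≠ 0 := hg.continuousAt.eventually_ne hgx
  have hrn : ∀ᶠ z in 𝓝 x, r z ^ n = g z := by
    filter_upwards [hgne] with z hz
    have hq0 : g z / g x ≠ 0 := div_ne_zero hz hgx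
    have harg : (n : ℂ) * (Complex.log (g z / g x) / n) = Complex.log (g z / g x) := by
      field_simp
    rw [hr_def]
    simp only
    rw [mul_pow, ← Complex.exp_nat_mul, harg, Complex.exp_log hq0, hc]
    field_simp
  set φ : ℂ → ℂ := fun z => (z - x) * r z with hφ_def
  have hφa : AnalyticAt ℂ φ x := (analyticAt_id.sub analyticAt_const).mul hra
  have hφx : φ x = 0 := by simp [hφ_def]
  have hφf : ∀ᶠ z in 𝓝 x, Ft z - Ft x = φ z ^ n := by
    filter_upwards [hfg, hrn] with z h1 h2
    rw [hφ_def]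
    simp only
    rw [mul_pow, h2, ← smul_eq_mul]
    exact h1
  have hd : HasDerivAt φ c x := by
    have h1 : HasDerivAt (fun z : ℂ => z - x) 1 x := (hasDerivAt_id x).sub_const x
    have h2 : HasDerivAt r (deriv r x) x := hra.differentiableAt.hasDerivAt
    have h3 := h1.fun_mul h2
    simpa [hrx] using h3
  have hstrict : HasStrictDerivAt φ c x := by
    have h1 := hφa.hasStrictFDerivAt.hasStrictDerivAt
    have h2 : (fderiv ℂ φ x : ℂ →L[ℂ] ℂ) 1 = c := h1.hasDerivAt.unique hd
    rwa [h2] at h1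
  have Eφ := hstrict.hasStrictFDerivAt_equiv hc0
  set ψ : ℂ → ℂ := Eφ.localInverse φ _ x with hψ_def
  have hψ0 : ψ 0 = x := by
    have h1 := Eφ.localInverse_apply_image
    rwa [hφx] at h1
  have hψcont : Tendsto ψ (𝓝 0) (𝓝 x) := by
    have h1 := Eφ.localInverse_continuousAt
    rw [hφx] at h1
    exact hψ0 ▸ h1
  -- upper bound
  have upper : ∀ d : ℕ, HasApproxBranchPoints Ft Y x d → d ≤ n := by
    rintro d ⟨p, hpY, hptend, hpeq, hpne, hpinj⟩
    rcases Nat.eq_zero_or_pos d with hd0 | hd0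
    · omega
    have hW : ∀ᶠ z in 𝓝 x, (Ft z - Ft x = φ z ^ n) ∧ ψ (φ z) = z :=
      hφf.and Eφ.eventually_left_inverse
    have hm' : ∀ᶠ m in atTop, ∀ i : Fin d,
        (Ft (p m i) - Ft x = φ (p m i) ^ n) ∧ ψ (φ (p m i)) = p m i :=
      eventually_all.mpr fun i => (hptend i).eventually hW
    obtain ⟨m, hm⟩ := hm'.exists
    set i0 : Fin d := ⟨0, hd0⟩
    set w : ℂ := Ft (p m i0) - Ft x with hw_def
    have hw0 : w ≠ 0 := sub_ne_zero.mpr (hpne m i0)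
    have hroot : ∀ i, φ (p m i) ^ n = w := by
      intro i
      rw [← (hm i).1, hw_def, hpeq m i i0]
    have hinj : Function.Injective fun i : Fin d => φ (p m i) := by
      intro i j hij
      apply hpinj m
      simp only
      rw [← (hm i).2, ← (hm j).2]
      simp only at hij
      rw [hij]
    have hmem : ∀ i : Fin d, φ (p m i) ∈ (Polynomial.nthRoots n w).toFinset := by
      intro i
      rw [Multiset.mem_toFinset, Polynomial.mem_nthRoots hn]
      exact hroot i
    calc d = Fintype.card (Fin d) := (Fintype.card_fin d).symm
      _ ≤ (Polynomial.nthRoots n w).toFinset.card := by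
          rw [← Fintype.card_coe]
          exact Fintype.card_le_of_injective (fun i => ⟨φ (p m i), hmem i⟩)
            (fun i j h => hinj (congrArg Subtype.val h))
      _ ≤ Multiset.card (Polynomial.nthRoots n w) := Multiset.toFinset_card_le _
      _ ≤ n := Polynomial.card_nthRoots n w
  -- lower bound: construct the points
  have hgood : ∀ᶠ u in 𝓝 (0 : ℂ), φ (ψ u) = u ∧ Ft (ψ u) = Ft x + u ^ n := by
    have h1 : ∀ᶠ u in 𝓝 (0 : ℂ), φ (ψ u) = u := by
      have := Eφ.eventually_right_inverse
      rwa [hφx] at this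
    have h2 : ∀ᶠ u in 𝓝 (0 : ℂ), Ft (ψ u) - Ft x = φ (ψ u) ^ n := hψcont.eventually hφf
    filter_upwards [h1, h2] with u h1 h2
    refine ⟨h1, ?_⟩
    rw [h1] at h2
    linear_combination h2
  obtain ⟨δ, hδpos, hδ⟩ := Metric.eventually_nhds_iff.mp hgood
  have hpt : ∀ m : ℕ, ∃ wv : ℂ, (Ft x + wv ^ n) ∈ Y ∧ wv ^ n ≠ 0 ∧
      ‖wv‖ < δ ∧ ‖wv‖ < 1 / (m + 1) := by
    intro m
    have hmin : 0 < min (δ ^ n) ((1 / (m + 1) : ℝ) ^ n) := by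
      apply lt_min (pow_pos hδpos n) (pow_pos (by positivity) n)
    obtain ⟨y, hyY, hyd⟩ := Metric.mem_closure_iff.mp (hYperf (Ft x) hx) _ hmin
    obtain ⟨wv, hwv⟩ := IsAlgClosed.exists_pow_nat_eq (y - Ft x) hn
    have hy0 : y - Ft x ≠ 0 := sub_ne_zero.mpr (fun h => hyY.2 (by simp [h]))
    have habs : ‖wv‖ ^ n = dist (Ft x) y := by
      rw [← norm_pow, hwv, dist_comm, Complex.dist_eq]
    refine ⟨wv, ?_, ?_, ?_, ?_⟩
    · rw [hwv]
      simpa using hyY.1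
    · rw [hwv]; exact hy0
    · refine lt_of_pow_lt_pow_left₀ n hδpos.le ?_
      rw [habs]
      exact lt_of_lt_of_le hyd (min_le_left _ _)
    · refine lt_of_pow_lt_pow_left₀ n (by positivity) ?_
      rw [habs]
      exact lt_of_lt_of_le hyd (min_le_right _ _)
  choose wf hwY hw0 hwδ hwm using hpt
  have hζ := Complex.isPrimitiveRoot_exp n hn.ne'
  set ζ : ℂ := Complex.exp (2 * Real.pi * Complex.I / n) with hζ_def
  have hζ1 : ‖ζ‖ = 1 := hζ.norm'_eq_one hn.ne'
  set p : ℕ → Fin n → ℂ := fun m i => ψ (ζ ^ (i : ℕ) * wf m) with hp_def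
  have hnorm : ∀ (m : ℕ) (i : Fin n), ‖ζ ^ (i : ℕ) * wf m‖ = ‖wf m‖ := by
    intro m i
    rw [norm_mul, norm_pow, hζ1, one_pow, one_mul]
  have hu : ∀ (m : ℕ) (i : Fin n), dist (ζ ^ (i : ℕ) * wf m) 0 < δ := by
    intro m i
    rw [dist_zero_right, hnorm]
    exact hwδ m
  have hpow : ∀ (m : ℕ) (i : Fin n), (ζ ^ (i : ℕ) * wf m) ^ n = wf m ^ n := by
    intro m i
    rw [mul_pow, ← pow_mul, mul_comm (i : ℕ) n, pow_mul, hζ.pow_eq_one, one_pow, one_mul]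
  have hFt : ∀ (m : ℕ) (i : Fin n), Ft (p m i) = Ft x + wf m ^ n := by
    intro m i
    have := (hδ (hu m i)).2
    rwa [hpow] at this
  refine ⟨⟨p, ?_, ?_, ?_, ?_, ?_⟩, upper⟩
  · intro m i
    rw [hFt]
    exact hwY m
  · intro i
    have h1 : Tendsto (fun m => ζ ^ (i : ℕ) * wf m) atTop (𝓝 0) := by
      rw [tendsto_zero_iff_norm_tendsto_zero]
      refine squeeze_zero (fun m => norm_nonneg _) (fun m => ?_)
        tendsto_one_div_add_atTop_nhds_zero_nat
      rw [hnorm]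
      exact (hwm m).le
    have h2 := hψcont.comp h1
    exact h2.congr (fun m => rfl)
  · intro m i j
    rw [hFt, hFt]
  · intro m i h
    rw [hFt] at h
    exact hw0 m (by linear_combination h)
  · intro m i j hij
    simp only [hp_def] at hij
    have h2 : ζ ^ (i : ℕ) * wf m = ζ ^ (j : ℕ) * wf m := by
      rw [← (hδ (hu m i)).1, ← (hδ (hu m j)).1, hij]
    have hwne : wf m ≠ 0 := fun h => hw0 m (by rw [h, zero_pow hn.ne'])
    have h3 : ζ ^ (i : ℕ) = ζ ^ (j : ℕ) := mul_right_cancel₀ hwne h2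
    exact Fin.ext (hζ.pow_inj i.2 j.2 h3)
end

section
/- Let F̃ : ℂ → ℂ and G̃ : ℂ → ℂ be entire nonconstant functions. Let X ⊆ ℂ be a closed set with F̃⁻¹(X) = X and no isolated points, and let Y ⊆ ℂ be a closed set with G̃⁻¹(Y) = Y and no isolated points. Suppose φ : X → Y is a homeomorphism (for the subspace topologies) satisfying G̃(φ(x)) = φ(F̃(x)) for all x ∈ X. Then for every x ∈ X, ind_{G̃}(φ(x)) = ind_{F̃}(x); that is, a topological conjugacy of the restricted dynamical systems preserves the local index (order of vanishing). -/
open Filter Topology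

/-- A nonvanishing analytic germ has an analytic `k`-th root. -/
lemma exists_kth_root (g : ℂ → ℂ) (x0 : ℂ) (k : ℕ) (hk : 0 < k)
    (hg : AnalyticAt ℂ g x0) (hg0 : g x0 ≠ 0) :
    ∃ h : ℂ → ℂ, AnalyticAt ℂ h x0 ∧ h x0 ≠ 0 ∧ ∀ᶠ z in 𝓝 x0, h z ^ k = g z := by
  have hkC : (k : ℂ) ≠ 0 := Nat.cast_ne_zero.2 hk.ne'
  set c : ℂ := Complex.exp (Complex.log (g x0) / k) with hc
  have hck : c ^ k = g x0 := by
    rw [hc, ← Complex.exp_nat_mul]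
    rw [mul_div_cancel₀ _ hkC, Complex.exp_log hg0]
  set h : ℂ → ℂ := fun z => c * Complex.exp (Complex.log (g z / g x0) / k) with hh
  have hq : AnalyticAt ℂ (fun z => g z / g x0) x0 := hg.div analyticAt_const (by simp [hg0])
  have hha : AnalyticAt ℂ h x0 := by
    apply analyticAt_const.mul
    apply analyticAt_cexp.comp
    apply AnalyticAt.div _ analyticAt_const hkC
    exact (analyticAt_clog (by rw [div_self hg0]; exact Complex.one_mem_slitPlane)).comp hq
  refine ⟨h, hha, ?_, ?_⟩
  · simp only [hh]
    intro hcontra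
    rcases mul_eq_zero.1 hcontra with h1 | h1
    · exact Complex.exp_ne_zero _ h1
    · exact Complex.exp_ne_zero _ h1
  · have hne : ∀ᶠ z in 𝓝 x0, g z ≠ 0 :=
      hg.continuousAt.eventually_ne hg0
    filter_upwards [hne] with z hz
    have : g z / g x0 ≠ 0 := div_ne_zero hz hg0
    rw [hh]
    rw [mul_pow, hck, ← Complex.exp_nat_mul, mul_div_cancel₀ _ hkC, Complex.exp_log this]
    field_simp

/-- Local normal form of a holomorphic map of local index `k`: near `x0` every value
`v ≠ f x0` close to `f x0` is attained exactly `k` times (preimages close to `x0`). -/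
lemma local_structure (f : ℂ → ℂ) (x0 : ℂ) (k : ℕ) (hk : 0 < k)
    (g : ℂ → ℂ) (hg : AnalyticAt ℂ g x0) (hg0 : g x0 ≠ 0)
    (hev : ∀ᶠ z in 𝓝 x0, f z - f x0 = (z - x0) ^ k * g z) :
    ∃ ρ > 0, ∀ δ : ℝ, 0 < δ → δ ≤ ρ → ∃ ε > 0, ∀ v : ℂ, v ≠ f x0 → dist v (f x0) < ε →
      ∃ S : Finset ℂ, S.card = k ∧ (∀ s ∈ S, dist s x0 < δ ∧ f s = v) ∧
        (∀ z : ℂ, dist z x0 < ρ → f z = v → z ∈ S) := by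
  obtain ⟨h, hha, hh0, hroot⟩ := exists_kth_root g x0 k hk hg hg0
  set ψ : ℂ → ℂ := fun z => (z - x0) * h z with hψdef
  have hψa : AnalyticAt ℂ ψ x0 := (analyticAt_id.sub analyticAt_const).mul hha
  obtain ⟨p, hp⟩ := hψa
  have hder : HasDerivAt ψ (h x0) x0 := by
    have h1 : HasDerivAt (fun z : ℂ => z - x0) 1 x0 := (hasDerivAt_id x0).sub_const x0
    have h2 : HasDerivAt h (deriv h x0) x0 := hha.differentiableAt.hasDerivAt
    have h3 := h1.mul h2
    simp only [sub_self, zero_mul, one_mul, add_zero] at h3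
    exact h3
  have hs0 := hp.hasStrictDerivAt
  have heq := hs0.hasDerivAt.unique hder
  rw [heq] at hs0
  set E := hs0.hasStrictFDerivAt_equiv hh0 with hE
  set e := E.toOpenPartialHomeomorph ψ with he
  have hecoe : ∀ z, e z = ψ z := fun z => rfl
  have hsource : x0 ∈ e.source := E.mem_toOpenPartialHomeomorph_source
  have hψ0 : ψ x0 = 0 := by simp [hψdef]
  have htarget : (0 : ℂ) ∈ e.target := by
    have := e.map_source hsource
    rwa [hecoe, hψ0] at this
  have hsymm0 : e.symm 0 = x0 := by
    have := e.left_inv hsource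
    rwa [hecoe, hψ0] at this
  have hev2 : ∀ᶠ z in 𝓝 x0, f z - f x0 = ψ z ^ k := by
    filter_upwards [hev, hroot] with z h1 h2
    rw [h1, ← h2]
    simp only [hψdef]
    rw [mul_pow]
  obtain ⟨ρ1, hρ1, hball⟩ := Metric.eventually_nhds_iff_ball.1 hev2
  obtain ⟨ρ2, hρ2, hball2⟩ := Metric.isOpen_iff.1 e.open_source x0 hsource
  refine ⟨min ρ1 ρ2, by positivity, ?_⟩
  intro δ hδ hδρ
  have hTopen : IsOpen (e.target ∩ e.symm ⁻¹' Metric.ball x0 δ) :=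
    e.isOpen_inter_preimage_symm Metric.isOpen_ball
  have hT0 : (0 : ℂ) ∈ e.target ∩ e.symm ⁻¹' Metric.ball x0 δ :=
    ⟨htarget, by simp [hsymm0, hδ]⟩
  obtain ⟨r, hr, hrball⟩ := Metric.isOpen_iff.1 hTopen 0 hT0
  refine ⟨r ^ k, pow_pos hr k, ?_⟩
  intro v hv hvd
  set w0 := v - f x0 with hw0def
  have hw0 : w0 ≠ 0 := sub_ne_zero.2 hv
  have hw0r : ‖w0‖ < r ^ k := by
    rwa [dist_eq_norm] at hvd
  have hζ := Complex.isPrimitiveRoot_exp k hk.ne'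
  have hcard : Multiset.card (Polynomial.nthRoots k w0) = k := by
    rw [hζ.card_nthRoots]
    exact if_pos ⟨w0 ^ ((k : ℂ))⁻¹, Complex.cpow_nat_inv_pow w0 hk.ne'⟩
  have hnodup := hζ.nthRoots_nodup (a := w0) hw0
  set S' := (Polynomial.nthRoots k w0).toFinset with hS'
  have hS'card : S'.card = k := by
    rw [hS', Multiset.toFinset_card_of_nodup hnodup, hcard]
  have hmem' : ∀ s : ℂ, s ∈ S' ↔ s ^ k = w0 := fun s => by
    simp [hS', Polynomial.mem_nthRoots hk]
  have hsmall : ∀ s : ℂ, s ^ k = w0 → s ∈ Metric.ball (0 : ℂ) r := by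
    intro s hs
    have : ‖s‖ ^ k < r ^ k := by
      rw [← norm_pow, hs]; exact hw0r
    have hlt : ‖s‖ < r := lt_of_pow_lt_pow_left₀ k hr.le this
    simpa [Metric.mem_ball, dist_eq_norm] using hlt
  have hsub : ∀ s : ℂ, s ∈ S' → s ∈ e.target ∩ e.symm ⁻¹' Metric.ball x0 δ := by
    intro s hs
    exact hrball (by simpa using hsmall s ((hmem' s).1 hs))
  refine ⟨S'.image (fun s => e.symm s), ?_, ?_, ?_⟩
  · rw [Finset.card_image_of_injOn, hS'card]
    intro a ha b hb hab
    exact e.symm.injOn (hsub a ha).1 (hsub b hb).1 hab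
  · intro z hz
    obtain ⟨s, hs, rfl⟩ := Finset.mem_image.1 hz
    have hsT := hsub s hs
    have hzball : e.symm s ∈ Metric.ball x0 δ := hsT.2
    constructor
    · exact hzball
    · have h1 : dist (e.symm s) x0 < ρ1 := lt_of_lt_of_le hzball (hδρ.trans (min_le_left _ _))
      have h2 := hball _ (Metric.mem_ball.2 h1)
      have h3 : ψ (e.symm s) = s := by
        have := e.right_inv hsT.1
        rwa [hecoe] at this
      rw [h3, (hmem' s).1 hs, hw0def] at h2
      exact sub_left_inj.1 h2
  · intro z hz hfz
    have h1 : dist z x0 < ρ1 := lt_of_lt_of_le hz (min_le_left _ _)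
    have h2 : dist z x0 < ρ2 := lt_of_lt_of_le hz (min_le_right _ _)
    have hzsrc : z ∈ e.source := hball2 (Metric.mem_ball.2 h2)
    have h3 := hball _ (Metric.mem_ball.2 h1)
    rw [hfz] at h3
    have hroots : ψ z ∈ S' := (hmem' _).2 h3.symm
    refine Finset.mem_image.2 ⟨ψ z, hroots, ?_⟩
    have := e.left_inv hzsrc
    rwa [hecoe] at this

/-- For an entire nonconstant function the vanishing order at any point is a
positive natural number, witnessed by a normal form. -/
lemma vanishing_exists (f : ℂ → ℂ) (hf : Differentiable ℂ f)
    (hnc : ∃ a b : ℂ, f a ≠ f b) (x0 : ℂ) :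
    ∃ k : ℕ, 0 < k ∧ vanishingOrder f x0 = k ∧
      ∃ g : ℂ → ℂ, AnalyticAt ℂ g x0 ∧ g x0 ≠ 0 ∧
        ∀ᶠ z in 𝓝 x0, f z - f x0 = (z - x0) ^ k * g z := by
  have hfd : Differentiable ℂ (fun z => f z - f x0) := hf.sub_const _
  have ha : AnalyticAt ℂ (fun z => f z - f x0) x0 := hfd.analyticAt x0
  have hne : analyticOrderAt (fun z => f z - f x0) x0 ≠ ⊤ := by
    intro htop
    have hz := analyticOrderAt_eq_top.1 htop
    have hAn : AnalyticOnNhd ℂ (fun z => f z - f x0) Set.univ := fun z _ => hfd.analyticAt z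
    have heq := hAn.eqOn_zero_of_preconnected_of_eventuallyEq_zero
      isPreconnected_univ (Set.mem_univ x0) hz
    obtain ⟨a, b, hab⟩ := hnc
    have h1 := heq (Set.mem_univ a)
    have h2 := heq (Set.mem_univ b)
    simp only [Pi.zero_apply, sub_eq_zero] at h1 h2
    exact hab (h1.trans h2.symm)
  obtain ⟨k, hkord⟩ := WithTop.ne_top_iff_exists.1 hne
  obtain ⟨g, hg, hg0, hev⟩ := (ha.analyticOrderAt_eq_natCast (n := k)).1 hkord.symm
  have hk : 0 < k := by
    rcases Nat.eq_zero_or_pos k with rfl | h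
    · exfalso
      have := hev.self_of_nhds
      simp only [pow_zero, one_smul, sub_self] at this
      exact hg0 this.symm
    · exact h
  refine ⟨k, hk, ?_, g, hg, hg0, ?_⟩
  · rw [vanishingOrder, dif_pos ha, ← hkord]; rfl
  · filter_upwards [hev] with z hz
    simpa [smul_eq_mul] using hz

/-- One-sided comparison: a continuous injective semiconjugacy from the restricted
dynamics of `Ft` on `X` to that of `Gt` on `Y` does not decrease the local index. -/
lemma order_le_of_semiconj (Ft Gt : ℂ → ℂ)
    (hFd : Differentiable ℂ Ft) (hFnc : ∃ a b : ℂ, Ft a ≠ Ft b)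
    (hGd : Differentiable ℂ Gt) (hGnc : ∃ a b : ℂ, Gt a ≠ Gt b)
    (X Y : Set ℂ) (hXinv : Ft ⁻¹' X = X)
    (hXperf : ∀ p ∈ X, p ∈ closure (X \ {p}))
    (φ : X → Y) (hφc : Continuous φ) (hφi : Function.Injective φ)
    (hconj : ∀ (x : X) (hx : Ft x.1 ∈ X), Gt (φ x).1 = (φ ⟨Ft x.1, hx⟩).1)
    (x : X) : vanishingOrder Ft x.1 ≤ vanishingOrder Gt (φ x).1 := by
  classical
  obtain ⟨k, hk, hordF, gF, hgF, hgF0, hevF⟩ := vanishing_exists Ft hFd hFnc x.1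
  obtain ⟨l, hl, hordG, gG, hgG, hgG0, hevG⟩ := vanishing_exists Gt hGd hGnc (φ x).1
  rw [hordF, hordG]
  refine Nat.cast_le.2 ?_
  set x0 := x.1 with hx0
  set y0 := (φ x).1 with hy0
  obtain ⟨ρG, hρG, hG⟩ := local_structure Gt y0 l hl gG hgG hgG0 hevG
  obtain ⟨εG, hεG, hSG⟩ := hG ρG hρG le_rfl
  have hφcx : ContinuousAt (fun u : X => (φ u).1) x :=
    (continuous_subtype_val.comp hφc).continuousAt
  obtain ⟨δ1, hδ1, hδ1p⟩ := Metric.continuousAt_iff.1 hφcx ρG hρG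
  obtain ⟨ρF, hρF, hF⟩ := local_structure Ft x0 k hk gF hgF hgF0 hevF
  obtain ⟨εF, hεF, hSF⟩ := hF (min δ1 ρF) (by positivity) (min_le_right _ _)
  have hFx0X : Ft x0 ∈ X := by
    have h9 : x.1 ∈ Ft ⁻¹' X := by rw [hXinv]; exact x.2
    exact h9
  set Fx : X := ⟨Ft x0, hFx0X⟩ with hFx
  have hGy0 : Gt y0 = (φ Fx).1 := hconj x hFx0X
  have hφcF : ContinuousAt (fun u : X => (φ u).1) Fx :=
    (continuous_subtype_val.comp hφc).continuousAt
  obtain ⟨δ2, hδ2, hδ2p⟩ := Metric.continuousAt_iff.1 hφcF εG hεG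
  obtain ⟨v, hvmem, hvdist⟩ :=
    Metric.mem_closure_iff.1 (hXperf (Ft x0) hFx0X) (min εF δ2) (by positivity)
  have hvX : v ∈ X := hvmem.1
  have hvne : v ≠ Ft x0 := fun hcon => hvmem.2 (by simp [hcon])
  rw [dist_comm] at hvdist
  obtain ⟨SF, hSFcard, hSFmem, -⟩ :=
    hSF v hvne (lt_of_lt_of_le hvdist (min_le_left _ _))
  have hsX : ∀ s ∈ SF, s ∈ X := by
    intro s hs
    have h1 : Ft s = v := (hSFmem s hs).2
    have : s ∈ Ft ⁻¹' X := by
      simp only [Set.mem_preimage, h1]; exact hvX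
    rwa [hXinv] at this
  set vX : X := ⟨v, hvX⟩ with hvXdef
  set w := (φ vX).1 with hw
  have hGw : ∀ s (hs : s ∈ SF), Gt (φ ⟨s, hsX s hs⟩).1 = w := by
    intro s hs
    have hFtsX : Ft s ∈ X := by rw [(hSFmem s hs).2]; exact hvX
    rw [hconj ⟨s, hsX s hs⟩ hFtsX]
    have heq : (⟨Ft s, hFtsX⟩ : X) = vX := Subtype.ext (hSFmem s hs).2
    rw [heq]
  have hwne : w ≠ Gt y0 := by
    rw [hGy0]
    intro hcon
    have h2 : vX = Fx := hφi (Subtype.ext hcon)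
    exact hvne (congrArg Subtype.val h2)
  have hwdist : dist w (Gt y0) < εG := by
    rw [hGy0]
    apply hδ2p (x := vX)
    rw [Subtype.dist_eq]
    exact lt_of_lt_of_le hvdist (min_le_right _ _)
  obtain ⟨SG, hSGcard, -, hSGall⟩ := hSG w hwne hwdist
  have himg : ∀ s (hs : s ∈ SF), (φ ⟨s, hsX s hs⟩).1 ∈ SG := by
    intro s hs
    apply hSGall
    · apply hδ1p (x := ⟨s, hsX s hs⟩)
      rw [Subtype.dist_eq]
      exact lt_of_lt_of_le (hSFmem s hs).1 (min_le_left _ _)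
    · exact hGw s hs
  set T := SF.attach.image (fun s : {a // a ∈ SF} => (φ ⟨s.1, hsX s.1 s.2⟩).1) with hT
  have hTsub : T ⊆ SG := by
    intro t ht
    obtain ⟨s, -, rfl⟩ := Finset.mem_image.1 ht
    exact himg s.1 s.2
  have hTcard : T.card = k := by
    rw [hT, Finset.card_image_of_injOn, Finset.card_attach, hSFcard]
    intro s _ t _ hst
    have h1 : φ ⟨s.1, hsX s.1 s.2⟩ = φ ⟨t.1, hsX t.1 t.2⟩ := Subtype.ext hst
    have h2 := hφi h1
    have h3 : (s : ℂ) = (t : ℂ) := Subtype.mk_eq_mk.mp h2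
    exact Subtype.ext h3
  calc k = T.card := hTcard.symm
    _ ≤ SG.card := Finset.card_le_card hTsub
    _ = l := hSGcard

/-- **Conjugacy invariance of the index (Corollary 7.3 of the paper).** Let `F̃`, `G̃` be
entire nonconstant functions, `X` a totally invariant (`F̃⁻¹(X) = X`) closed set with no
isolated points, and `Y` likewise for `G̃`.  If `φ : X ≃ₜ Y` satisfies
`G̃(φ(x)) = φ(F̃(x))` for all `x ∈ X`, then `ind_{G̃}(φ(x)) = ind_{F̃}(x)` for all
`x ∈ X`; i.e. a topological conjugacy preserves the order of vanishing. -/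
theorem conjugacy_preserves_vanishingOrder (Ft Gt : ℂ → ℂ)
    (hFd : Differentiable ℂ Ft) (hFnc : ∃ a b : ℂ, Ft a ≠ Ft b)
    (hGd : Differentiable ℂ Gt) (hGnc : ∃ a b : ℂ, Gt a ≠ Gt b)
    (X : Set ℂ) (hX : IsClosed X) (hXinv : Ft ⁻¹' X = X)
    (hXperf : ∀ p ∈ X, p ∈ closure (X \ {p}))
    (Y : Set ℂ) (hY : IsClosed Y) (hYinv : Gt ⁻¹' Y = Y)
    (hYperf : ∀ p ∈ Y, p ∈ closure (Y \ {p}))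
    (φ : X ≃ₜ Y)
    (hconj : ∀ x x' : X, (x' : ℂ) = Ft x.1 → Gt (φ x).1 = (φ x').1) :
    ∀ x : X, vanishingOrder Gt (φ x).1 = vanishingOrder Ft x.1 := by
  intro x
  have hconjF : ∀ (u : X) (hu : Ft u.1 ∈ X), Gt (φ u).1 = (φ ⟨Ft u.1, hu⟩).1 :=
    fun u hu => hconj u ⟨Ft u.1, hu⟩ rfl
  have hconjG : ∀ (y : Y) (hy : Gt y.1 ∈ Y), Ft (φ.symm y).1 = (φ.symm ⟨Gt y.1, hy⟩).1 := by
    intro y hy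
    have hx : Ft (φ.symm y).1 ∈ X := by
      have h9 : (φ.symm y).1 ∈ Ft ⁻¹' X := by rw [hXinv]; exact (φ.symm y).2
      exact h9
    have h1 := hconjF (φ.symm y) hx
    rw [Homeomorph.apply_symm_apply] at h1
    have h2 : (⟨Gt y.1, hy⟩ : Y) = φ ⟨Ft (φ.symm y).1, hx⟩ := Subtype.ext h1
    rw [h2, Homeomorph.symm_apply_apply]
  refine le_antisymm ?_ ?_
  · have h := order_le_of_semiconj Gt Ft hGd hGnc hFd hFnc Y X hYinv hYperf
      (fun y => φ.symm y) φ.symm.continuous φ.symm.injective hconjG (φ x)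
    rwa [Homeomorph.symm_apply_apply] at h
  · exact order_le_of_semiconj Ft Gt hFd hFnc hGd hGnc X Y hXinv hXperf
      (fun u => φ u) φ.continuous φ.injective hconjF x
end

section
/- Let X be a set and σ : X → X a map such that every point of X is eventually periodic: for each x ∈ X there exist k ≥ 0 and n ≥ 1 with σ^{k+n}(x) = σ^{k}(x). Let η : ℤ[X] → ℤ[X] be the group homomorphism determined by η(δ_x) = δ_x − δ_{σ(x)}. Then the kernel of η is the free abelian group generated by the elements e_P := ∑_{x∈P} δ_x, where P ranges over the cycles of σ: the family {e_P : P a cycle of σ} is ℤ-linearly independent and its ℤ-span equals ker η. -/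
/-- `P` is a cycle (periodic orbit) of `σ`: the forward orbit of a periodic point. -/
def IsCycle {X : Type*} (σ : X → X) (P : Finset X) : Prop :=
  ∃ p ∈ P, (∃ n : ℕ, 0 < n ∧ σ^[n] p = p) ∧ ∀ x : X, x ∈ P ↔ ∃ k : ℕ, σ^[k] p = x

section Aux

variable {X : Type*} {σ : X → X}

/-- The set of periodic points. -/
private def Per (σ : X → X) : Set X := {x | ∃ n : ℕ, 0 < n ∧ σ^[n] x = x}

private lemma per_iterate {x : X} {n : ℕ} (h : σ^[n] x = x) (k : ℕ) : σ^[n * k] x = x := by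
  rw [Function.iterate_mul]
  exact Function.iterate_fixed h k

private lemma injOn_per : Set.InjOn σ (Per σ) := by
  rintro x ⟨n, hn, hnx⟩ y ⟨m, hm, hmy⟩ hxy
  have hx : σ^[n * m] x = x := per_iterate hnx m
  have hy : σ^[n * m] y = y := by rw [mul_comm]; exact per_iterate hmy n
  obtain ⟨m', hm'⟩ : ∃ m', n * m = m' + 1 := ⟨n * m - 1, by
    have : 1 ≤ n * m := Nat.one_le_iff_ne_zero.2 (by positivity); omega⟩
  rw [hm'] at hx hy
  calc x = σ^[m' + 1] x := hx.symm
    _ = σ^[m'] (σ x) := Function.iterate_succ_apply σ m' x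
    _ = σ^[m'] (σ y) := by rw [hxy]
    _ = σ^[m' + 1] y := (Function.iterate_succ_apply σ m' y).symm
    _ = y := hy

private lemma per_apply {x : X} (hx : x ∈ Per σ) : σ x ∈ Per σ := by
  obtain ⟨n, hn, hnx⟩ := hx
  exact ⟨n, hn, by rw [← Function.iterate_succ_apply, Function.iterate_succ_apply', hnx]⟩

private lemma per_iterate_mem {x : X} (hx : x ∈ Per σ) (k : ℕ) : σ^[k] x ∈ Per σ := by
  induction k with
  | zero => exact hx
  | succ k ih => rw [Function.iterate_succ_apply']; exact per_apply ih

/-- The orbit of a periodic point is a cycle containing it. -/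
private lemma exists_cycle {x : X} (hx : x ∈ Per σ) :
    ∃ P : Finset X, IsCycle σ P ∧ x ∈ P ∧ ∀ y ∈ P, ∃ k : ℕ, σ^[k] x = y := by
  classical
  obtain ⟨n, hn, hnx⟩ := hx
  refine ⟨(Finset.range n).image (fun k => σ^[k] x), ?_, ?_, ?_⟩
  · refine ⟨x, ?_, ⟨n, hn, hnx⟩, ?_⟩
    · exact Finset.mem_image.2 ⟨0, Finset.mem_range.2 hn, rfl⟩
    · intro y
      constructor
      · rintro hy
        obtain ⟨k, _, rfl⟩ := Finset.mem_image.1 hy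
        exact ⟨k, rfl⟩
      · rintro ⟨k, rfl⟩
        refine Finset.mem_image.2 ⟨k % n, Finset.mem_range.2 (Nat.mod_lt _ hn), ?_⟩
        conv_rhs => rw [← Nat.mod_add_div k n]
        rw [Function.iterate_add_apply, per_iterate hnx]
  · exact Finset.mem_image.2 ⟨0, Finset.mem_range.2 hn, rfl⟩
  · intro y hy
    obtain ⟨k, _, rfl⟩ := Finset.mem_image.1 hy
    exact ⟨k, rfl⟩

private lemma cycle_subset_per {P : Finset X} (hP : IsCycle σ P) : (P : Set X) ⊆ Per σ := by
  obtain ⟨p, hpP, ⟨n, hn, hnp⟩, hmem⟩ := hP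
  intro x hx
  obtain ⟨k, rfl⟩ := (hmem x).1 hx
  exact per_iterate_mem ⟨n, hn, hnp⟩ k

private lemma cycle_mem_apply {P : Finset X} (hP : IsCycle σ P) {x : X} (hx : x ∈ P) :
    σ x ∈ P := by
  obtain ⟨p, hpP, hper, hmem⟩ := hP
  obtain ⟨k, rfl⟩ := (hmem x).1 hx
  exact (hmem _).2 ⟨k + 1, Function.iterate_succ_apply' σ k p⟩

private lemma cycle_image (P : Finset X) (hP : IsCycle σ P) [DecidableEq X] :
    P.image σ = P := by
  apply Finset.Subset.antisymm
  · intro y hy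
    obtain ⟨x, hx, rfl⟩ := Finset.mem_image.1 hy
    exact cycle_mem_apply hP hx
  · obtain ⟨p, hpP, ⟨n, hn, hnp⟩, hmem⟩ := hP
    intro y hy
    obtain ⟨k, rfl⟩ := (hmem y).1 hy
    obtain ⟨t, ht⟩ : ∃ t, k + n = t + 1 := ⟨k + n - 1, by omega⟩
    have h1 : σ (σ^[t] p) = σ^[k] p := by
      rw [← Function.iterate_succ_apply' σ t p, show t.succ = k + n by omega,
        Function.iterate_add_apply, hnp]
    rw [← h1]
    exact Finset.mem_image.2 ⟨σ^[t] p, (hmem _).2 ⟨t, rfl⟩, rfl⟩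

private lemma cycle_eq_of_mem {P Q : Finset X} (hP : IsCycle σ P) (hQ : IsCycle σ Q)
    {x : X} (hxP : x ∈ P) (hxQ : x ∈ Q) : P = Q := by
  have key : ∀ (R : Finset X), IsCycle σ R → x ∈ R → ∀ y, (y ∈ R ↔ ∃ k : ℕ, σ^[k] x = y) := by
    intro R hR hxR y
    obtain ⟨p, hpR, ⟨n, hn, hnp⟩, hmem⟩ := hR
    obtain ⟨j, rfl⟩ := (hmem x).1 hxR
    constructor
    · intro hy
      obtain ⟨l, rfl⟩ := (hmem y).1 hy
      -- σ^[t] (σ^[j] p) = p for t = n*(j+1) - j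
      refine ⟨l + (n * (j + 1) - j), ?_⟩
      rw [← Function.iterate_add_apply]
      have hj1 : j + 1 ≤ n * (j + 1) := Nat.le_mul_of_pos_left _ hn
      have e : l + (n * (j + 1) - j) + j = l + n * (j + 1) := by omega
      rw [e, Function.iterate_add_apply σ l, per_iterate hnp]
    · rintro ⟨k, rfl⟩
      rw [← Function.iterate_add_apply]
      exact (hmem _).2 ⟨k + j, rfl⟩
  ext y
  rw [key P hP hxP y, key Q hQ hxQ y]

private lemma eP_apply (P : Finset X) (y : X) [Decidable (y ∈ P)] :
    (∑ x ∈ P, Finsupp.single x (1 : ℤ)) y = if y ∈ P then 1 else 0 := by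
  classical
  rw [Finset.sum_apply']
  simp only [Finsupp.single_apply]
  rw [Finset.sum_ite_eq' P y (fun _ => (1 : ℤ))]
  congr 1

private lemma eP_apply_mem {P : Finset X} {y : X} (hy : y ∈ P) :
    (∑ x ∈ P, Finsupp.single x (1 : ℤ)) y = 1 := by
  classical rw [eP_apply, if_pos hy]

private lemma eP_apply_not_mem {P : Finset X} {y : X} (hy : y ∉ P) :
    (∑ x ∈ P, Finsupp.single x (1 : ℤ)) y = 0 := by
  classical rw [eP_apply, if_neg hy]

private lemma mapDomain_eP {P : Finset X} (hP : IsCycle σ P) :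
    Finsupp.mapDomain σ (∑ x ∈ P, Finsupp.single x (1 : ℤ)) =
      ∑ x ∈ P, Finsupp.single x (1 : ℤ) := by
  classical
  have hinj : ∀ x ∈ P, ∀ y ∈ P, σ x = σ y → x = y := fun x hx y hy h =>
    injOn_per (cycle_subset_per hP hx) (cycle_subset_per hP hy) h
  rw [Finsupp.mapDomain_finset_sum]
  simp only [Finsupp.mapDomain_single]
  calc ∑ x ∈ P, Finsupp.single (σ x) (1 : ℤ)
      = ∑ y ∈ P.image σ, Finsupp.single y (1 : ℤ) := by
        rw [Finset.sum_image hinj]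
    _ = ∑ y ∈ P, Finsupp.single y (1 : ℤ) := by rw [cycle_image P hP]

/-- iterated fixedness under mapDomain -/
private lemma mapDomain_iterate {f : X →₀ ℤ} (hf : Finsupp.mapDomain σ f = f) (m : ℕ) :
    Finsupp.mapDomain (σ^[m]) f = f := by
  induction m with
  | zero => simp [Finsupp.mapDomain_id]
  | succ m ih =>
      rw [Function.iterate_succ']
      rw [Finsupp.mapDomain_comp, ih, hf]

private lemma support_subset_per (hep : ∀ x : X, ∃ k n : ℕ, 0 < n ∧ σ^[k + n] x = σ^[k] x)
    {f : X →₀ ℤ} (hf : Finsupp.mapDomain σ f = f) : (f.support : Set X) ⊆ Per σ := by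
  classical
  choose k n hn hkn using hep
  set M := f.support.sup k with hM
  intro z hz
  have hz' : z ∈ f.support := hz
  rw [← mapDomain_iterate hf M] at hz'
  obtain ⟨y, hy, rfl⟩ := Finset.mem_image.1 (Finsupp.mapDomain_support hz')
  have hky : k y ≤ M := Finset.le_sup hy
  refine ⟨n y, hn y, ?_⟩
  have e1 : n y + M = (M - k y) + (k y + n y) := by omega
  calc σ^[n y] (σ^[M] y) = σ^[n y + M] y := (Function.iterate_add_apply σ (n y) M y).symm
    _ = σ^[M - k y] (σ^[k y + n y] y) := by rw [e1, Function.iterate_add_apply]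
    _ = σ^[M - k y] (σ^[k y] y) := by rw [hkn y]
    _ = σ^[M] y := by rw [← Function.iterate_add_apply]; congr 1; omega

private lemma const_on_orbit (hep : ∀ x : X, ∃ k n : ℕ, 0 < n ∧ σ^[k + n] x = σ^[k] x)
    {f : X →₀ ℤ} (hf : Finsupp.mapDomain σ f = f) {z : X} (hz : z ∈ Per σ) (j : ℕ) :
    f (σ^[j] z) = f z := by
  have hstep : ∀ w ∈ Per σ, f (σ w) = f w := by
    intro w hw
    conv_lhs => rw [← hf]
    exact Finsupp.mapDomain_apply' (Per σ) f (support_subset_per hep hf) injOn_per hw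
  induction j with
  | zero => rfl
  | succ j ih =>
      rw [Function.iterate_succ_apply', hstep _ (per_iterate_mem hz j), ih]

private lemma mem_span_of_fixed (hep : ∀ x : X, ∃ k n : ℕ, 0 < n ∧ σ^[k + n] x = σ^[k] x) :
    ∀ (N : ℕ) (f : X →₀ ℤ), f.support.card ≤ N → Finsupp.mapDomain σ f = f →
      f ∈ Submodule.span ℤ (Set.range fun P : {P : Finset X // IsCycle σ P} =>
        ∑ x ∈ P.1, Finsupp.single x (1 : ℤ)) := by
  classical
  intro N
  induction N with
  | zero =>
      intro f hcard _
      have : f = 0 := by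
        rw [← Finsupp.support_eq_empty, ← Finset.card_eq_zero]; omega
      rw [this]; exact Submodule.zero_mem _
  | succ N ih =>
      intro f hcard hf
      by_cases h0 : f = 0
      · rw [h0]; exact Submodule.zero_mem _
      obtain ⟨x, hx⟩ := Finsupp.support_nonempty_iff.2 h0
      have hxper : x ∈ Per σ := support_subset_per hep hf hx
      obtain ⟨P, hcyc, hxP, horb⟩ := exists_cycle hxper
      set eP : X →₀ ℤ := ∑ y ∈ P, Finsupp.single y (1 : ℤ) with heP
      have hconst : ∀ y ∈ P, f y = f x := by
        intro y hy
        obtain ⟨j, rfl⟩ := horb y hy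
        exact const_on_orbit hep hf hxper j
      set g : X →₀ ℤ := f - f x • eP with hg
      have hgfix : Finsupp.mapDomain σ g = g := by
        have : ∀ v : X →₀ ℤ, Finsupp.mapDomain σ v = Finsupp.lmapDomain ℤ ℤ σ v :=
          fun v => rfl
        rw [hg, this, map_sub, map_smul, ← this, ← this, hf, mapDomain_eP hcyc]
      have hgsupp : g.support ⊆ f.support.erase x := by
        intro y hy
        have hy' : g y ≠ 0 := Finsupp.mem_support_iff.1 hy
        by_cases hyP : y ∈ P
        · exfalso
          apply hy'
          rw [hg]
          simp only [Finsupp.sub_apply, Finsupp.smul_apply, heP]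
          rw [eP_apply_mem hyP, hconst y hyP]
          simp
        · refine Finset.mem_erase.2 ⟨fun h => hyP (by rw [h]; exact hxP), ?_⟩
          rw [Finsupp.mem_support_iff]
          intro hfy
          apply hy'
          rw [hg]
          simp only [Finsupp.sub_apply, Finsupp.smul_apply, heP]
          rw [eP_apply_not_mem hyP, hfy]
          simp
      have hgcard : g.support.card ≤ N := by
        have h1 := Finset.card_le_card hgsupp
        have h2 := Finset.card_erase_of_mem hx
        have h3 : 1 ≤ f.support.card := Finset.card_pos.2 ⟨x, hx⟩
        omega
      have hgmem := ih g hgcard hgfix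
      have hePmem : eP ∈ Submodule.span ℤ (Set.range fun P : {P : Finset X // IsCycle σ P} =>
          ∑ x ∈ P.1, Finsupp.single x (1 : ℤ)) :=
        Submodule.subset_span ⟨⟨P, hcyc⟩, rfl⟩
      have : f = g + f x • eP := by rw [hg]; abel
      rw [this]
      exact Submodule.add_mem _ hgmem (Submodule.smul_mem _ _ hePmem)

end Aux

/-- **Kernel computation (cf. Corollary 8.4 of the paper).** Let `σ : X → X` be a map
all of whose points are eventually periodic, and let `η : ℤ[X] → ℤ[X]` be the
(ℤ-linear) homomorphism determined by `η(δ_x) = δ_x − δ_{σ(x)}`.  Then the elements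
`e_P = ∑_{x ∈ P} δ_x`, for `P` a cycle of `σ`, are ℤ-linearly independent and their
ℤ-span is exactly `ker η`. -/
theorem ker_eta_eq_span_cycles {X : Type*} (σ : X → X)
    (hep : ∀ x : X, ∃ k n : ℕ, 0 < n ∧ σ^[k + n] x = σ^[k] x)
    (η : (X →₀ ℤ) →ₗ[ℤ] (X →₀ ℤ))
    (hη : ∀ x : X, η (Finsupp.single x 1) =
      Finsupp.single x 1 - Finsupp.single (σ x) 1) :
    LinearIndependent ℤ (fun P : {P : Finset X // IsCycle σ P} =>
      ∑ x ∈ P.1, Finsupp.single x (1 : ℤ)) ∧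
    LinearMap.ker η = Submodule.span ℤ
      (Set.range fun P : {P : Finset X // IsCycle σ P} =>
        ∑ x ∈ P.1, Finsupp.single x (1 : ℤ)) := by
  -- η = id - lmapDomain
  have hηeq : η = LinearMap.id - Finsupp.lmapDomain ℤ ℤ σ := by
    apply Finsupp.lhom_ext
    intro a b
    have hb : Finsupp.single a b = b • Finsupp.single a (1 : ℤ) := by
      rw [Finsupp.smul_single, smul_eq_mul, mul_one]
    rw [hb, map_smul, map_smul, hη a]
    simp [Finsupp.mapDomain_single, Finsupp.smul_single, smul_sub]
  have hker : ∀ f : X →₀ ℤ, f ∈ LinearMap.ker η ↔ Finsupp.mapDomain σ f = f := by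
    intro f
    rw [LinearMap.mem_ker, hηeq]
    simp only [LinearMap.sub_apply, LinearMap.id_apply, Finsupp.lmapDomain_apply]
    rw [sub_eq_zero, eq_comm]
  constructor
  · -- linear independence
    rw [linearIndependent_iff']
    intro s c hsum i hi
    obtain ⟨p, hpP, hper, hmem⟩ := i.2
    have := DFunLike.congr_fun hsum p
    rw [Finset.sum_apply'] at this
    simp only [Finsupp.smul_apply] at this
    rw [Finsupp.coe_zero, Pi.zero_apply] at this
    rw [← this]
    rw [Finset.sum_eq_single i]
    · rw [eP_apply_mem hpP, smul_eq_mul, mul_one]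
    · intro j hj hji
      have hpj : p ∉ j.1 := fun hpj =>
        hji (Subtype.ext (cycle_eq_of_mem j.2 i.2 hpj hpP))
      rw [eP_apply_not_mem hpj, smul_zero]
    · intro h; exact absurd hi h
  · -- kernel = span
    apply le_antisymm
    · intro f hf
      exact mem_span_of_fixed hep f.support.card f le_rfl ((hker f).1 hf)
    · rw [Submodule.span_le]
      rintro _ ⟨⟨P, hP⟩, rfl⟩
      exact (hker _).2 (mapDomain_eP hP)
end
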